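/- arXiv:2406.19339 — 8 statements merged into one kernel-verified Lean document; each statement's English description precedes it below -/
import Mathlib

section
/- Let Ĩ = [a,b] ⊂ ℝ be a compact interval with a < b, let W ⊆ ℝ^m be a measurable set, and let g̃ : Ĩ × W → ℝ be bounded and uniformly continuous. Let h : W → ℝ be Lebesgue integrable, i.e. ∫_W |h(ω)| dω < ∞, and define f : Ĩ → ℝ by f(x) = ∫_W h(ω) g̃(x, ω) dω. Let D̃ = { g̃(·, ω) : ω ∈ W } ⊆ C(Ĩ). Then f is continuous and f ∈ M·B₁(D̃), where M = 2 ∫_W |h(ω)| dω; in particular ‖f‖_{𝓛₁(D̃)} ≤ 2 ∫_W |h(ω)| dω. -/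
open Pointwise MeasureTheory

/-- The closed symmetric convex hull `B₁(D)` of a set `D` in a real normed space. -/
noncomputable def symmConvexHull {X : Type*} [NormedAddCommGroup X] [NormedSpace ℝ X]
    (D : Set X) : Set X :=
  closure { f : X | ∃ (m : ℕ) (c : Fin m → ℝ) (g : Fin m → X),
    (∀ j, g j ∈ D) ∧ (∑ j, |c j|) ≤ 1 ∧ f = ∑ j, c j • g j }

lemma symmConvexHull_zero_mem {X : Type*} [NormedAddCommGroup X] [NormedSpace ℝ X]
    (D : Set X) : (0 : X) ∈ symmConvexHull D :=
  subset_closure ⟨0, ![], ![], fun j => j.elim0, by simp, by simp⟩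

lemma symmConvexHull_smul_mem {X : Type*} [NormedAddCommGroup X] [NormedSpace ℝ X]
    (D : Set X) {c : ℝ} (hc : |c| ≤ 1) {g : X} (hg : g ∈ D) :
    c • g ∈ symmConvexHull D :=
  subset_closure ⟨1, fun _ => c, fun _ => g, fun _ => hg, by simpa, by simp⟩

lemma symmConvexHull_convex {X : Type*} [NormedAddCommGroup X] [NormedSpace ℝ X]
    (D : Set X) : Convex ℝ (symmConvexHull D) := by
  apply Convex.closure
  rintro x ⟨m₁, c₁, g₁, hg₁, hc₁, rfl⟩ y ⟨m₂, c₂, g₂, hg₂, hc₂, rfl⟩ s t hs ht hst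
  refine ⟨m₁ + m₂, Fin.append (fun j => s * c₁ j) (fun j => t * c₂ j),
    Fin.append g₁ g₂, fun j => ?_, ?_, ?_⟩
  · refine Fin.addCases (fun i => ?_) (fun i => ?_) j
    · simpa using hg₁ i
    · simpa using hg₂ i
  · rw [Fin.sum_univ_add]
    simp only [Fin.append_left, Fin.append_right, abs_mul, abs_of_nonneg hs,
      abs_of_nonneg ht, ← Finset.mul_sum]
    calc s * ∑ j, |c₁ j| + t * ∑ j, |c₂ j| ≤ s * 1 + t * 1 := by
          gcongr
      _ = 1 := by linarith
  · rw [Fin.sum_univ_add]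
    simp only [Fin.append_left, Fin.append_right, Finset.smul_sum, smul_smul]

lemma real_sign_abs_le (x : ℝ) : |Real.sign x| ≤ 1 := by
  rcases lt_trichotomy x 0 with hx | hx | hx
  · rw [Real.sign_of_neg hx]; norm_num
  · rw [hx, Real.sign_zero]; norm_num
  · rw [Real.sign_of_pos hx]; norm_num

lemma real_sign_mul_abs (x : ℝ) : Real.sign x * |x| = x := by
  rcases lt_trichotomy x 0 with hx | hx | hx
  · rw [Real.sign_of_neg hx, abs_of_neg hx]; ring
  · simp [hx]
  · rw [Real.sign_of_pos hx, abs_of_pos hx]; ring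

lemma real_measurable_sign : Measurable Real.sign := by
  unfold Real.sign
  exact Measurable.ite (measurableSet_lt measurable_id measurable_const) measurable_const
    (Measurable.ite (measurableSet_lt measurable_const measurable_id) measurable_const
      measurable_const)

set_option maxHeartbeats 2000000 in
theorem stmt1 {m : ℕ} (a b : ℝ) (hab : a < b)
    (W : Set (Fin m → ℝ)) (hW : MeasurableSet W)
    (G : (Fin m → ℝ) → C(Set.Icc a b, ℝ))
    (hGuc : UniformContinuousOn
      (fun p : (Set.Icc a b) × (Fin m → ℝ) => G p.2 p.1) (Set.univ ×ˢ W))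
    (hGbdd : ∃ C : ℝ, ∀ ω ∈ W, ∀ x : Set.Icc a b, |G ω x| ≤ C)
    (h : (Fin m → ℝ) → ℝ) (hh : IntegrableOn h W) :
    Continuous (fun x : Set.Icc a b => ∫ ω in W, h ω * G ω x) ∧
    ∃ F : C(Set.Icc a b, ℝ),
      (∀ x : Set.Icc a b, F x = ∫ ω in W, h ω * G ω x) ∧
      F ∈ (2 * ∫ ω in W, |h ω|) • symmConvexHull (G '' W) := by
  obtain ⟨C, hC⟩ := hGbdd
  set ν : Measure (Fin m → ℝ) := MeasureTheory.volume.restrict W with hν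
  have x₀ : Set.Icc a b := ⟨a, by simp [hab.le]⟩
  -- norm bound for G on W
  have hGnorm : ∀ ω ∈ W, ‖G ω‖ ≤ C := by
    intro ω hω
    have h0 : (0:ℝ) ≤ C := (abs_nonneg _).trans (hC ω hω x₀)
    exact (ContinuousMap.norm_le _ h0).2 fun x => by
      simpa [Real.norm_eq_abs] using hC ω hω x
  -- continuity of G on W
  have hGcont : ContinuousOn G W := by
    intro ω hω
    rw [Metric.continuousWithinAt_iff]
    intro ε hε
    obtain ⟨δ, hδ, hδ'⟩ := (Metric.uniformContinuousOn_iff).1 hGuc (ε/2) (by positivity)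
    refine ⟨δ, hδ, fun {ω'} hω' hd => ?_⟩
    have key : dist (G ω') (G ω) ≤ ε/2 := by
      refine ContinuousMap.dist_le (by positivity) |>.2 fun x => ?_
      have := hδ' (x, ω') ⟨Set.mem_univ _, hω'⟩ (x, ω) ⟨Set.mem_univ _, hω⟩ ?_
      · exact this.le
      · simp only [Prod.dist_eq, dist_self, max_lt_iff]
        exact ⟨hδ, hd⟩
    linarith
  have hGm : AEStronglyMeasurable G ν := hGcont.aestronglyMeasurable hW
  -- integrability of h • G
  have hint : Integrable (fun ω => h ω • G ω) ν := by
    refine Integrable.mono' (hh.norm.const_mul C) (hh.aestronglyMeasurable.smul hGm) ?_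
    filter_upwards [ae_restrict_mem hW] with ω hω
    show ‖h ω • G ω‖ ≤ C * ‖h ω‖
    have hCnn : (0:ℝ) ≤ C := (norm_nonneg (G ω)).trans (hGnorm ω hω)
    refine (ContinuousMap.norm_le _ (by positivity)).2 fun x => ?_
    rw [ContinuousMap.smul_apply, smul_eq_mul, norm_mul]
    calc ‖h ω‖ * ‖G ω x‖ ≤ ‖h ω‖ * C :=
          mul_le_mul_of_nonneg_left (by simpa [Real.norm_eq_abs] using hC ω hω x)
            (norm_nonneg _)
      _ = C * ‖h ω‖ := mul_comm _ _
  set F : C(Set.Icc a b, ℝ) := ∫ ω, h ω • G ω ∂ν with hF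
  have hFx : ∀ x : Set.Icc a b, F x = ∫ ω in W, h ω * G ω x := by
    intro x
    calc F x = (ContinuousMap.evalCLM ℝ x) (∫ ω, h ω • G ω ∂ν) := rfl
      _ = ∫ ω, (ContinuousMap.evalCLM ℝ x) (h ω • G ω) ∂ν :=
          ((ContinuousMap.evalCLM ℝ x).integral_comp_comm hint).symm
      _ = ∫ ω in W, h ω * G ω x := by
          refine integral_congr_ae (Filter.Eventually.of_forall fun ω => ?_)
          show h ω • (G ω x) = h ω * G ω x
          rfl
  have hcont : Continuous (fun x : Set.Icc a b => ∫ ω in W, h ω * G ω x) := by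
    have : (fun x : Set.Icc a b => ∫ ω in W, h ω * G ω x) = fun x => F x := by
      funext x; exact (hFx x).symm
    rw [this]; exact F.continuous
  refine ⟨hcont, F, hFx, ?_⟩
  set S := symmConvexHull (G '' W) with hS
  have hS0 : (0 : C(Set.Icc a b, ℝ)) ∈ S := symmConvexHull_zero_mem _
  have hSconv : Convex ℝ S := symmConvexHull_convex _
  have hScl : IsClosed S := isClosed_closure
  set I := ∫ ω in W, |h ω| with hI
  have hInn : 0 ≤ I := integral_nonneg fun ω => abs_nonneg _
  have hhabs : Integrable (fun ω => |h ω|) ν := by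
    simpa [Real.norm_eq_abs] using hh.norm
  rcases eq_or_lt_of_le hInn with hI0 | hIpos
  · -- I = 0 : F = 0
    have hae : (fun ω => |h ω|) =ᵐ[ν] 0 :=
      (integral_eq_zero_iff_of_nonneg (fun ω => abs_nonneg _) hhabs).1 hI0.symm
    have hF0 : F = 0 := by
      rw [hF, ← integral_zero (Fin m → ℝ) C(Set.Icc a b, ℝ) (μ := ν)]
      refine integral_congr_ae ?_
      filter_upwards [hae] with ω hω
      have : h ω = 0 := by
        have := abs_eq_zero.1 hω
        exact this
      simp [this]
    rw [hF0, ← hI0]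
    norm_num
    exact ⟨0, hS0, smul_zero _⟩
  · -- I > 0
    have hIne : I ≠ 0 := hIpos.ne'
    set d : (Fin m → ℝ) → NNReal := fun ω => Real.toNNReal (|h ω| / I) with hd
    have hdm : AEMeasurable d ν := by
      exact ((continuous_abs.measurable.comp_aemeasurable hh.aemeasurable).div_const I).real_toNNReal
    set μ : Measure (Fin m → ℝ) := ν.withDensity (fun ω => d ω) with hμ
    have hac : μ ≪ ν := withDensity_absolutelyContinuous _ _
    haveI hprob : IsProbabilityMeasure μ := by
      constructor
      rw [hμ, withDensity_apply _ MeasurableSet.univ, Measure.restrict_univ]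
      have hcoe : ∀ ω, (d ω : ENNReal) = ENNReal.ofReal (|h ω| / I) := fun ω => rfl
      simp_rw [hcoe]
      rw [← ofReal_integral_eq_lintegral_ofReal (hhabs.div_const I)
        (Filter.Eventually.of_forall fun ω => by positivity)]
      rw [integral_div, ← hI, div_self hIne, ENNReal.ofReal_one]
    set v : (Fin m → ℝ) → C(Set.Icc a b, ℝ) := fun ω => Real.sign (h ω) • G ω with hv
    have hvm : AEStronglyMeasurable v μ := by
      refine AEStronglyMeasurable.mono_ac hac ?_
      exact ((real_measurable_sign.comp_aemeasurable hh.aemeasurable).aestronglyMeasurable).smul hGm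
    have haeW : ∀ᵐ ω ∂μ, ω ∈ W := hac.ae_le (ae_restrict_mem hW)
    have hvmem : ∀ᵐ ω ∂μ, v ω ∈ S :=
      haeW.mono fun ω hω =>
        symmConvexHull_smul_mem _ (real_sign_abs_le _) ⟨ω, hω, rfl⟩
    have hvi : Integrable v μ := by
      refine Integrable.mono' (integrable_const C) hvm ?_
      filter_upwards [haeW] with ω hω
      show ‖Real.sign (h ω) • G ω‖ ≤ C
      calc ‖Real.sign (h ω) • G ω‖ ≤ ‖Real.sign (h ω)‖ * ‖G ω‖ :=
            norm_smul_le (Real.sign (h ω)) (G ω)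
        _ ≤ 1 * ‖G ω‖ := by
            gcongr; rw [Real.norm_eq_abs]; exact real_sign_abs_le _
        _ = ‖G ω‖ := one_mul _
        _ ≤ C := hGnorm ω hω
    have hmem : (∫ ω, v ω ∂μ) ∈ S := hSconv.integral_mem hScl hvmem hvi
    have hFeq : F = I • ∫ ω, v ω ∂μ := by
      rw [hμ, integral_withDensity_eq_integral_smul₀ hdm v, ← integral_smul, hF]
      refine integral_congr_ae (Filter.Eventually.of_forall fun ω => ?_)
      show h ω • G ω = I • (d ω • (Real.sign (h ω) • G ω))
      have hcoe : (d ω : ℝ) = |h ω| / I :=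
        Real.coe_toNNReal _ (by positivity)
      rw [NNReal.smul_def, hcoe, smul_smul, smul_smul]
      congr 1
      have hsc : I * (|h ω| / I) * Real.sign (h ω) = Real.sign (h ω) * |h ω| := by
        field_simp
      rw [hsc, real_sign_mul_abs]
    rw [hFeq]
    refine Set.mem_smul_set.2 ⟨(1/2 : ℝ) • ∫ ω, v ω ∂μ, ?_, ?_⟩
    · have := hSconv hmem hS0 (by norm_num : (0:ℝ) ≤ 1/2) (by norm_num : (0:ℝ) ≤ 1/2)
        (by norm_num)
      simpa using this
    · rw [smul_smul]
      congr 1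
      ring
end

section
/- Let X be a real normed space and suppose A = A₁ ∪ A₂ ∪ ... ∪ A_k, where each A_i ⊆ X is bounded. Then for every n ≥ 0, the Kolmogorov widths satisfy d_{kn}(A)_X ≤ max_{i=1,...,k} d_n(A_i)_X. -/
/-- Kolmogorov `n`-width of a set `F` in a normed space over the field `𝕜`:
the infimum over subspaces of dimension at most `n` of the worst-case best
approximation error of elements of `F` from the subspace. -/
noncomputable def kolWidth (𝕜 : Type*) {X : Type*} [NormedField 𝕜]
    [NormedAddCommGroup X] [NormedSpace 𝕜 X] (F : Set X) (n : ℕ) : ℝ :=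
  ⨅ V : {V : Submodule 𝕜 X // FiniteDimensional 𝕜 V ∧ Module.finrank 𝕜 V ≤ n},
    ⨆ f : F, ⨅ g : V.1, ‖(f : X) - (g : X)‖

open Module

lemma finsetSup_fd {K E : Type*} [DivisionRing K] [AddCommGroup E] [Module K E]
    {ι : Type*} (s : Finset ι) (W : ι → Submodule K E) (h : ∀ i, FiniteDimensional K ↥(W i)) :
    FiniteDimensional K ↥(s.sup W) ∧ finrank K ↥(s.sup W) ≤ ∑ i ∈ s, finrank K ↥(W i) := by
  classical
  induction s using Finset.induction with
  | empty => refine ⟨by infer_instance, by simp [finrank_bot]⟩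
  | @insert a s hne ih =>
    rw [Finset.sup_insert, Finset.sum_insert hne]
    obtain ⟨fd, hle⟩ := ih
    have ha := h a
    have hfd : FiniteDimensional K ↥(W a ⊔ s.sup W) := inferInstance
    refine ⟨hfd, ?_⟩
    calc finrank K ↥(W a ⊔ s.sup W) ≤ finrank K ↥(W a) + finrank K ↥(s.sup W) :=
          Submodule.finrank_add_le_finrank_add_finrank _ _
      _ ≤ _ := by omega

section helpers
variable {X : Type*} [NormedAddCommGroup X] [NormedSpace ℝ X]

lemma bdd_below_dist (f : X) (V : Submodule ℝ X) :
    BddBelow (Set.range fun g : ↥V => ‖f - ↑g‖) := by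
  refine ⟨0, ?_⟩; rintro x ⟨g, rfl⟩; exact norm_nonneg _

lemma dist_inf_nonneg (f : X) (V : Submodule ℝ X) :
    0 ≤ ⨅ g : ↥V, ‖f - ↑g‖ :=
  Real.iInf_nonneg fun _ => norm_nonneg _

lemma dist_inf_le_norm (f : X) (V : Submodule ℝ X) :
    (⨅ g : ↥V, ‖f - ↑g‖) ≤ ‖f‖ := by
  have := ciInf_le (bdd_below_dist f V) (0 : ↥V)
  simpa using this

lemma dist_inf_anti (f : X) {V₁ V₂ : Submodule ℝ X} (h : V₁ ≤ V₂) :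
    (⨅ g : ↥V₂, ‖f - ↑g‖) ≤ ⨅ g : ↥V₁, ‖f - ↑g‖ :=
  le_ciInf fun g => ciInf_le (bdd_below_dist f V₂) ⟨g.1, h g.2⟩

lemma kolWidth_nonneg (F : Set X) (n : ℕ) : 0 ≤ kolWidth ℝ F n :=
  Real.iInf_nonneg fun _ => Real.iSup_nonneg fun f => dist_inf_nonneg _ _

end helpers


theorem stmt4 {X : Type*} [NormedAddCommGroup X] [NormedSpace ℝ X]
    (k : ℕ) (hk : 0 < k) (A : Fin k → Set X)
    (hA : ∀ i, Bornology.IsBounded (A i)) (n : ℕ) :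
    kolWidth ℝ (⋃ i, A i) (k * n) ≤ ⨆ i, kolWidth ℝ (A i) n := by
  have hknonempty : Nonempty (Fin k) := ⟨⟨0, hk⟩⟩
  have hRHS : 0 ≤ ⨆ i, kolWidth ℝ (A i) n :=
    le_trans (kolWidth_nonneg (A ⟨0, hk⟩) n)
      (le_ciSup (f := fun i => kolWidth ℝ (A i) n)
        (Set.Finite.bddAbove (Set.finite_range _)) ⟨0, hk⟩)
  refine le_of_forall_pos_le_add fun ε hε => ?_
  -- choose near-optimal subspaces
  have hchoice : ∀ i : Fin k, ∃ V : {V : Submodule ℝ X //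
      FiniteDimensional ℝ V ∧ Module.finrank ℝ V ≤ n},
      (⨆ f : A i, ⨅ g : V.1, ‖(f : X) - (g : X)‖) < kolWidth ℝ (A i) n + ε := by
    intro i
    have : kolWidth ℝ (A i) n < kolWidth ℝ (A i) n + ε := by linarith
    have hne : Nonempty {V : Submodule ℝ X //
        FiniteDimensional ℝ V ∧ Module.finrank ℝ V ≤ n} :=
      ⟨⟨⊥, inferInstance, by simp [finrank_bot]⟩⟩
    exact exists_lt_of_ciInf_lt this
  choose W hW using hchoice
  set V : Submodule ℝ X := Finset.univ.sup fun i => (W i).1 with hV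
  obtain ⟨hVfd, hVrank⟩ := finsetSup_fd Finset.univ (fun i => (W i).1)
    (fun i => (W i).2.1)
  have hVrank' : finrank ℝ ↥V ≤ k * n := by
    refine le_trans hVrank ?_
    calc ∑ i : Fin k, finrank ℝ ↥(W i).1 ≤ ∑ _i : Fin k, n :=
          Finset.sum_le_sum fun i _ => (W i).2.2
      _ = k * n := by simp [mul_comm]
  have key : kolWidth ℝ (⋃ i, A i) (k * n) ≤
      ⨆ f : ↥(⋃ i, A i), ⨅ g : ↥V, ‖(f : X) - (g : X)‖ := by
    refine ciInf_le ?_ (⟨V, hVfd, hVrank'⟩ : {V : Submodule ℝ X //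
      FiniteDimensional ℝ V ∧ Module.finrank ℝ V ≤ k * n})
    refine ⟨0, ?_⟩
    rintro x ⟨U, rfl⟩
    exact Real.iSup_nonneg fun f => dist_inf_nonneg _ _
  refine key.trans ?_
  refine Real.iSup_le ?_ (by linarith)
  rintro ⟨f, hf⟩
  obtain ⟨i, hfi⟩ := Set.mem_iUnion.mp hf
  have h1 : (⨅ g : ↥V, ‖f - ↑g‖) ≤ ⨅ g : ↥(W i).1, ‖f - ↑g‖ :=
    dist_inf_anti f (Finset.le_sup (f := fun j => (W j).1) (Finset.mem_univ i))
  have h2 : (⨅ g : ↥(W i).1, ‖f - ↑g‖) ≤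
      ⨆ f' : A i, ⨅ g : ↥(W i).1, ‖(f' : X) - ↑g‖ := by
    obtain ⟨C, hC⟩ := (hA i).exists_norm_le
    refine le_ciSup (f := fun f' : A i => ⨅ g : ↥(W i).1, ‖(f' : X) - ↑g‖) ?_ ⟨f, hfi⟩
    refine ⟨C, ?_⟩
    rintro x ⟨f', rfl⟩
    exact le_trans (dist_inf_le_norm _ _) (hC _ f'.2)
  have h3 := hW i
  have h4 : kolWidth ℝ (A i) n ≤ ⨆ j, kolWidth ℝ (A j) n :=
    le_ciSup (f := fun j => kolWidth ℝ (A j) n)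
      (Set.Finite.bddAbove (Set.finite_range _)) i
  dsimp only
  linarith
end

section
/- Let K be a nonempty compact subset of a real Banach space X, and let α > 0, C₁ > 0, r > 0 be such that d_n(K)_X ≤ C₁·e^{−r·n^α} for all integers n ≥ 0. Then there exist constants C₂ > 0 and C₃ > 0, depending only on C₁, r and α, such that the entropy numbers satisfy ε_n(K)_X ≤ C₂·e^{−C₃·n^{α/(α+1)}} for all integers n ≥ 1. -/
universe u

/-- The entropy number `ε_n(F)`: the infimum of all `ε > 0` such that `F` can be
covered by at most `2^n` closed balls of radius `ε`. -/
noncomputable def entropyNum {X : Type*} [NormedAddCommGroup X] (F : Set X) (n : ℕ) : ℝ :=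
  sInf { ε : ℝ | 0 < ε ∧ ∃ T : Finset X, T.card ≤ 2 ^ n ∧
    F ⊆ ⋃ y ∈ T, Metric.closedBall y ε }

open Metric MeasureTheory Module Set ENNReal

lemma packing_card_bound {E : Type*} [NormedAddCommGroup E] [NormedSpace ℝ E]
    [FiniteDimensional ℝ E] {R η : ℝ} (hR : 0 ≤ R) (hη : 0 < η)
    (T : Finset E) (hT : (T : Set E) ⊆ closedBall 0 R)
    (hsep : (T : Set E).Pairwise (fun a b => η < dist a b)) :
    (T.card : ℝ) ≤ (2 * R / η + 1) ^ finrank ℝ E := by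
  borelize E
  set k := finrank ℝ E with hk
  let μ : Measure E := (finBasis ℝ E).addHaar
  have hdisj : (T : Set E).PairwiseDisjoint (fun t => closedBall t (η / 2)) := by
    intro a ha b hb hab
    have := hsep ha hb hab
    exact closedBall_disjoint_closedBall (by linarith)
  have hmeas : ∀ t ∈ T, MeasurableSet (closedBall t (η / 2)) :=
    fun t _ => measurableSet_closedBall
  have hunion : (⋃ t ∈ T, closedBall t (η / 2)) ⊆ closedBall (0 : E) (R + η / 2) := by
    refine Set.iUnion₂_subset fun t ht x hx => ?_
    have h1 : dist x t ≤ η / 2 := hx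
    have h2 : dist t (0:E) ≤ R := hT ht
    exact mem_closedBall.2 ((dist_triangle x t 0).trans (by linarith))
  have hsum : ∑ t ∈ T, μ (closedBall t (η / 2)) ≤ μ (closedBall (0 : E) (R + η / 2)) := by
    rw [← measure_biUnion_finset hdisj hmeas]
    exact measure_mono hunion
  have hball : ∀ t : E, μ (closedBall t (η / 2)) =
      ENNReal.ofReal ((η / 2) ^ k) * μ (ball 0 1) :=
    fun t => Measure.addHaar_closedBall μ t (by linarith)
  have hbig : μ (closedBall (0 : E) (R + η / 2)) =
      ENNReal.ofReal ((R + η / 2) ^ k) * μ (ball 0 1) :=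
    Measure.addHaar_closedBall μ 0 (by linarith)
  rw [hbig] at hsum
  simp only [hball, Finset.sum_const, nsmul_eq_mul] at hsum
  have hpos : 0 < μ (ball (0:E) 1) := measure_ball_pos μ 0 one_pos
  have hfin : μ (ball (0:E) 1) ≠ ⊤ :=
    (lt_of_le_of_lt (measure_mono ball_subset_closedBall)
      (IsCompact.measure_lt_top (isCompact_closedBall 0 1))).ne
  rw [← mul_assoc] at hsum
  have key : (T.card : ℝ≥0∞) * ENNReal.ofReal ((η / 2) ^ k) ≤
      ENNReal.ofReal ((R + η / 2) ^ k) :=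
    (ENNReal.mul_le_mul_iff_left hpos.ne' hfin).mp hsum
  have hηk : 0 < (η / 2) ^ k := pow_pos (by linarith) k
  have key2 : (T.card : ℝ) * (η / 2) ^ k ≤ (R + η / 2) ^ k := by
    have := ENNReal.toReal_mono (by simp) key
    rw [ENNReal.toReal_mul, ENNReal.toReal_ofReal hηk.le,
      ENNReal.toReal_ofReal (by positivity), ENNReal.toReal_natCast] at this
    exact this
  have hquot : (2 * R / η + 1) = (R + η / 2) / (η / 2) := by
    field_simp
  rw [hquot, div_pow]
  rw [le_div_iff₀ hηk]
  exact key2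

lemma exists_net {E : Type*} [NormedAddCommGroup E] [NormedSpace ℝ E]
    [FiniteDimensional ℝ E] {R η : ℝ} (hR : 0 ≤ R) (hη : 0 < η) :
    ∃ T : Finset E, (T.card : ℝ) ≤ (2 * R / η + 1) ^ finrank ℝ E ∧
      closedBall (0:E) R ⊆ ⋃ t ∈ T, closedBall t η := by
  classical
  set S : Set (Finset E) := {T | (T : Set E) ⊆ closedBall 0 R ∧
    (T : Set E).Pairwise (fun a b => η < dist a b)} with hS
  set A : Set ℕ := Finset.card '' S with hA
  have hbound : ∀ n ∈ A, n ≤ ⌈(2 * R / η + 1) ^ finrank ℝ E⌉₊ := by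
    rintro n ⟨T, hT, rfl⟩
    have h1 := (packing_card_bound hR hη T hT.1 hT.2).trans
      (Nat.le_ceil ((2 * R / η + 1) ^ finrank ℝ E))
    exact_mod_cast h1
  have hne : A.Nonempty := ⟨0, ∅, ⟨by simp, by simp⟩, rfl⟩
  have hbdd : BddAbove A := ⟨_, fun n hn => hbound n hn⟩
  obtain ⟨T, hTS, hTcard⟩ : ∃ T ∈ S, T.card = sSup A := Nat.sSup_mem hne hbdd
  refine ⟨T, ?_, ?_⟩
  · exact packing_card_bound hR hη T hTS.1 hTS.2
  · intro x hx
    by_contra hxc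
    simp only [Set.mem_iUnion, mem_closedBall, not_exists, not_le] at hxc
    have hxT : x ∉ T := fun hxT => absurd (by simpa using hxc x hxT) (by linarith)
    have hins : insert x T ∈ S := by
      constructor
      · intro y hy
        rcases Finset.mem_coe.mp hy |> Finset.mem_insert.mp with rfl | hy'
        · exact hx
        · exact hTS.1 hy'
      · rw [Finset.coe_insert]
        have hsym : Symmetric (fun a b : E => η < dist a b) := fun a b hab =>
          show η < dist b a by rw [dist_comm]; exact hab
        haveI : Std.Symm (fun a b : E => η < dist a b) := ⟨fun a b h => hsym h⟩
        rw [Set.pairwise_insert_of_symm]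
        exact ⟨hTS.2, fun t ht _ => hxc t ht⟩
    have : (insert x T).card ≤ sSup A := le_csSup hbdd ⟨_, hins, rfl⟩
    rw [Finset.card_insert_of_notMem hxT, hTcard] at this
    omega

lemma kolWidth_bddAbove_aux {X : Type u} [NormedAddCommGroup X] [NormedSpace ℝ X]
    {K : Set X} {M : ℝ} (hM : ∀ g ∈ K, ‖g‖ ≤ M) (V : Submodule ℝ X) :
    BddAbove (Set.range fun f : K => ⨅ g : V, ‖(f : X) - (g : X)‖) := by
  refine ⟨M, ?_⟩
  rintro y ⟨f, rfl⟩
  have h0 : (⨅ g : V, ‖(f : X) - (g : X)‖) ≤ ‖(f : X) - ((0 : V) : X)‖ :=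
    ciInf_le ⟨0, by rintro y ⟨g, rfl⟩; positivity⟩ (0 : V)
  simp only [ZeroMemClass.coe_zero, sub_zero] at h0
  exact h0.trans (hM f f.2)

lemma norm_le_kolWidth_zero {X : Type u} [NormedAddCommGroup X] [NormedSpace ℝ X]
    {K : Set X} (hK : IsCompact K) {f : X} (hf : f ∈ K) :
    ‖f‖ ≤ kolWidth ℝ K 0 := by
  obtain ⟨M, hM⟩ : ∃ M, ∀ g ∈ K, ‖g‖ ≤ M := by
    obtain ⟨R, hR⟩ := hK.isBounded.subset_closedBall 0
    exact ⟨R, fun g hg => by simpa [mem_closedBall_zero_iff] using hR hg⟩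
  haveI : Nonempty {V : Submodule ℝ X // FiniteDimensional ℝ V ∧ finrank ℝ V ≤ 0} :=
    ⟨⟨⊥, inferInstance, by simp⟩⟩
  rw [kolWidth]
  refine le_ciInf fun V => ?_
  have hbot : V.1 = ⊥ := by
    haveI := V.2.1
    exact Submodule.finrank_eq_zero.mp (Nat.le_zero.mp V.2.2)
  have hval : (⨅ g : V.1, ‖f - (g : X)‖) = ‖f‖ := by
    refine le_antisymm ?_ (le_ciInf fun g => ?_)
    · have h0 : (⨅ g : V.1, ‖f - (g : X)‖) ≤ ‖f - ((0 : V.1) : X)‖ :=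
        ciInf_le ⟨0, by rintro y ⟨g, rfl⟩; positivity⟩ (0 : V.1)
      simpa using h0
    · obtain ⟨gv, hgv⟩ := g
      have hgv' : gv ∈ (⊥ : Submodule ℝ X) := hbot ▸ hgv
      have hgv0 : gv = 0 := by simpa using hgv'
      simp [hgv0]
  calc ‖f‖ = ⨅ g : V.1, ‖f - (g : X)‖ := hval.symm
    _ ≤ ⨆ f' : K, ⨅ g : V.1, ‖(f' : X) - (g : X)‖ :=
        le_ciSup (kolWidth_bddAbove_aux hM V.1) (⟨f, hf⟩ : K)

lemma kolWidth_approx {X : Type u} [NormedAddCommGroup X] [NormedSpace ℝ X]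
    {K : Set X} (hK : IsCompact K) {m : ℕ} {d : ℝ}
    (h : kolWidth ℝ K m < d) :
    ∃ V : Submodule ℝ X, FiniteDimensional ℝ V ∧ finrank ℝ V ≤ m ∧
      ∀ f ∈ K, ∃ v ∈ (V : Set X), ‖f - v‖ < d := by
  obtain ⟨M, hM⟩ : ∃ M, ∀ g ∈ K, ‖g‖ ≤ M := by
    obtain ⟨R, hR⟩ := hK.isBounded.subset_closedBall 0
    exact ⟨R, fun g hg => by simpa [mem_closedBall_zero_iff] using hR hg⟩
  haveI : Nonempty {V : Submodule ℝ X // FiniteDimensional ℝ V ∧ finrank ℝ V ≤ m} :=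
    ⟨⟨⊥, inferInstance, by simp⟩⟩
  rw [kolWidth] at h
  obtain ⟨V, hV⟩ := exists_lt_of_ciInf_lt h
  refine ⟨V.1, V.2.1, V.2.2, fun f hf => ?_⟩
  have h2 : (⨅ g : V.1, ‖f - (g : X)‖) < d :=
    lt_of_le_of_lt (le_ciSup (kolWidth_bddAbove_aux hM V.1) (⟨f, hf⟩ : K)) hV
  haveI : Nonempty V.1 := ⟨0⟩
  obtain ⟨g, hg⟩ := exists_lt_of_ciInf_lt h2
  exact ⟨g, g.2, hg⟩

set_option maxHeartbeats 1000000 in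
theorem stmt5 (α C₁ r : ℝ) (hα : 0 < α) (hC₁ : 0 < C₁) (hr : 0 < r) :
    ∃ C₂ > (0:ℝ), ∃ C₃ > (0:ℝ),
      ∀ (X : Type u) [NormedAddCommGroup X] [NormedSpace ℝ X] [CompleteSpace X]
        (K : Set X), K.Nonempty → IsCompact K →
        (∀ n : ℕ, kolWidth ℝ K n ≤ C₁ * Real.exp (-r * (n : ℝ) ^ α)) →
        ∀ n : ℕ, 1 ≤ n →
          entropyNum K n ≤ C₂ * Real.exp (-C₃ * (n : ℝ) ^ (α / (α + 1))) := by
  have hα1 : (0:ℝ) < α + 1 := by linarith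
  have hlog2 : (0:ℝ) < Real.log 2 := Real.log_pos one_lt_two
  set c : ℝ := Real.log 2 / (2 * r) with hc
  have hcpos : 0 < c := by positivity
  set β : ℝ := min (1/4) (c ^ ((1:ℝ)/(α+1))) with hβ
  have hβpos : 0 < β := lt_min (by norm_num) (Real.rpow_pos_of_pos hcpos _)
  have hβ14 : β ≤ 1/4 := min_le_left _ _
  set C₃ : ℝ := r * (β/2) ^ α with hC₃
  have hC₃pos : 0 < C₃ := by
    have : (0:ℝ) < (β/2) ^ α := Real.rpow_pos_of_pos (by linarith) α
    positivity
  set C₂ : ℝ := 4 * C₁ * Real.exp (C₃ * (1/β) ^ α) with hC₂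
  have hC₂pos : 0 < C₂ := by positivity
  clear_value C₂
  clear_value C₃
  clear_value β
  clear_value c
  refine ⟨C₂, hC₂pos, C₃, hC₃pos, ?_⟩
  intro X _ _ _ K hne hK hkol n hn
  have hn1 : (1:ℝ) ≤ (n:ℝ) := by exact_mod_cast hn
  have hnn : (0:ℝ) ≤ (n:ℝ) := by linarith
  set x : ℝ := β * (n:ℝ) ^ ((1:ℝ)/(α+1)) with hx
  have hxpos : 0 < x := by
    rw [hx]
    have : (0:ℝ) < (n:ℝ) ^ ((1:ℝ)/(α+1)) := Real.rpow_pos_of_pos (by linarith) _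
    positivity
  clear_value x
  set m : ℕ := ⌊x⌋₊ with hm
  have hmx : (m:ℝ) ≤ x := Nat.floor_le hxpos.le
  set d : ℝ := C₁ * Real.exp (-r * (m:ℝ) ^ α) with hd
  have hdpos : 0 < d := by rw [hd]; positivity
  have hdC₁ : d ≤ C₁ := by
    have h1 : Real.exp (-r * (m:ℝ) ^ α) ≤ 1 := by
      apply Real.exp_le_one_iff.mpr
      have : (0:ℝ) ≤ (m:ℝ) ^ α := Real.rpow_nonneg m.cast_nonneg α
      nlinarith
    rw [hd]
    nlinarith [Real.exp_pos (-r * (m:ℝ) ^ α)]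
  clear_value d
  have hKnorm : ∀ f ∈ K, ‖f‖ ≤ C₁ := by
    intro f hf
    refine (norm_le_kolWidth_zero hK hf).trans ?_
    have h0 := hkol 0
    simpa [Real.zero_rpow hα.ne'] using h0
  have entropy_le : ∀ ε : ℝ, 0 < ε →
      (∃ T : Finset X, T.card ≤ 2^n ∧ K ⊆ ⋃ y ∈ T, closedBall y ε) →
      entropyNum K n ≤ ε := by
    intro ε hε hT
    exact csInf_le ⟨0, fun y hy => hy.1.le⟩ ⟨hε, hT⟩
  have hrw : (n:ℝ) ^ (α/(α+1)) = ((n:ℝ) ^ ((1:ℝ)/(α+1))) ^ α := by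
    rw [← Real.rpow_mul hnn, one_div, inv_mul_eq_div]
  have hnp_nonneg : (0:ℝ) ≤ (n:ℝ) ^ (α/(α+1)) := Real.rpow_nonneg hnn _
  by_cases hm0 : m = 0
  · -- small n case: one ball of radius C₁ suffices
    have h1 : entropyNum K n ≤ C₁ := by
      refine entropy_le C₁ hC₁ ⟨{0}, by simpa using Nat.one_le_two_pow, fun f hf => ?_⟩
      refine Set.mem_iUnion₂.mpr ⟨0, Finset.mem_singleton_self 0, ?_⟩
      rw [mem_closedBall_zero_iff]
      exact hKnorm f hf
    refine h1.trans ?_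
    have hxlt : x < 1 := Nat.floor_eq_zero.mp (hm ▸ hm0)
    have h2 : (n:ℝ) ^ ((1:ℝ)/(α+1)) < 1/β := by
      rw [lt_div_iff₀ hβpos]
      rw [hx] at hxlt
      nlinarith [hxlt]
    have h3 : (n:ℝ) ^ (α/(α+1)) ≤ (1/β) ^ α := by
      rw [hrw]
      exact Real.rpow_le_rpow (Real.rpow_nonneg hnn _) h2.le hα.le
    calc C₁ ≤ 4 * C₁ := by linarith
      _ = 4 * C₁ * (Real.exp (C₃ * (1/β) ^ α) * Real.exp (-(C₃ * (1/β) ^ α))) := by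
          rw [← Real.exp_add]; simp
      _ = C₂ * Real.exp (-(C₃ * (1/β) ^ α)) := by rw [hC₂]; ring
      _ ≤ C₂ * Real.exp (-C₃ * (n:ℝ) ^ (α/(α+1))) := by
          apply mul_le_mul_of_nonneg_left _ hC₂pos.le
          apply Real.exp_le_exp.mpr
          nlinarith
  · -- main case: m ≥ 1
    have hm1 : 1 ≤ m := Nat.one_le_iff_ne_zero.mpr hm0
    have hm1' : (1:ℝ) ≤ (m:ℝ) := by exact_mod_cast hm1
    have hd2 : kolWidth ℝ K m < 2 * d := by
      refine lt_of_le_of_lt (hkol m) ?_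
      rw [hd]
      nlinarith [Real.exp_pos (-r * (m:ℝ) ^ α)]
    obtain ⟨V, hVfd, hVrk, hVapp⟩ := kolWidth_approx hK hd2
    haveI := hVfd
    set R : ℝ := C₁ + 2 * d with hR
    clear_value R
    have hRpos : (0:ℝ) ≤ R := by rw [hR]; linarith
    obtain ⟨T, hTcard, hTnet⟩ := exists_net (E := V) (R := R) (η := 2 * d)
      hRpos (by linarith)
    classical
    set T' : Finset X := T.image (fun t : V => (t : X)) with hT'
    have hcover : K ⊆ ⋃ y ∈ T', closedBall y (4 * d) := by
      intro f hf
      obtain ⟨v, hvV, hvd⟩ := hVapp f hf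
      have hvnorm : ‖v‖ ≤ R := by
        have h1 : ‖v‖ - ‖f‖ ≤ ‖v - f‖ := norm_sub_norm_le v f
        have h2 : ‖v - f‖ = ‖f - v‖ := norm_sub_rev v f
        have h3 := hKnorm f hf
        rw [hR]; linarith
      have hvball : (⟨v, hvV⟩ : V) ∈ closedBall (0:V) R := by
        rw [mem_closedBall_zero_iff]
        rw [Submodule.coe_norm]
        exact hvnorm
      obtain ⟨t, ht, hdist⟩ := Set.mem_iUnion₂.mp (hTnet hvball)
      have hdist' : ‖v - (t : X)‖ ≤ 2 * d := by
        have : dist (⟨v, hvV⟩ : V) t ≤ 2 * d := hdist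
        rw [Subtype.dist_eq, dist_eq_norm] at this
        exact this
      refine Set.mem_iUnion₂.mpr ⟨(t : X), Finset.mem_image_of_mem _ ht, ?_⟩
      rw [mem_closedBall, dist_eq_norm]
      calc ‖f - (t : X)‖ = ‖(f - v) + (v - (t : X))‖ := by rw [sub_add_sub_cancel]
        _ ≤ ‖f - v‖ + ‖v - (t : X)‖ := norm_add_le _ _
        _ ≤ 4 * d := by linarith [hvd.le]
    -- cardinality bound
    have hdiv_nonneg : (0:ℝ) ≤ 2 * R / (2 * d) :=
      div_nonneg (by linarith) (by linarith)
    have hbase_nonneg : (0:ℝ) ≤ 2 * R / (2 * d) + 1 := by linarith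
    have hbase1 : (1:ℝ) ≤ 2 * R / (2 * d) + 1 := by linarith
    have hcard1 : (T'.card : ℝ) ≤ (2 * R / (2 * d) + 1) ^ m := by
      have h1 : T'.card ≤ T.card := Finset.card_image_le
      have h2 : ((T.card : ℝ)) ≤ (2 * R / (2 * d) + 1) ^ finrank ℝ V := hTcard
      have h3 : (2 * R / (2 * d) + 1) ^ finrank ℝ V ≤ (2 * R / (2 * d) + 1) ^ m :=
        pow_le_pow_right₀ hbase1 hVrk
      calc (T'.card : ℝ) ≤ (T.card : ℝ) := by exact_mod_cast h1
        _ ≤ _ := h2.trans h3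
    have hbase2 : 2 * R / (2 * d) + 1 ≤ 4 * C₁ / d := by
      have h1 : 2 * R / (2 * d) = R / d := by
        rw [mul_div_mul_left _ _ (two_ne_zero)]
      rw [h1, div_add' _ _ _ hdpos.ne', div_le_div_iff₀ hdpos hdpos]
      rw [hd] at hdC₁ ⊢
      nlinarith [Real.exp_pos (-r * (m:ℝ) ^ α)]
    have hform : 4 * C₁ / d = 4 * Real.exp (r * (m:ℝ) ^ α) := by
      rw [hd, neg_mul, Real.exp_neg]
      rw [div_eq_iff (by positivity : C₁ * (Real.exp (r * (m:ℝ) ^ α))⁻¹ ≠ 0)]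
      field_simp
    have hcard2 : (T'.card : ℝ) ≤ (4 * Real.exp (r * (m:ℝ) ^ α)) ^ m := by
      refine hcard1.trans ?_
      rw [← hform]
      exact pow_le_pow_left₀ hbase_nonneg hbase2 m
    have hexp_form : (4 * Real.exp (r * (m:ℝ) ^ α)) ^ m =
        Real.exp ((m:ℝ) * Real.log 4 + r * (m:ℝ) ^ (α+1)) := by
      calc (4 * Real.exp (r * (m:ℝ) ^ α)) ^ m
          = (Real.exp (Real.log 4) * Real.exp (r * (m:ℝ) ^ α)) ^ m := by
            rw [Real.exp_log (by norm_num : (0:ℝ) < 4)]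
        _ = (Real.exp (Real.log 4 + r * (m:ℝ) ^ α)) ^ m := by rw [Real.exp_add]
        _ = Real.exp ((m:ℝ) * (Real.log 4 + r * (m:ℝ) ^ α)) :=
            (Real.exp_nat_mul _ m).symm
        _ = Real.exp ((m:ℝ) * Real.log 4 + r * (m:ℝ) ^ (α+1)) := by
            congr 1
            rw [Real.rpow_add (by linarith : (0:ℝ) < (m:ℝ)) α 1, Real.rpow_one]
            ring
    have hn_pow : (n:ℝ) ^ ((1:ℝ)/(α+1)) ≤ (n:ℝ) := by
      nth_rewrite 2 [← Real.rpow_one (n:ℝ)]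
      apply Real.rpow_le_rpow_of_exponent_le hn1
      rw [div_le_one hα1]; linarith
    have hlog4 : Real.log 4 = 2 * Real.log 2 := by
      rw [show (4:ℝ) = 2^2 by norm_num, Real.log_pow]
      push_cast; ring
    have hexpA : (m:ℝ) * Real.log 4 ≤ (n:ℝ) * Real.log 2 / 2 := by
      have h1 : (m:ℝ) ≤ (1/4) * (n:ℝ) := by
        have : x ≤ (1/4) * (n:ℝ) ^ ((1:ℝ)/(α+1)) := by
          rw [hx]
          apply mul_le_mul_of_nonneg_right hβ14 (Real.rpow_nonneg hnn _)
        nlinarith [hmx, hn_pow]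
      rw [hlog4]
      nlinarith
    have hβα1 : β ^ (α+1) ≤ c := by
      have h1 : β ≤ c ^ ((1:ℝ)/(α+1)) := by rw [hβ]; exact min_le_right _ _
      have h2 : β ^ (α+1) ≤ (c ^ ((1:ℝ)/(α+1))) ^ (α+1) :=
        Real.rpow_le_rpow hβpos.le h1 hα1.le
      rwa [← Real.rpow_mul hcpos.le, one_div,
        inv_mul_cancel₀ hα1.ne', Real.rpow_one] at h2

    have hexpB : r * (m:ℝ) ^ (α+1) ≤ (n:ℝ) * Real.log 2 / 2 := by
      have h1 : (m:ℝ) ^ (α+1) ≤ x ^ (α+1) :=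
        Real.rpow_le_rpow m.cast_nonneg hmx hα1.le
      have h2 : x ^ (α+1) = β ^ (α+1) * (n:ℝ) := by
        rw [hx, Real.mul_rpow hβpos.le (Real.rpow_nonneg hnn _),
          ← Real.rpow_mul hnn, one_div, inv_mul_cancel₀ hα1.ne', Real.rpow_one]
      have h3 : β ^ (α+1) * (n:ℝ) ≤ c * (n:ℝ) :=
        mul_le_mul_of_nonneg_right hβα1 hnn
      have h4 : r * (c * (n:ℝ)) = (n:ℝ) * Real.log 2 / 2 := by
        rw [hc]; field_simp
      nlinarith
    have hcard3 : T'.card ≤ 2 ^ n := by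
      have h1 : (T'.card : ℝ) ≤ Real.exp ((n:ℝ) * Real.log 2) := by
        rw [hexp_form] at hcard2
        refine hcard2.trans (Real.exp_le_exp.mpr ?_)
        linarith
      have h2 : Real.exp ((n:ℝ) * Real.log 2) = (2:ℝ) ^ n := by
        rw [Real.exp_nat_mul, Real.exp_log (by norm_num : (0:ℝ) < 2)]
      rw [h2] at h1
      exact_mod_cast h1
    have hent : entropyNum K n ≤ 4 * d := entropy_le _ (by linarith) ⟨T', hcard3, hcover⟩
    refine hent.trans ?_
    -- final estimate
    have hxhalf : x / 2 ≤ (m:ℝ) := by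
      by_cases hx2 : x ≤ 2
      · linarith
      · have h := Nat.lt_floor_add_one x
        push_neg at hx2
        rw [← hm] at h
        linarith
    have h5 : (x/2) ^ α ≤ (m:ℝ) ^ α := Real.rpow_le_rpow (by positivity) hxhalf hα.le
    have h6 : (x/2) ^ α = (β/2) ^ α * (n:ℝ) ^ (α/(α+1)) := by
      rw [hx, hrw]
      rw [show β * (n:ℝ) ^ ((1:ℝ)/(α+1)) / 2 = (β/2) * (n:ℝ) ^ ((1:ℝ)/(α+1)) by ring]
      exact Real.mul_rpow (by linarith) (Real.rpow_nonneg hnn _)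
    have h7 : C₃ * (n:ℝ) ^ (α/(α+1)) ≤ r * (m:ℝ) ^ α := by
      rw [hC₃]
      calc r * (β/2) ^ α * (n:ℝ) ^ (α/(α+1)) = r * ((x/2) ^ α) := by rw [h6]; ring
        _ ≤ r * (m:ℝ) ^ α := mul_le_mul_of_nonneg_left h5 hr.le
    have h8 : Real.exp (-r * (m:ℝ) ^ α) ≤ Real.exp (-C₃ * (n:ℝ) ^ (α/(α+1))) := by
      apply Real.exp_le_exp.mpr
      have := h7
      linarith [neg_mul r ((m:ℝ) ^ α), neg_mul C₃ ((n:ℝ) ^ (α/(α+1)))]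
    have h9 : 4 * C₁ ≤ C₂ := by
      rw [hC₂]
      have he : (1:ℝ) ≤ Real.exp (C₃ * (1/β) ^ α) :=
        Real.one_le_exp (mul_nonneg hC₃pos.le
          (Real.rpow_nonneg (one_div_pos.mpr hβpos).le α))
      exact le_mul_of_one_le_right (by positivity) he
    calc 4 * d = 4 * C₁ * Real.exp (-r * (m:ℝ) ^ α) := by rw [hd]; ring
      _ ≤ C₂ * Real.exp (-C₃ * (n:ℝ) ^ (α/(α+1))) := by
          apply mul_le_mul h9 h8 (Real.exp_pos _).le hC₂pos.le
end

section
/- Let m ≥ 1, let W ⊆ ℝ^m be a nonempty bounded convex set, and let U ⊆ ℂ^m be an open set containing the closure of W (where ℝ^m is identified with the real points of ℂ^m). Let Ĩ = [a,b] ⊂ ℝ be a compact interval and let 𝒢 : U → C(Ĩ; ℂ) be analytic, where C(Ĩ; ℂ) is the complex Banach space of continuous complex-valued functions on Ĩ with the supremum norm. Set D̃ = { 𝒢(ω) : ω ∈ W } ⊆ C(Ĩ; ℂ). Then there exist constants C > 0 and C₄ > 0 such that the Kolmogorov widths satisfy d_n(D̃) ≤ C·e^{−C₄·n^{1/m}}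 for all integers n ≥ 1. -/
open Finset

/-- Basis-vector tuple associated to `d : Fin k → Fin m`. -/
private def eVec {m k : ℕ} (d : Fin k → Fin m) : Fin k → (Fin m → ℂ) :=
  fun i => Pi.single (d i) 1

/-- The "type" (exponent vector) of `d : Fin k → Fin m`. -/
private def typeOf {m k : ℕ} (d : Fin k → Fin m) : Fin m → ℕ :=
  fun j => ((Finset.univ : Finset (Fin k)).filter fun i => d i = j).card

private lemma sum_typeOf {m k : ℕ} (d : Fin k → Fin m) : ∑ j, typeOf d j = k := by
  classical
  have := Finset.card_eq_sum_card_fiberwise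
    (f := d) (s := (Finset.univ : Finset (Fin k))) (t := (Finset.univ : Finset (Fin m)))
    (fun i _ => Finset.mem_univ _)
  simpa [typeOf] using this.symm

/-- Grouped coefficient vector of a formal multilinear series at exponent `β`. -/
private noncomputable def wVec {m : ℕ} {X : Type*} [NormedAddCommGroup X] [NormedSpace ℂ X]
    (p : FormalMultilinearSeries ℂ (Fin m → ℂ) X) (β : Fin m → ℕ) : X :=
  ∑ d ∈ (Finset.univ : Finset (Fin (∑ j, β j) → Fin m)).filter (fun d => typeOf d = β),
    p (∑ j, β j) (eVec d)

private lemma partialSum_mem_span {m : ℕ} {X : Type*} [NormedAddCommGroup X]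
    [NormedSpace ℂ X] (p : FormalMultilinearSeries ℂ (Fin m → ℂ) X) (N : ℕ)
    (y : Fin m → ℂ) (V : Submodule ℂ X)
    (hV : ∀ β ∈ Fintype.piFinset (fun _ : Fin m => Finset.range N), wVec p β ∈ V) :
    p.partialSum N y ∈ V := by
  classical
  rw [FormalMultilinearSeries.partialSum]
  refine Submodule.sum_mem _ fun k hk => ?_
  have hkN : k < N := Finset.mem_range.1 hk
  have hy : y = ∑ j : Fin m, y j • (Pi.single j 1 : Fin m → ℂ) := by
    funext i
    simp [Pi.single_apply]
  have key : (p k fun _ : Fin k => y)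
      = ∑ r : Fin k → Fin m, (∏ i, y (r i)) • p k (eVec r) := by
    calc (p k fun _ : Fin k => y)
        = p k (fun _ : Fin k => ∑ j : Fin m, y j • (Pi.single j 1 : Fin m → ℂ)) := by rw [← hy]
      _ = ∑ r : Fin k → Fin m, p k (fun i => y (r i) • (Pi.single (r i) 1 : Fin m → ℂ)) :=
          (p k).map_sum (g := fun _ j => y j • (Pi.single j 1 : Fin m → ℂ))
      _ = ∑ r : Fin k → Fin m, (∏ i, y (r i)) • p k (eVec r) :=
          Finset.sum_congr rfl fun r _ => (p k).map_smul_univ _ _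
  rw [key]
  have hmap : ∀ d ∈ (Finset.univ : Finset (Fin k → Fin m)),
      typeOf d ∈ Fintype.piFinset (fun _ : Fin m => Finset.range N) := by
    intro d _
    refine Fintype.mem_piFinset.2 fun j => Finset.mem_range.2 ?_
    calc typeOf d j ≤ (Finset.univ : Finset (Fin k)).card := Finset.card_filter_le _ _
      _ = k := by simp
      _ < N := hkN
  rw [← Finset.sum_fiberwise_of_maps_to hmap (fun d => (∏ i, y (d i)) • p k (eVec d))]
  refine Submodule.sum_mem _ fun β hβ => ?_
  by_cases hsk : ∑ j, β j = k
  · have h1 : ∀ d ∈ (Finset.univ : Finset (Fin k → Fin m)).filter (fun d => typeOf d = β),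
        (∏ i, y (d i)) • p k (eVec d) = (∏ j, y j ^ β j) • p k (eVec d) := by
      intro d hd
      have hd' : typeOf d = β := (Finset.mem_filter.1 hd).2
      congr 1
      calc ∏ i, y (d i)
          = ∏ j : Fin m, ∏ i ∈ (Finset.univ : Finset (Fin k)).filter (fun i => d i = j),
              y (d i) :=
            (Finset.prod_fiberwise_of_maps_to (fun i _ => Finset.mem_univ _) _).symm
        _ = ∏ j : Fin m, y j ^ β j := by
            refine Finset.prod_congr rfl fun j _ => ?_
            rw [Finset.prod_congr rfl (fun i hi => by rw [(Finset.mem_filter.1 hi).2]),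
              Finset.prod_const, ← hd']
            rfl
    rw [Finset.sum_congr rfl h1, ← Finset.smul_sum]
    refine Submodule.smul_mem _ _ ?_
    have hw := hV β hβ
    subst hsk
    exact hw
  · have hempty : (Finset.univ : Finset (Fin k → Fin m)).filter (fun d => typeOf d = β) = ∅ := by
      refine Finset.filter_eq_empty_iff.2 fun d _ h => hsk ?_
      rw [← h]
      exact sum_typeOf d
    rw [hempty, Finset.sum_empty]
    exact Submodule.zero_mem _

theorem stmt6 {m : ℕ} (hm : 1 ≤ m) (a b : ℝ) (hab : a < b)
    (W : Set (Fin m → ℝ)) (hWne : W.Nonempty) (hWbdd : Bornology.IsBounded W)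
    (hWconv : Convex ℝ W)
    (U : Set (Fin m → ℂ)) (hU : IsOpen U)
    (hWU : (fun ω : Fin m → ℝ => fun i => ((ω i : ℝ) : ℂ)) '' closure W ⊆ U)
    (𝒢 : (Fin m → ℂ) → C(Set.Icc a b, ℂ))
    (h𝒢 : AnalyticOnNhd ℂ 𝒢 U) :
    ∃ C > (0:ℝ), ∃ C₄ > (0:ℝ), ∀ n : ℕ, 1 ≤ n →
      kolWidth ℂ ((fun ω : Fin m → ℝ => 𝒢 fun i => ((ω i : ℝ) : ℂ)) '' W) n
        ≤ C * Real.exp (-C₄ * (n : ℝ) ^ ((1 : ℝ) / m)) := by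
  classical
  set D : Set C(Set.Icc a b, ℂ) := (fun ω : Fin m → ℝ => 𝒢 fun i => ((ω i : ℝ) : ℂ)) '' W with hD
  have hDne : D.Nonempty := hWne.image _
  haveI : Nonempty ↥D := hDne.to_subtype
  set K : Set (Fin m → ℂ) := (fun ω : Fin m → ℝ => fun i => ((ω i : ℝ) : ℂ)) '' closure W with hK
  have hecont : Continuous (fun ω : Fin m → ℝ => fun i => ((ω i : ℝ) : ℂ)) :=
    continuous_pi fun i => Complex.continuous_ofReal.comp (continuous_apply i)
  have hKcomp : IsCompact K := (hWbdd.isCompact_closure).image hecont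
  have H : ∀ x : K, ∃ ρ : ℝ, 0 < ρ ∧
      ∃ p : FormalMultilinearSeries ℂ (Fin m → ℂ) C(Set.Icc a b, ℂ),
      ∃ α ∈ Set.Ioo (0:ℝ) 1, ∃ Cc > (0:ℝ),
      ∀ y ∈ Metric.ball (0 : Fin m → ℂ) ρ, ∀ n : ℕ,
        ‖𝒢 ((x : Fin m → ℂ) + y) - p.partialSum n y‖ ≤ Cc * α ^ n := by
    rintro ⟨x, hx⟩
    obtain ⟨p, r, hp⟩ := h𝒢 x (hWU hx)
    obtain ⟨r', hr'0, hr'⟩ := ENNReal.lt_iff_exists_nnreal_btwn.1 hp.r_pos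
    obtain ⟨α, hα, Cc, hCc, hb⟩ := hp.uniform_geometric_approx hr'
    exact ⟨r', NNReal.coe_pos.2 (ENNReal.coe_pos.1 hr'0), p, α, hα, Cc, hCc, hb⟩
  choose ρ hρ p α hα Cc hCc hbound using H
  obtain ⟨t, ht⟩ := hKcomp.elim_finite_subcover
    (fun x : K => Metric.ball (x : Fin m → ℂ) (ρ x)) (fun _ => Metric.isOpen_ball)
    (fun z hz => Set.mem_iUnion.2 ⟨⟨z, hz⟩, Metric.mem_ball_self (hρ _)⟩)
  have htne : t.Nonempty := by
    obtain ⟨w₀, hw₀⟩ := hWne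
    have hmemK : (fun i => ((w₀ i : ℝ) : ℂ)) ∈ K := ⟨w₀, subset_closure hw₀, rfl⟩
    rcases Set.mem_iUnion₂.1 (ht hmemK) with ⟨x₀, hx₀t, _⟩
    exact ⟨x₀, hx₀t⟩
  obtain ⟨x₀, hx₀⟩ := id htne
  set astar : ℝ := t.sup' htne α with hastar
  set Cstar : ℝ := t.sup' htne Cc with hCstardef
  have hastar0 : 0 < astar := lt_of_lt_of_le (hα x₀).1 (Finset.le_sup' α hx₀)
  have hastar1 : astar < 1 := (Finset.sup'_lt_iff htne).2 fun x _ => (hα x).2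
  have hCstar0 : 0 < Cstar := lt_of_lt_of_le (hCc x₀) (Finset.le_sup' Cc hx₀)
  set L : ℕ := t.card with hLdef
  have hL1 : 1 ≤ L := Finset.card_pos.2 ⟨x₀, hx₀⟩
  have hL0 : (0:ℝ) < (L:ℝ) := by exact_mod_cast hL1
  -- main width bound
  have main : ∀ n N : ℕ, L * N ^ m ≤ n → kolWidth ℂ D n ≤ Cstar * astar ^ N := by
    intro n N hn
    set B : Finset (Fin m → ℕ) := Fintype.piFinset fun _ : Fin m => Finset.range N with hB
    set T : Finset C(Set.Icc a b, ℂ) := (t ×ˢ B).image (fun q => wVec (p q.1) q.2) with hT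
    set V : Submodule ℂ C(Set.Icc a b, ℂ) := Submodule.span ℂ (T : Set C(Set.Icc a b, ℂ)) with hV
    have hVfd : FiniteDimensional ℂ V := FiniteDimensional.span_of_finite ℂ T.finite_toSet
    have hVrank : Module.finrank ℂ V ≤ n := by
      calc Module.finrank ℂ V ≤ T.card := finrank_span_finset_le_card T
        _ ≤ (t ×ˢ B).card := Finset.card_image_le
        _ = L * N ^ m := by
            rw [Finset.card_product, hB, Fintype.card_piFinset_const, Finset.card_range]
        _ ≤ n := hn
    have hdist : ∀ f : ↥D, (⨅ g : ↥V, ‖(f : C(Set.Icc a b, ℂ)) - (g : C(Set.Icc a b, ℂ))‖)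
        ≤ Cstar * astar ^ N := by
      rintro ⟨f, ω, hω, rfl⟩
      have hxK : (fun i => ((ω i : ℝ) : ℂ)) ∈ K := ⟨ω, subset_closure hω, rfl⟩
      rcases Set.mem_iUnion₂.1 (ht hxK) with ⟨x, hxt, hball⟩
      set y : Fin m → ℂ := (fun i => ((ω i : ℝ) : ℂ)) - (x : Fin m → ℂ) with hy
      have hyball : y ∈ Metric.ball (0 : Fin m → ℂ) (ρ x) := by
        rw [Metric.mem_ball, dist_zero_right, hy, ← dist_eq_norm]
        exact hball
      have happ : (fun i => ((ω i : ℝ) : ℂ)) = (x : Fin m → ℂ) + y := by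
        rw [hy]; abel
      have hbnd := hbound x y hyball N
      have hmem : (p x).partialSum N y ∈ V := by
        refine partialSum_mem_span _ _ _ _ fun β hβ => Submodule.subset_span ?_
        exact Finset.mem_coe.2 (Finset.mem_image.2 ⟨(x, β), Finset.mem_product.2 ⟨hxt, hβ⟩, rfl⟩)
      have hbdd : BddBelow (Set.range fun g : ↥V =>
          ‖𝒢 (fun i => ((ω i : ℝ) : ℂ)) - (g : C(Set.Icc a b, ℂ))‖) := by
        refine ⟨0, ?_⟩
        rintro _ ⟨g, rfl⟩
        exact norm_nonneg _
      calc (⨅ g : ↥V, ‖𝒢 (fun i => ((ω i : ℝ) : ℂ)) - (g : C(Set.Icc a b, ℂ))‖)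
          ≤ ‖𝒢 (fun i => ((ω i : ℝ) : ℂ)) - (p x).partialSum N y‖ :=
            ciInf_le hbdd (⟨(p x).partialSum N y, hmem⟩ : ↥V)
        _ ≤ Cc x * α x ^ N := by rw [happ]; exact hbnd
        _ ≤ Cstar * astar ^ N :=
            mul_le_mul (Finset.le_sup' Cc hxt)
              (pow_le_pow_left₀ (hα x).1.le (Finset.le_sup' α hxt) N)
              (pow_nonneg (hα x).1.le N) hCstar0.le
    have h1 : kolWidth ℂ D n ≤ ⨆ f : ↥D, ⨅ g : ↥V, ‖(f : C(Set.Icc a b, ℂ)) - (g : C(Set.Icc a b, ℂ))‖ := by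
      unfold kolWidth
      refine ciInf_le ⟨0, ?_⟩ (⟨V, hVfd, hVrank⟩ :
        {V : Submodule ℂ C(Set.Icc a b, ℂ) // FiniteDimensional ℂ V ∧ Module.finrank ℂ V ≤ n})
      rintro _ ⟨V', rfl⟩
      exact Real.iSup_nonneg fun f => Real.iInf_nonneg fun g => norm_nonneg _
    exact h1.trans (ciSup_le hdist)
  -- conversion to exponential bound
  have hlog : Real.log astar < 0 := Real.log_neg hastar0 hastar1
  have hm0 : (m:ℝ) ≠ 0 := Nat.cast_ne_zero.2 (by omega)
  refine ⟨Cstar * Real.exp (-Real.log astar), by positivity,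
    (-Real.log astar) / (L:ℝ) ^ ((1:ℝ)/m), ?_, ?_⟩
  · exact div_pos (by linarith) (Real.rpow_pos_of_pos hL0 _)
  · intro n hn
    set xx : ℝ := ((n : ℝ) / (L:ℝ)) ^ ((1:ℝ)/m) with hxxdef
    have hnL0 : (0:ℝ) ≤ (n:ℝ)/(L:ℝ) := by positivity
    set N : ℕ := ⌊xx⌋₊ with hNdef
    have hxx0 : 0 ≤ xx := Real.rpow_nonneg hnL0 _
    have hNle : (N:ℝ) ≤ xx := Nat.floor_le hxx0
    have hpow : ((N:ℝ)) ^ m ≤ (n:ℝ)/(L:ℝ) := by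
      have h1 : ((N:ℝ))^m ≤ xx ^ m := pow_le_pow_left₀ (Nat.cast_nonneg N) hNle m
      have h2 : xx ^ m = (n:ℝ)/(L:ℝ) := by
        rw [hxxdef, ← Real.rpow_natCast (((n:ℝ)/(L:ℝ)) ^ ((1:ℝ)/m)) m, ← Real.rpow_mul hnL0,
          one_div, inv_mul_cancel₀ hm0, Real.rpow_one]
      linarith
    have hLN : L * N ^ m ≤ n := by
      have hr : (L:ℝ) * ((N:ℝ))^m ≤ (n:ℝ) := by
        calc (L:ℝ) * ((N:ℝ))^m ≤ (L:ℝ) * ((n:ℝ)/(L:ℝ)) :=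
              mul_le_mul_of_nonneg_left hpow hL0.le
          _ = (n:ℝ) := by rw [mul_comm, div_mul_cancel₀ _ (ne_of_gt hL0)]
      exact_mod_cast hr
    refine (main n N hLN).trans ?_
    have hfloor : xx - 1 ≤ (N:ℝ) := (Nat.sub_one_lt_floor xx).le
    have h3 : astar ^ N = Real.exp ((N:ℝ) * Real.log astar) := by
      rw [Real.exp_nat_mul, Real.exp_log hastar0]
    have hβx : (-Real.log astar) / (L:ℝ) ^ ((1:ℝ)/m) * (n:ℝ) ^ ((1:ℝ)/m)
        = (-Real.log astar) * xx := by
      rw [hxxdef, Real.div_rpow (Nat.cast_nonneg n) (Nat.cast_nonneg L),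
        div_mul_eq_mul_div, mul_div_assoc]
    calc Cstar * astar ^ N = Cstar * Real.exp ((N:ℝ) * Real.log astar) := by rw [h3]
      _ ≤ Cstar * Real.exp ((xx - 1) * Real.log astar) := by
          refine mul_le_mul_of_nonneg_left (Real.exp_le_exp.2 ?_) hCstar0.le
          exact mul_le_mul_of_nonpos_right hfloor hlog.le
      _ = Cstar * Real.exp (-Real.log astar) *
            Real.exp (-((-Real.log astar) / (L:ℝ) ^ ((1:ℝ)/m) * (n:ℝ) ^ ((1:ℝ)/m))) := by
          rw [hβx, mul_assoc, ← Real.exp_add]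
          congr 1
          ring
      _ = Cstar * Real.exp (-Real.log astar) *
            Real.exp (-((-Real.log astar) / (L:ℝ) ^ ((1:ℝ)/m)) * (n:ℝ) ^ ((1:ℝ)/m)) := by
          rw [neg_mul]
end

section
/- Let m ≥ 1, let W ⊆ ℝ^m be a nonempty bounded convex set, and let U ⊆ ℂ^m be an open set containing the closure of W (where ℝ^m is identified with the real points of ℂ^m). Let Ĩ = [a,b] ⊂ ℝ be a compact interval and let 𝒢 : U → C(Ĩ; ℂ) be analytic, where C(Ĩ; ℂ) is the complex Banach space of continuous complex-valued functions on Ĩ with the supremum norm. Set D̃ = { 𝒢(ω) : ω ∈ W } ⊆ C(Ĩ; ℂ). Then there exist constants C > 0 and C₅ > 0 such that the entropy numbers of the closed symmetric convex hull satisfy ε_n(B₁(D̃)) ≤ C·e^{−C₅·n^{1/(m+1)}} for all integers n ≥ 1. -/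
open Metric Set Finset

/-- The closed symmetric convex hull `B₁(D)` of a set `D` in a complex normed space,
with complex coefficients of total modulus at most 1. -/
noncomputable def symmConvexHullC {X : Type*} [NormedAddCommGroup X] [NormedSpace ℂ X]
    (D : Set X) : Set X :=
  closure { f : X | ∃ (m : ℕ) (c : Fin m → ℂ) (g : Fin m → X),
    (∀ j, g j ∈ D) ∧ (∑ j, ‖c j‖) ≤ 1 ∧ f = ∑ j, c j • g j }

/-- grid covering of a complex disk -/
lemma complex_grid {T δ : ℝ} (hT : 0 < T) (hδ : 0 < δ) :
    ∃ P : Finset ℂ, (P.card : ℝ) ≤ (2 * (T / δ) + 5) ^ 2 ∧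
      ∀ z : ℂ, ‖z‖ ≤ T → ∃ p ∈ P, ‖z - p‖ ≤ δ := by
  classical
  set s : ℕ := ⌈T / δ⌉₊ with hs
  set G : Finset ℤ := Finset.Icc (-(s : ℤ) - 1) ((s : ℤ) + 1) with hG
  refine ⟨(G ×ˢ G).image (fun pq : ℤ × ℤ => (pq.1 : ℂ) * δ + (pq.2 : ℂ) * δ * Complex.I), ?_, ?_⟩
  · have hcard : (G ×ˢ G).card = G.card * G.card := Finset.card_product G G
    have hGcard : G.card = 2 * s + 3 := by
      rw [hG, Int.card_Icc]; omega
    have h1 : ((G ×ˢ G).image (fun pq : ℤ × ℤ => (pq.1 : ℂ) * δ + (pq.2 : ℂ) * δ * Complex.I)).card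
        ≤ (2 * s + 3) * (2 * s + 3) := by
      calc _ ≤ (G ×ˢ G).card := Finset.card_image_le
        _ = _ := by rw [hcard, hGcard]
    have h2 : (s : ℝ) ≤ T / δ + 1 := by
      have := Nat.ceil_lt_add_one (by positivity : (0:ℝ) ≤ T / δ)
      linarith
    calc (((G ×ˢ G).image _).card : ℝ) ≤ ((2 * s + 3) * (2 * s + 3) : ℕ) := by exact_mod_cast h1
      _ = (2 * (s:ℝ) + 3) ^ 2 := by push_cast; ring
      _ ≤ (2 * (T / δ) + 5) ^ 2 := by nlinarith [div_nonneg hT.le hδ.le]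
  · intro z hz
    set p : ℤ := round (z.re / δ) with hp
    set q : ℤ := round (z.im / δ) with hq
    have hzabs : ‖z‖ ≤ T := hz
    have hre : |z.re| ≤ T := (Complex.abs_re_le_norm z).trans hzabs
    have him : |z.im| ≤ T := (Complex.abs_im_le_norm z).trans hzabs
    have hsle : T / δ ≤ (s : ℝ) := Nat.le_ceil _
    have hbound : ∀ x : ℝ, |x| ≤ T →
        (-(s:ℤ) - 1 ≤ round (x / δ) ∧ round (x / δ) ≤ (s:ℤ) + 1) ∧ |x - round (x / δ) * δ| ≤ δ / 2 := by
      intro x hx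
      have h1 : |x / δ| ≤ T / δ := by
        rw [abs_div, abs_of_pos hδ]
        exact div_le_div_of_nonneg_right hx hδ.le
      have h2 : |x / δ - round (x / δ)| ≤ 1 / 2 := abs_sub_round _
      have h3 : |(round (x / δ) : ℝ)| ≤ (s : ℝ) + 1 := by
        have h4 : |(round (x / δ) : ℝ)| - |x / δ| ≤ |(round (x / δ) : ℝ) - x / δ| :=
          abs_sub_abs_le_abs_sub _ _
        rw [abs_sub_comm] at h4
        linarith [h1.trans hsle]
      constructor
      · constructor
        · have : -((s : ℝ) + 1) ≤ (round (x / δ) : ℝ) := (neg_le_of_abs_le h3)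
          exact_mod_cast (by push_cast; linarith : ((-(s:ℤ) - 1 : ℤ) : ℝ) ≤ (round (x / δ) : ℝ))
        · have : (round (x / δ) : ℝ) ≤ (s : ℝ) + 1 := le_of_abs_le h3
          exact_mod_cast (by push_cast; linarith : ((round (x / δ) : ℝ)) ≤ (((s:ℤ) + 1 : ℤ) : ℝ))
      · have heq : x - round (x / δ) * δ = δ * (x / δ - round (x / δ)) := by
          field_simp
        rw [heq, abs_mul, abs_of_pos hδ]
        calc δ * |x / δ - (round (x / δ) : ℝ)| ≤ δ * (1 / 2) := by
              exact mul_le_mul_of_nonneg_left h2 hδ.le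
          _ = δ / 2 := by ring
    obtain ⟨⟨hp1, hp2⟩, hpe⟩ := hbound z.re hre
    obtain ⟨⟨hq1, hq2⟩, hqe⟩ := hbound z.im him
    refine ⟨(p : ℂ) * δ + (q : ℂ) * δ * Complex.I, Finset.mem_image.2
      ⟨(p, q), Finset.mem_product.2 ⟨Finset.mem_Icc.2 ⟨hp1, hp2⟩, Finset.mem_Icc.2 ⟨hq1, hq2⟩⟩, rfl⟩, ?_⟩
    have hrepart : (z - ((p : ℂ) * δ + (q : ℂ) * δ * Complex.I)).re = z.re - p * δ := by simp
    have himpart : (z - ((p : ℂ) * δ + (q : ℂ) * δ * Complex.I)).im = z.im - q * δ := by simp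
    calc ‖z - ((p : ℂ) * δ + (q : ℂ) * δ * Complex.I)‖
        ≤ |(z - ((p : ℂ) * δ + (q : ℂ) * δ * Complex.I)).re| +
          |(z - ((p : ℂ) * δ + (q : ℂ) * δ * Complex.I)).im| := by
          exact Complex.norm_le_abs_re_add_abs_im _
      _ ≤ δ / 2 + δ / 2 := by
          rw [hrepart, himpart]
          exact add_le_add hpe hqe
      _ = δ := by ring


variable {X : Type*} [NormedAddCommGroup X] [NormedSpace ℂ X]

/-- number of times `σ` hits `t` -/
def cntf {j m : ℕ} (σ : Fin j → Fin m) (t : Fin m) : ℕ :=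
  (Finset.univ.filter (fun l => σ l = t)).card

/-- monomial coefficient vectors of the partial sums of a power series -/
noncomputable def coefVec {m : ℕ} (p : FormalMultilinearSeries ℂ (Fin m → ℂ) X)
    (k : ℕ) (α : Fin m → Fin k) : X :=
  ∑ j ∈ Finset.range k,
    ∑ σ ∈ Finset.univ.filter (fun σ : Fin j → Fin m => ∀ t, cntf σ t = (α t : ℕ)),
      p j (fun l => Pi.single (σ l) (1:ℂ))

lemma single_eq (m : ℕ) (t : Fin m) :
    (Pi.single t (1:ℂ)) = fun j => if t = j then (1:ℂ) else 0 := by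
  funext j
  by_cases h : t = j
  · subst h; simp
  · rw [Pi.single_eq_of_ne (Ne.symm h)]; simp [h]

lemma term_expand {m j : ℕ} (p : ContinuousMultilinearMap ℂ (fun _ : Fin j => (Fin m → ℂ)) X)
    (y : Fin m → ℂ) :
    p (fun _ => y) = ∑ σ : Fin j → Fin m, (∏ l, y (σ l)) • p (fun l => Pi.single (σ l) (1:ℂ)) := by
  have hy : y = ∑ t : Fin m, y t • (Pi.single t (1:ℂ) : Fin m → ℂ) := by
    funext j
    rw [Finset.sum_apply]
    simp [Pi.single_apply]
  calc p (fun _ => y) = p (fun _ => ∑ t : Fin m, y t • (Pi.single t (1:ℂ) : Fin m → ℂ)) := by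
        rw [← hy]
    _ = ∑ σ : Fin j → Fin m, p (fun l => y (σ l) • (Pi.single (σ l) (1:ℂ) : Fin m → ℂ)) :=
        p.toMultilinearMap.map_sum (fun _ t => y t • (Pi.single t (1:ℂ) : Fin m → ℂ))
    _ = ∑ σ : Fin j → Fin m, (∏ l, y (σ l)) • p (fun l => Pi.single (σ l) (1:ℂ)) := by
        refine Finset.sum_congr rfl (fun σ _ => ?_)
        exact p.toMultilinearMap.map_smul_univ (fun l => y (σ l)) (fun l => Pi.single (σ l) 1)

lemma monomial_group {m j : ℕ} (y : Fin m → ℂ) (σ : Fin j → Fin m) :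
    (∏ l, y (σ l)) = ∏ t, y t ^ cntf σ t := by
  classical
  rw [← Finset.prod_fiberwise_of_maps_to (fun l _ => Finset.mem_univ (σ l)) (fun l => y (σ l))]
  refine Finset.prod_congr rfl (fun t _ => ?_)
  rw [cntf, ← Finset.prod_const]
  refine Finset.prod_congr rfl (fun l hl => ?_)
  rw [(Finset.mem_filter.1 hl).2]

theorem partialSum_repr {m : ℕ} (p : FormalMultilinearSeries ℂ (Fin m → ℂ) X)
    (k : ℕ) (hk : 1 ≤ k) (y : Fin m → ℂ) :
    p.partialSum k y = ∑ α : Fin m → Fin k, (∏ t, y t ^ (α t : ℕ)) • coefVec p k α := by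
  classical
  rw [FormalMultilinearSeries.partialSum]
  have step1 : ∀ j ∈ Finset.range k, p j (fun _ => y) =
      ∑ α : Fin m → Fin k, (∏ t, y t ^ (α t : ℕ)) •
        ∑ σ ∈ Finset.univ.filter (fun σ : Fin j → Fin m => ∀ t, cntf σ t = (α t : ℕ)),
          p j (fun l => Pi.single (σ l) (1:ℂ)) := by
    intro j hj
    have hjk : j < k := Finset.mem_range.1 hj
    have hcnt : ∀ σ : Fin j → Fin m, ∀ t, cntf σ t < k := by
      intro σ t
      calc cntf σ t ≤ Finset.univ.card := Finset.card_filter_le _ _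
        _ = j := by simp
        _ < k := hjk
    set g : (Fin j → Fin m) → (Fin m → Fin k) := fun σ t => ⟨cntf σ t, hcnt σ t⟩ with hg
    rw [term_expand]
    rw [← Finset.sum_fiberwise Finset.univ g
      (fun σ => (∏ l, y (σ l)) • p j (fun l => Pi.single (σ l) (1:ℂ)))]
    refine Finset.sum_congr rfl (fun α _ => ?_)
    rw [Finset.smul_sum]
    have hfilter : Finset.univ.filter (fun σ : Fin j → Fin m => g σ = α) =
        Finset.univ.filter (fun σ : Fin j → Fin m => ∀ t, cntf σ t = (α t : ℕ)) := by
      refine Finset.filter_congr (fun σ _ => ?_)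
      constructor
      · intro h t; rw [← h]
      · intro h
        funext t
        exact Fin.ext (h t)
    rw [hfilter]
    refine Finset.sum_congr rfl (fun σ hσ => ?_)
    have hσ' := (Finset.mem_filter.1 hσ).2
    rw [monomial_group]
    congr 1
    exact Finset.prod_congr rfl (fun t _ => by rw [hσ' t])
  rw [Finset.sum_congr rfl step1, Finset.sum_comm]
  refine Finset.sum_congr rfl (fun α _ => ?_)
  rw [coefVec, Finset.smul_sum]

lemma coefVec_norm_le {m : ℕ} (p : FormalMultilinearSeries ℂ (Fin m → ℂ) X)
    {Cc ρ : ℝ} (hCc : 0 ≤ Cc) (hρ : 1 ≤ ρ) (hp : ∀ j, ‖p j‖ ≤ Cc * ρ ^ j)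
    (k : ℕ) (α : Fin m → Fin k) :
    ‖coefVec p k α‖ ≤ Cc * (2 * (m + 1) * ρ) ^ k := by
  classical
  have hterm : ∀ j : ℕ, j < k → ∀ σ : Fin j → Fin m,
      ‖p j (fun l => Pi.single (σ l) (1:ℂ))‖ ≤ Cc * ρ ^ j := by
    intro j hj σ
    calc ‖p j (fun l => Pi.single (σ l) (1:ℂ))‖
        ≤ ‖p j‖ * ∏ l : Fin j, ‖(Pi.single (σ l) (1:ℂ) : Fin m → ℂ)‖ :=
          (p j).le_opNorm _
      _ = ‖p j‖ := by
          simp [Pi.norm_single]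
      _ ≤ Cc * ρ ^ j := hp j
  have hbase : (1:ℝ) ≤ (m + 1) * ρ := by
    have : (1:ℝ) ≤ (m:ℝ) + 1 := by
      have := Nat.cast_nonneg (α := ℝ) m
      linarith
    nlinarith
  calc ‖coefVec p k α‖
      ≤ ∑ j ∈ Finset.range k,
          ‖∑ σ ∈ Finset.univ.filter (fun σ : Fin j → Fin m => ∀ t, cntf σ t = (α t : ℕ)),
            p j (fun l => Pi.single (σ l) (1:ℂ))‖ := norm_sum_le _ _
    _ ≤ ∑ j ∈ Finset.range k, Cc * ((m + 1) * ρ) ^ j := by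
        refine Finset.sum_le_sum (fun j hj => ?_)
        have hjk := Finset.mem_range.1 hj
        calc ‖∑ σ ∈ Finset.univ.filter (fun σ : Fin j → Fin m => ∀ t, cntf σ t = (α t : ℕ)),
              p j (fun l => Pi.single (σ l) (1:ℂ))‖
            ≤ ∑ σ ∈ Finset.univ.filter (fun σ : Fin j → Fin m => ∀ t, cntf σ t = (α t : ℕ)),
              ‖p j (fun l => Pi.single (σ l) (1:ℂ))‖ := norm_sum_le _ _
          _ ≤ ∑ _σ ∈ Finset.univ.filter (fun σ : Fin j → Fin m => ∀ t, cntf σ t = (α t : ℕ)),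
              (Cc * ρ ^ j) := Finset.sum_le_sum (fun σ _ => hterm j hjk σ)
          _ = (Finset.univ.filter (fun σ : Fin j → Fin m => ∀ t, cntf σ t = (α t : ℕ))).card
              * (Cc * ρ ^ j) := by rw [Finset.sum_const, nsmul_eq_mul]
          _ ≤ (m:ℝ) ^ j * (Cc * ρ ^ j) := by
              refine mul_le_mul_of_nonneg_right ?_ (by positivity)
              have h1 : (Finset.univ.filter
                  (fun σ : Fin j → Fin m => ∀ t, cntf σ t = (α t : ℕ))).card
                  ≤ Fintype.card (Fin j → Fin m) := by
                calc _ ≤ Finset.univ.card := Finset.card_filter_le _ _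
                  _ = _ := rfl
              calc ((Finset.univ.filter (fun σ : Fin j → Fin m =>
                    ∀ t, cntf σ t = (α t : ℕ))).card : ℝ)
                  ≤ (Fintype.card (Fin j → Fin m) : ℝ) := by exact_mod_cast h1
                _ = (m:ℝ) ^ j := by simp [Fintype.card_fun]
          _ ≤ Cc * ((m + 1) * ρ) ^ j := by
              rw [mul_pow]
              have h3 : (m:ℝ) ^ j ≤ ((m:ℝ) + 1) ^ j :=
                pow_le_pow_left₀ (by positivity) (by linarith) j
              have hρ0 : (0:ℝ) ≤ ρ := le_trans zero_le_one hρ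
              calc (m:ℝ) ^ j * (Cc * ρ ^ j) ≤ ((m:ℝ) + 1) ^ j * (Cc * ρ ^ j) :=
                    mul_le_mul_of_nonneg_right h3 (by positivity)
                _ = Cc * (((m:ℝ) + 1) ^ j * ρ ^ j) := by ring
    _ ≤ ∑ _j ∈ Finset.range k, Cc * ((m + 1) * ρ) ^ k := by
        refine Finset.sum_le_sum (fun j hj => ?_)
        have h4 := pow_le_pow_right₀ hbase (Finset.mem_range.1 hj).le
        exact mul_le_mul_of_nonneg_left h4 hCc
    _ = (k : ℝ) * (Cc * ((m + 1) * ρ) ^ k) := by rw [Finset.sum_const, nsmul_eq_mul]; simp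
    _ ≤ Cc * (2 * (m + 1) * ρ) ^ k := by
        have hk2 : (k : ℝ) ≤ 2 ^ k := by exact_mod_cast (Nat.lt_two_pow_self (n := k)).le
        have h2 : (2 * (m + 1) * ρ : ℝ) ^ k = 2 ^ k * ((m + 1) * ρ) ^ k := by
          rw [← mul_pow]; ring_nf
        rw [h2]
        have hρ0 : (0:ℝ) ≤ ρ := le_trans zero_le_one hρ
        calc (k:ℝ) * (Cc * ((m + 1) * ρ) ^ k) ≤ 2 ^ k * (Cc * ((m + 1) * ρ) ^ k) :=
              mul_le_mul_of_nonneg_right hk2 (by positivity)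
          _ = Cc * (2 ^ k * ((m + 1) * ρ) ^ k) := by ring


lemma entropyNum_le_of_cover {X : Type*} [NormedAddCommGroup X] {F : Set X} {n : ℕ} {ε r : ℝ}
    (hε : 0 < ε) (hεr : ε ≤ r) (T : Finset X) (hT : T.card ≤ 2 ^ n)
    (hcov : F ⊆ ⋃ y ∈ T, Metric.closedBall y ε) : entropyNum F n ≤ r := by
  have h1 : entropyNum F n ≤ ε := by
    apply csInf_le
    · exact ⟨0, fun x hx => le_of_lt hx.1⟩
    · exact ⟨hε, T, hT, hcov⟩
  linarith


lemma cover_step (D : Set X) {m A : ℕ} {Q Cb aθ : ℝ} (hQ : 1 ≤ Q)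
    (haθ0 : 0 < aθ) (haθ1 : aθ < 1) (hCb : 0 < Cb) {k : ℕ} (hk : 1 ≤ k)
    (ι : Type) [Fintype ι] (c : ι → X) (hcard : Fintype.card ι ≤ A * k ^ m)
    (hcnorm : ∀ i, ‖c i‖ ≤ Q ^ (k+1))
    (happ : ∀ g ∈ D, ∃ t : ι → ℂ, (∀ i, ‖t i‖ ≤ Q ^ (k+1)) ∧
      ‖g - ∑ i, t i • c i‖ ≤ Cb * aθ ^ k) :
    ∃ Y : Finset X, (Y.card : ℝ) ≤ ((7 * (Q^2/aθ)) ^ (4 * A)) ^ (k ^ (m+1)) ∧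
      symmConvexHullC D ⊆ ⋃ y ∈ Y, Metric.closedBall y ((Cb + (A:ℝ) * (k:ℝ)^m) * aθ ^ k) := by
  classical
  have hQ0 : (0:ℝ) < Q := lt_of_lt_of_le one_pos hQ
  set T : ℝ := Q ^ (k+1) with hT
  set δ : ℝ := aθ ^ k / Q ^ (k+1) with hδ
  have hT0 : 0 < T := pow_pos hQ0 _
  have hδ0 : 0 < δ := div_pos (pow_pos haθ0 _) (pow_pos hQ0 _)
  obtain ⟨P, hPcard, hPcover⟩ := complex_grid hT0 hδ0
  set Q₂ : ℝ := Q ^ 2 / aθ with hQ₂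
  have hQ₂1 : 1 ≤ Q₂ := by
    rw [hQ₂, le_div_iff₀ haθ0]
    nlinarith
  -- counting
  have hTδ : T / δ ≤ Q₂ ^ (k+1) := by
    have h1 : T / δ = Q ^ (2*(k+1)) / aθ ^ k := by
      rw [hT, hδ]
      field_simp
      ring
    have h2 : Q₂ ^ (k+1) = Q ^ (2*(k+1)) / aθ ^ (k+1) := by
      rw [hQ₂, div_pow, ← pow_mul]
    rw [h1, h2]
    apply div_le_div_of_nonneg_left (by positivity) (by positivity)
    exact pow_le_pow_of_le_one haθ0.le haθ1.le (Nat.le_succ k)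
  have hPcard' : (P.card : ℝ) ≤ (7 * Q₂) ^ (2*(k+1)) := by
    have h1 : (2 * (T/δ) + 5) ≤ 7 * Q₂ ^ (k+1) := by
      have : (1:ℝ) ≤ Q₂ ^ (k+1) := one_le_pow₀ hQ₂1
      nlinarith [div_nonneg hT0.le hδ0.le]
    calc (P.card : ℝ) ≤ (2 * (T/δ) + 5)^2 := hPcard
      _ ≤ (7 * Q₂ ^ (k+1)) ^ 2 := by
          apply pow_le_pow_left₀ (by positivity) h1
      _ ≤ ((7 * Q₂) ^ (k+1)) ^ 2 := by
          apply pow_le_pow_left₀ (by positivity)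
          rw [mul_pow]
          have h7 : (7:ℝ) ≤ 7 ^ (k+1) := by
            calc (7:ℝ) = 7^1 := (pow_one 7).symm
              _ ≤ 7^(k+1) := pow_le_pow_right₀ (by norm_num) (by omega)
          nlinarith [pow_pos (lt_of_lt_of_le one_pos hQ₂1) (k+1),
            pow_nonneg (by linarith : (0:ℝ) ≤ Q₂) (k+1)]
      _ = (7 * Q₂) ^ (2*(k+1)) := by rw [← pow_mul]; ring_nf
  set Y : Finset X := (Fintype.piFinset (fun _ : ι => P)).image (fun u => ∑ i, u i • c i) with hY
  have hYcard : (Y.card : ℝ) ≤ ((7 * (Q^2/aθ)) ^ (4 * A)) ^ (k ^ (m+1)) := by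
    have h1 : Y.card ≤ P.card ^ (Fintype.card ι) := by
      calc Y.card ≤ (Fintype.piFinset (fun _ : ι => P)).card := Finset.card_image_le
        _ = ∏ _i : ι, P.card := Fintype.card_piFinset _
        _ = P.card ^ (Fintype.card ι) := by rw [Finset.prod_const, Finset.card_univ]
    have h7Q₂ : (1:ℝ) ≤ 7 * Q₂ := by nlinarith
    calc (Y.card : ℝ) ≤ (P.card : ℝ) ^ (Fintype.card ι) := by exact_mod_cast h1
      _ ≤ ((7 * Q₂) ^ (2*(k+1))) ^ (Fintype.card ι) :=
          pow_le_pow_left₀ (by positivity) hPcard' _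
      _ = (7 * Q₂) ^ (2*(k+1) * Fintype.card ι) := by rw [← pow_mul]
      _ ≤ (7 * Q₂) ^ (4 * A * k ^ (m+1)) := by
          apply pow_le_pow_right₀ h7Q₂
          have h2 : 2*(k+1) ≤ 4*k := by omega
          calc 2*(k+1) * Fintype.card ι ≤ 4*k * (A * k^m) :=
                Nat.mul_le_mul h2 hcard
            _ = 4 * A * k ^ (m+1) := by ring
      _ = ((7 * (Q^2/aθ)) ^ (4 * A)) ^ (k ^ (m+1)) := by rw [← pow_mul, hQ₂]
  refine ⟨Y, hYcard, ?_⟩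
  -- covering
  rw [symmConvexHullC]
  apply closure_minimal ?_ ?_
  swap
  · exact Set.Finite.isClosed_biUnion Y.finite_toSet (fun y _ => Metric.isClosed_closedBall)
  intro f hf
  obtain ⟨mm, cc, gg, hgg, hcc, rfl⟩ := hf
  choose t ht hterr using fun j => happ (gg j) (hgg j)
  set u : ι → ℂ := fun i => ∑ j, cc j * t j i with hu
  have hccj : ∀ j, ‖cc j‖ ≤ 1 := by
    intro j
    calc ‖cc j‖ ≤ ∑ j', ‖cc j'‖ :=
          Finset.single_le_sum (fun j' _ => norm_nonneg _) (Finset.mem_univ j)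
      _ ≤ 1 := hcc
  have hccnn : ∀ j, (0:ℝ) ≤ ‖cc j‖ := fun j => norm_nonneg _
  have hui : ∀ i, ‖u i‖ ≤ T := by
    intro i
    calc ‖u i‖ ≤ ∑ j, ‖cc j * t j i‖ := norm_sum_le _ _
      _ = ∑ j, ‖cc j‖ * ‖t j i‖ := by simp [norm_mul]
      _ ≤ ∑ j, ‖cc j‖ * T := Finset.sum_le_sum (fun j _ =>
          mul_le_mul_of_nonneg_left (ht j i) (hccnn j))
      _ = (∑ j, ‖cc j‖) * T := by rw [← Finset.sum_mul]
      _ ≤ 1 * T := mul_le_mul_of_nonneg_right hcc hT0.le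
      _ = T := one_mul T
  choose uh huhP huherr using fun i => hPcover (u i) (hui i)
  refine Set.mem_iUnion₂.2 ⟨∑ i, uh i • c i, ?_, ?_⟩
  · exact Finset.mem_coe.2 (Finset.mem_image.2 ⟨uh, Fintype.mem_piFinset.2 (fun i => huhP i), rfl⟩)
  · rw [Metric.mem_closedBall, dist_eq_norm]
    have key : (∑ j, cc j • gg j) - (∑ i, uh i • c i) =
        (∑ j, cc j • (gg j - ∑ i, t j i • c i)) + (∑ i, (u i - uh i) • c i) := by
      have h1 : ∑ i, u i • c i = ∑ j, cc j • ∑ i, t j i • c i := by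
        calc ∑ i, u i • c i = ∑ i, ∑ j, (cc j * t j i) • c i := by
              refine Finset.sum_congr rfl fun i _ => ?_
              rw [hu, Finset.sum_smul]
          _ = ∑ j, ∑ i, (cc j * t j i) • c i := Finset.sum_comm
          _ = ∑ j, cc j • ∑ i, t j i • c i := by
              refine Finset.sum_congr rfl fun j _ => ?_
              rw [Finset.smul_sum]
              exact Finset.sum_congr rfl fun i _ => mul_smul _ _ _
      have h2 : (∑ j, cc j • gg j) - ∑ i, u i • c i
          = ∑ j, cc j • (gg j - ∑ i, t j i • c i) := by
        rw [h1, ← Finset.sum_sub_distrib]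
        exact Finset.sum_congr rfl fun j _ => (smul_sub _ _ _).symm
      have h3 : (∑ i, u i • c i) - ∑ i, uh i • c i = ∑ i, (u i - uh i) • c i := by
        rw [← Finset.sum_sub_distrib]
        exact Finset.sum_congr rfl fun i _ => (sub_smul _ _ _).symm
      rw [← h2, ← h3]
      abel
    rw [key]
    have hbound1 : ‖∑ j, cc j • (gg j - ∑ i, t j i • c i)‖ ≤ Cb * aθ ^ k := by
      calc ‖∑ j, cc j • (gg j - ∑ i, t j i • c i)‖
          ≤ ∑ j, ‖cc j‖ * ‖gg j - ∑ i, t j i • c i‖ := by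
            refine (norm_sum_le _ _).trans (le_of_eq ?_)
            simp [norm_smul]
        _ ≤ ∑ j, ‖cc j‖ * (Cb * aθ ^ k) := Finset.sum_le_sum (fun j _ =>
            mul_le_mul_of_nonneg_left (hterr j) (hccnn j))
        _ = (∑ j, ‖cc j‖) * (Cb * aθ ^ k) := by rw [← Finset.sum_mul]
        _ ≤ 1 * (Cb * aθ ^ k) := mul_le_mul_of_nonneg_right hcc (by positivity)
        _ = Cb * aθ ^ k := one_mul _
    have hbound2 : ‖∑ i, (u i - uh i) • c i‖ ≤ (A:ℝ) * (k:ℝ)^m * aθ ^ k := by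
      calc ‖∑ i, (u i - uh i) • c i‖ ≤ ∑ i, ‖u i - uh i‖ * ‖c i‖ := by
            refine (norm_sum_le _ _).trans (le_of_eq ?_)
            simp [norm_smul]
        _ ≤ ∑ _i : ι, δ * T := Finset.sum_le_sum (fun i _ =>
            mul_le_mul (huherr i) (hcnorm i) (norm_nonneg _) hδ0.le)
        _ = (Fintype.card ι : ℝ) * (δ * T) := by
            rw [Finset.sum_const, nsmul_eq_mul, Finset.card_univ]
        _ = (Fintype.card ι : ℝ) * aθ ^ k := by
            congr 1
            rw [hδ, hT]
            field_simp
        _ ≤ (A:ℝ) * (k:ℝ)^m * aθ ^ k := by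
            apply mul_le_mul_of_nonneg_right ?_ (by positivity)
            calc (Fintype.card ι : ℝ) ≤ ((A * k ^ m : ℕ) : ℝ) := by exact_mod_cast hcard
              _ = (A:ℝ) * (k:ℝ)^m := by push_cast; ring
    calc ‖(∑ j, cc j • (gg j - ∑ i, t j i • c i)) + (∑ i, (u i - uh i) • c i)‖
        ≤ ‖∑ j, cc j • (gg j - ∑ i, t j i • c i)‖ + ‖∑ i, (u i - uh i) • c i‖ := norm_add_le _ _
      _ ≤ Cb * aθ ^ k + (A:ℝ) * (k:ℝ)^m * aθ ^ k := add_le_add hbound1 hbound2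
      _ = (Cb + (A:ℝ) * (k:ℝ)^m) * aθ ^ k := by ring


-- dummy
theorem entropy_of_approx (D : Set X) (m A : ℕ) (hA : 1 ≤ A) (Q Cb aθ : ℝ) (hQ : 1 ≤ Q)
    (haθ0 : 0 < aθ) (haθ1 : aθ < 1) (hCb : 0 < Cb)
    (happrox : ∀ k : ℕ, 1 ≤ k → ∃ (ι : Type) (_ : Fintype ι) (c : ι → X),
       Fintype.card ι ≤ A * k ^ m ∧ (∀ i, ‖c i‖ ≤ Q ^ (k+1)) ∧
       ∀ g ∈ D, ∃ t : ι → ℂ, (∀ i, ‖t i‖ ≤ Q ^ (k+1)) ∧ ‖g - ∑ i, t i • c i‖ ≤ Cb * aθ ^ k)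
    (RD : ℝ) (hRD : ∀ g ∈ D, ‖g‖ ≤ RD) :
    ∃ C > (0:ℝ), ∃ C₅ > (0:ℝ), ∀ n : ℕ, 1 ≤ n →
      entropyNum (symmConvexHullC D) n ≤ C * Real.exp (-C₅ * (n:ℝ) ^ ((1:ℝ)/(m+1))) := by
  classical
  -- global bound on the hull
  set RD' : ℝ := max RD 0 + 1 with hRD'
  have hRD'0 : 0 < RD' := by positivity
  have hhull_bdd : symmConvexHullC D ⊆ Metric.closedBall 0 RD' := by
    rw [symmConvexHullC]
    apply closure_minimal ?_ Metric.isClosed_closedBall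
    rintro f ⟨mm, cc, gg, hgg, hcc, rfl⟩
    rw [Metric.mem_closedBall, dist_zero_right]
    calc ‖∑ j, cc j • gg j‖ ≤ ∑ j, ‖cc j‖ * ‖gg j‖ := by
          refine (norm_sum_le _ _).trans (le_of_eq ?_); simp [norm_smul]
      _ ≤ ∑ j, ‖cc j‖ * max RD 0 := Finset.sum_le_sum (fun j _ =>
          mul_le_mul_of_nonneg_left ((hRD _ (hgg j)).trans (le_max_left _ _)) (norm_nonneg _))
      _ = (∑ j, ‖cc j‖) * max RD 0 := by rw [← Finset.sum_mul]
      _ ≤ 1 * max RD 0 := mul_le_mul_of_nonneg_right hcc (le_max_right _ _)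
      _ ≤ RD' := by rw [one_mul, hRD']; linarith
  have hfallback : ∀ n : ℕ, entropyNum (symmConvexHullC D) n ≤ RD' := by
    intro n
    refine entropyNum_le_of_cover hRD'0 le_rfl {0} ?_ ?_
    · calc ({0} : Finset X).card = 1 := Finset.card_singleton 0
        _ ≤ 2 ^ n := Nat.one_le_two_pow
    · intro f hf
      exact Set.mem_iUnion₂.2 ⟨0, by simp, hhull_bdd hf⟩
  -- consolidated radius bound
  set bb : ℝ := Real.sqrt aθ with hbb
  have hbb0 : 0 < bb := Real.sqrt_pos.2 haθ0
  have hbb1 : bb < 1 := by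
    rw [hbb, show (1:ℝ) = Real.sqrt 1 by rw [Real.sqrt_one]]
    exact Real.sqrt_lt_sqrt haθ0.le haθ1
  have haθbb : aθ = bb * bb := (Real.mul_self_sqrt haθ0.le).symm
  obtain ⟨Cp, hCp⟩ : ∃ Cp : ℝ, ∀ k : ℕ, (k:ℝ)^m * bb ^ k ≤ Cp := by
    obtain ⟨Cp, hCp⟩ := (tendsto_pow_const_mul_const_pow_of_lt_one m hbb0.le hbb1).bddAbove_range
    exact ⟨Cp, fun k => hCp ⟨k, rfl⟩⟩
  set C₃ : ℝ := Cb + (A:ℝ) * Cp + 1 with hC₃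
  have hCp0 : 0 ≤ Cp := le_trans (by norm_num [pow_zero]) (hCp 0)
  have hC₃0 : 0 < C₃ := by positivity
  have hradius : ∀ k : ℕ, (Cb + (A:ℝ) * (k:ℝ)^m) * aθ ^ k ≤ C₃ * bb ^ k := by
    intro k
    have hbbk : bb ^ k ≤ 1 := pow_le_one₀ hbb0.le hbb1.le
    have hbbk0 : 0 ≤ bb ^ k := pow_nonneg hbb0.le k
    have h1 : aθ ^ k = bb ^ k * bb ^ k := by rw [haθbb, mul_pow]
    rw [h1]
    have h2 : (Cb + (A:ℝ) * (k:ℝ)^m) * bb ^ k ≤ C₃ := by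
      have h3 : Cb * bb ^ k ≤ Cb := by nlinarith
      have h4 : (A:ℝ) * (k:ℝ)^m * bb ^ k ≤ (A:ℝ) * Cp := by
        have := hCp k
        have hA0 : (0:ℝ) ≤ (A:ℝ) := Nat.cast_nonneg A
        calc (A:ℝ) * (k:ℝ)^m * bb ^ k = (A:ℝ) * ((k:ℝ)^m * bb ^ k) := by ring
          _ ≤ (A:ℝ) * Cp := mul_le_mul_of_nonneg_left this hA0
      calc (Cb + (A:ℝ) * (k:ℝ)^m) * bb ^ k = Cb * bb ^ k + (A:ℝ) * (k:ℝ)^m * bb ^ k := by ring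
        _ ≤ Cb + (A:ℝ) * Cp := add_le_add h3 h4
        _ ≤ C₃ := by rw [hC₃]; linarith
    calc (Cb + (A:ℝ) * (k:ℝ)^m) * (bb ^ k * bb ^ k)
        = ((Cb + (A:ℝ) * (k:ℝ)^m) * bb ^ k) * bb ^ k := by ring
      _ ≤ C₃ * bb ^ k := mul_le_mul_of_nonneg_right h2 hbbk0
  -- counting constant
  set G : ℝ := (7 * (Q^2/aθ)) ^ (4 * A) with hG
  have hG1 : 1 ≤ G := by
    apply one_le_pow₀
    have : 1 ≤ Q^2/aθ := by
      rw [le_div_iff₀ haθ0]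
      nlinarith
    linarith
  set β : ℝ := max 1 (Real.logb 2 G) with hβ
  have hβ1 : 1 ≤ β := le_max_left _ _
  have hβ0 : 0 < β := lt_of_lt_of_le one_pos hβ1
  have hcount : ∀ n k : ℕ, ((k:ℝ)^(m+1) ≤ (n:ℝ)/β) → G ^ (k ^ (m+1)) ≤ (2:ℝ) ^ n := by
    intro n k hkn
    have hKcast : ((k ^ (m+1) : ℕ) : ℝ) = (k:ℝ)^(m+1) := by push_cast; ring
    have h1 : G ^ (k ^ (m+1)) = (2:ℝ) ^ (Real.logb 2 G * ((k ^ (m+1) : ℕ) : ℝ)) := by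
      rw [Real.rpow_mul (by norm_num), Real.rpow_natCast, Real.rpow_logb (by norm_num)
        (by norm_num) (lt_of_lt_of_le one_pos hG1)]
    rw [h1, show ((2:ℝ) ^ n) = (2:ℝ) ^ ((n:ℕ):ℝ) by rw [Real.rpow_natCast]]
    apply Real.rpow_le_rpow_of_exponent_le (by norm_num)
    have hlogb : Real.logb 2 G ≤ β := le_max_right _ _
    have hlogb0 : 0 ≤ Real.logb 2 G := Real.logb_nonneg (by norm_num) hG1
    calc Real.logb 2 G * ((k ^ (m+1) : ℕ) : ℝ) ≤ β * ((k ^ (m+1) : ℕ) : ℝ) :=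
          mul_le_mul_of_nonneg_right hlogb (Nat.cast_nonneg _)
      _ ≤ β * ((n:ℝ)/β) := by
          apply mul_le_mul_of_nonneg_left ?_ hβ0.le
          rw [hKcast]; exact hkn
      _ = (n:ℝ) := by field_simp
  -- final constants
  set c₀ : ℝ := -Real.log bb with hc₀
  have hc₀0 : 0 < c₀ := by
    rw [hc₀, neg_pos]
    exact Real.log_neg hbb0 hbb1
  set C₅ : ℝ := c₀ / β ^ ((1:ℝ)/(m+1)) with hC₅
  have hβr0 : 0 < β ^ ((1:ℝ)/(m+1)) := Real.rpow_pos_of_pos hβ0 _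
  have hC₅0 : 0 < C₅ := div_pos hc₀0 hβr0
  set C : ℝ := (C₃ + RD') * Real.exp c₀ with hC
  have hC0 : 0 < C := by positivity
  refine ⟨C, hC0, C₅, hC₅0, ?_⟩
  intro n hn
  set x : ℝ := ((n:ℝ)/β) ^ ((1:ℝ)/(m+1)) with hx
  have hnβ0 : 0 ≤ (n:ℝ)/β := div_nonneg (Nat.cast_nonneg n) hβ0.le
  have hx0 : 0 ≤ x := Real.rpow_nonneg hnβ0 _
  have hxpow : x ^ (m+1) = (n:ℝ)/β := by
    rw [hx, ← Real.rpow_natCast (((n:ℝ)/β) ^ ((1:ℝ)/(m+1))) (m+1), ← Real.rpow_mul hnβ0]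
    have hone : (1:ℝ)/(m+1) * ((m+1 : ℕ) : ℝ) = 1 := by
      push_cast
      field_simp
    rw [hone, Real.rpow_one]
  have hxC₅ : c₀ * x = C₅ * (n:ℝ) ^ ((1:ℝ)/(m+1)) := by
    rw [hx, Real.div_rpow (Nat.cast_nonneg n) hβ0.le, hC₅]
    field_simp
  set k : ℕ := ⌊x⌋₊ with hk
  by_cases hk1 : 1 ≤ k
  · -- main case
    obtain ⟨ι, instι, c, hcard, hcnorm, happ⟩ := happrox k hk1
    letI := instι
    obtain ⟨Y, hYcard, hYcover⟩ := cover_step D hQ haθ0 haθ1 hCb hk1 ι c hcard hcnorm happ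
    have hkx : (k:ℝ) ≤ x := Nat.floor_le hx0
    have hkn : (k:ℝ)^(m+1) ≤ (n:ℝ)/β := by
      rw [← hxpow]
      exact pow_le_pow_left₀ (Nat.cast_nonneg k) hkx _
    have hYcard2 : Y.card ≤ 2 ^ n := by
      have := hYcard.trans (hcount n k hkn)
      exact_mod_cast this
    have hεpos : 0 < (Cb + (A:ℝ) * (k:ℝ)^m) * aθ ^ k := by positivity
    have hstep := entropyNum_le_of_cover hεpos (hradius k) Y hYcard2 hYcover
    -- C₃ * bb^k ≤ C * exp(-C₅ n^{1/(m+1)})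
    have hbbk : bb ^ k = Real.exp (-(c₀ * k)) := by
      rw [hc₀]
      rw [show -(-Real.log bb * (k:ℝ)) = (k:ℝ) * Real.log bb by ring]
      rw [Real.exp_nat_mul, Real.exp_log hbb0]
    have hkx1 : x - 1 < (k:ℝ) := Nat.sub_one_lt_floor x
    have hexp : Real.exp (-(c₀ * k)) ≤ Real.exp c₀ * Real.exp (-C₅ * (n:ℝ) ^ ((1:ℝ)/(m+1))) := by
      rw [← Real.exp_add]
      apply Real.exp_le_exp.2
      have : -(c₀ * k) ≤ -(c₀ * (x - 1)) := by
        apply neg_le_neg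
        exact mul_le_mul_of_nonneg_left hkx1.le hc₀0.le
      calc -(c₀ * k) ≤ -(c₀ * (x-1)) := this
        _ = c₀ + -(c₀ * x) := by ring
        _ = c₀ + -C₅ * (n:ℝ) ^ ((1:ℝ)/(m+1)) := by rw [hxC₅]; ring
    calc entropyNum (symmConvexHullC D) n ≤ C₃ * bb ^ k := hstep
      _ = C₃ * Real.exp (-(c₀ * k)) := by rw [hbbk]
      _ ≤ C₃ * (Real.exp c₀ * Real.exp (-C₅ * (n:ℝ) ^ ((1:ℝ)/(m+1)))) :=
          mul_le_mul_of_nonneg_left hexp hC₃0.le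
      _ ≤ (C₃ + RD') * (Real.exp c₀ * Real.exp (-C₅ * (n:ℝ) ^ ((1:ℝ)/(m+1)))) :=
          mul_le_mul_of_nonneg_right (by linarith) (by positivity)
      _ = C * Real.exp (-C₅ * (n:ℝ) ^ ((1:ℝ)/(m+1))) := by rw [hC]; ring
  · -- small n case
    push_neg at hk1
    have hk0 : ⌊x⌋₊ = 0 := by omega
    have hxlt1 : x < 1 := by
      by_contra h
      push_neg at h
      have h2 : 1 ≤ ⌊x⌋₊ := Nat.one_le_floor_iff x |>.2 h
      omega
    have hnβ : (n:ℝ) ≤ β := by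
      have h1 : (n:ℝ)/β < 1 := by
        rw [← hxpow]
        exact pow_lt_one₀ hx0 hxlt1 (by omega)
      have := (div_lt_one hβ0).1 h1
      linarith
    have h1 : C₅ * (n:ℝ) ^ ((1:ℝ)/(m+1)) ≤ c₀ := by
      have h2 : (n:ℝ) ^ ((1:ℝ)/(m+1)) ≤ β ^ ((1:ℝ)/(m+1)) :=
        Real.rpow_le_rpow (Nat.cast_nonneg n) hnβ (by positivity)
      have h3 : C₅ * β ^ ((1:ℝ)/(m+1)) = c₀ := by
        rw [hC₅]
        field_simp
      calc C₅ * (n:ℝ) ^ ((1:ℝ)/(m+1)) ≤ C₅ * β ^ ((1:ℝ)/(m+1)) :=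
            mul_le_mul_of_nonneg_left h2 hC₅0.le
        _ = c₀ := h3
    have hge1 : 1 ≤ Real.exp c₀ * Real.exp (-C₅ * (n:ℝ) ^ ((1:ℝ)/(m+1))) := by
      rw [← Real.exp_add]
      apply Real.one_le_exp
      linarith
    calc entropyNum (symmConvexHullC D) n ≤ RD' := hfallback n
      _ ≤ (C₃ + RD') * 1 := by rw [mul_one]; linarith
      _ ≤ (C₃ + RD') * (Real.exp c₀ * Real.exp (-C₅ * (n:ℝ) ^ ((1:ℝ)/(m+1)))) :=
          mul_le_mul_of_nonneg_left hge1 (by positivity)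
      _ = C * Real.exp (-C₅ * (n:ℝ) ^ ((1:ℝ)/(m+1))) := by rw [hC]; ring


-- The analytic approximation lemma
theorem analytic_approx {m : ℕ} {X : Type*} [NormedAddCommGroup X] [NormedSpace ℂ X]
    (W : Set (Fin m → ℝ)) (hWne : W.Nonempty) (hWbdd : Bornology.IsBounded W)
    (U : Set (Fin m → ℂ))
    (hWU : (fun ω : Fin m → ℝ => fun i => ((ω i : ℝ) : ℂ)) '' closure W ⊆ U)
    (𝒢 : (Fin m → ℂ) → X)
    (h𝒢 : AnalyticOnNhd ℂ 𝒢 U) :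
    ∃ (A : ℕ) (Q Cb aθ : ℝ), 1 ≤ A ∧ 1 ≤ Q ∧ 0 < aθ ∧ aθ < 1 ∧ 0 < Cb ∧
      ∀ k : ℕ, 1 ≤ k → ∃ (ι : Type) (_ : Fintype ι) (c : ι → X),
        Fintype.card ι ≤ A * k ^ m ∧ (∀ i, ‖c i‖ ≤ Q ^ (k+1)) ∧
        ∀ g ∈ (fun ω : Fin m → ℝ => 𝒢 fun i => ((ω i : ℝ) : ℂ)) '' W,
          ∃ t : ι → ℂ, (∀ i, ‖t i‖ ≤ Q ^ (k+1)) ∧ ‖g - ∑ i, t i • c i‖ ≤ Cb * aθ ^ k := by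
  classical
  set emb : (Fin m → ℝ) → (Fin m → ℂ) := fun ω => fun i => ((ω i : ℝ) : ℂ) with hemb
  have hembcont : Continuous emb :=
    continuous_pi (fun i => Complex.continuous_ofReal.comp (continuous_apply i))
  set K : Set (Fin m → ℂ) := emb '' closure W with hK
  have hKcomp : IsCompact K := (hWbdd.isCompact_closure).image hembcont
  have hKU : K ⊆ U := hWU
  -- local data at each point of K
  have hdata : ∀ z : K, ∃ (p : FormalMultilinearSeries ℂ (Fin m → ℂ) X)
      (r' : NNReal) (az Cz Cc : ℝ), 0 < r' ∧ az ∈ Set.Ioo (0:ℝ) 1 ∧ 0 < Cz ∧ 0 < Cc ∧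
      (∀ y ∈ Metric.ball (0 : Fin m → ℂ) r', ∀ nn : ℕ,
        ‖𝒢 ((z : Fin m → ℂ) + y) - p.partialSum nn y‖ ≤ Cz * az ^ nn) ∧
      (∀ j : ℕ, ‖p j‖ * (r' : ℝ) ^ j ≤ Cc) := by
    rintro ⟨z, hz⟩
    obtain ⟨p, r, hp⟩ := h𝒢 z (hKU hz)
    obtain ⟨r', hr'0, hr'r⟩ : ∃ r' : NNReal, (0:ENNReal) < r' ∧ (r' : ENNReal) < r :=
      ENNReal.lt_iff_exists_nnreal_btwn.1 hp.r_pos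
    obtain ⟨az, haz, Cz, hCz, happ⟩ := hp.uniform_geometric_approx hr'r
    obtain ⟨Cc, hCc, hcoef⟩ := p.norm_mul_pow_le_of_lt_radius (lt_of_lt_of_le hr'r hp.r_le)
    refine ⟨p, r', az, Cz, Cc, ?_, haz, hCz, hCc, happ, hcoef⟩
    exact_mod_cast hr'0
  choose p r' az Cz Cc hr'pos haz hCz hCcpos happZ hcoef using hdata
  -- finite subcover
  have hcover : K ⊆ ⋃ z : K, Metric.ball (z : Fin m → ℂ) (r' z) := by
    intro z hz
    exact Set.mem_iUnion.2 ⟨⟨z, hz⟩, Metric.mem_ball_self (by exact_mod_cast hr'pos ⟨z, hz⟩)⟩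
  obtain ⟨s, hs⟩ := hKcomp.elim_finite_subcover _ (fun z : K => Metric.isOpen_ball) hcover
  have hsne : s.Nonempty := by
    obtain ⟨ω₀, hω₀⟩ := hWne
    have h1 : emb ω₀ ∈ K := ⟨ω₀, subset_closure hω₀, rfl⟩
    obtain ⟨i, hi, _⟩ := Set.mem_iUnion₂.1 (hs h1)
    exact ⟨i, hi⟩
  -- uniform constants
  set aS : ℝ := s.sup' hsne az with haS
  have haS1 : aS < 1 := (Finset.sup'_lt_iff hsne).2 (fun i _ => (haz i).2)
  have haS0 : 0 < aS := by
    obtain ⟨i₀, hi₀⟩ := hsne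
    exact lt_of_lt_of_le (haz i₀).1 (Finset.le_sup' az hi₀)
  set CS : ℝ := max 1 (s.sup' hsne Cz) with hCS
  have hCS1 : 1 ≤ CS := le_max_left _ _
  have hCSle : ∀ i ∈ s, Cz i ≤ CS := fun i hi =>
    le_trans (Finset.le_sup' Cz hi) (le_max_right _ _)
  set CcS : ℝ := max 1 (s.sup' hsne Cc) with hCcS
  have hCcS1 : 1 ≤ CcS := le_max_left _ _
  have hCcSle : ∀ i ∈ s, Cc i ≤ CcS := fun i hi =>
    le_trans (Finset.le_sup' Cc hi) (le_max_right _ _)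
  set rmax : ℝ := max 1 (s.sup' hsne (fun i => (r' i : ℝ))) with hrmax
  have hrmax1 : 1 ≤ rmax := le_max_left _ _
  have hrmaxle : ∀ i ∈ s, (r' i : ℝ) ≤ rmax := fun i hi =>
    le_trans (Finset.le_sup' (fun i => (r' i : ℝ)) hi) (le_max_right _ _)
  set ρS : ℝ := max 1 (s.sup' hsne (fun i => 1 / (r' i : ℝ))) with hρS
  have hρS1 : 1 ≤ ρS := le_max_left _ _
  have hρSle : ∀ i ∈ s, 1 / (r' i : ℝ) ≤ ρS := fun i hi =>
    le_trans (Finset.le_sup' (fun i => 1 / (r' i : ℝ)) hi) (le_max_right _ _)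
  -- coefficient bound per center
  have hpnorm : ∀ i ∈ s, ∀ j : ℕ, ‖p i j‖ ≤ CcS * ρS ^ j := by
    intro i hi j
    have hr'i : (0:ℝ) < (r' i : ℝ) := by exact_mod_cast hr'pos i
    have h1 : ‖p i j‖ ≤ Cc i * (1 / (r' i : ℝ)) ^ j := by
      have h2 := hcoef i j
      have h3 : Cc i * (1 / (r' i : ℝ)) ^ j = Cc i / (r' i : ℝ) ^ j := by
        rw [div_pow, one_pow, mul_one_div]
      rw [h3, le_div_iff₀ (pow_pos hr'i j)]
      exact h2
    calc ‖p i j‖ ≤ Cc i * (1 / (r' i : ℝ)) ^ j := h1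
      _ ≤ CcS * ρS ^ j := by
          apply mul_le_mul (hCcSle i hi) (pow_le_pow_left₀ (by positivity) (hρSle i hi) j)
            (by positivity) (by linarith)
  set Q : ℝ := CcS + 2 * (m + 1) * ρS + rmax ^ m with hQdef
  have hQ1 : 1 ≤ Q := by
    have h1 : (0:ℝ) < 2 * (m+1) * ρS := by positivity
    have h2 : (0:ℝ) ≤ rmax ^ m := by positivity
    nlinarith
  refine ⟨s.card + 1, Q, CS, aS, by omega, hQ1, haS0, haS1, by linarith, ?_⟩
  intro k hk
  refine ⟨{i // i ∈ s} × (Fin m → Fin k), inferInstance,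
    (fun iα => coefVec (p iα.1) k iα.2), ?_, ?_, ?_⟩
  · rw [Fintype.card_prod, Fintype.card_coe, Fintype.card_fun, Fintype.card_fin,
      Fintype.card_fin]
    calc s.card * k ^ m ≤ (s.card + 1) * k ^ m := by
          apply Nat.mul_le_mul_right
          omega
      _ = _ := rfl
  · rintro ⟨i, α⟩
    have h1 := coefVec_norm_le (p i) (by linarith : (0:ℝ) ≤ CcS) hρS1
      (hpnorm i i.2) k α
    have hbpos : (0:ℝ) < 2 * (m + 1) * ρS := by positivity
    have hrm : (0:ℝ) ≤ rmax ^ m := by positivity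
    have hb1 : CcS ≤ Q := by rw [hQdef]; linarith
    have hb2 : (2 * ((m:ℝ) + 1) * ρS) ≤ Q := by rw [hQdef]; linarith
    have hb3 : (2 * ((m:ℝ) + 1) * ρS) ^ k ≤ Q ^ k := pow_le_pow_left₀ hbpos.le hb2 k
    calc ‖coefVec (p i) k α‖ ≤ CcS * (2 * (m + 1) * ρS) ^ k := h1
      _ ≤ Q * Q ^ k := mul_le_mul hb1 hb3 (by positivity) (by linarith)
      _ = Q ^ (k+1) := by rw [pow_succ]; ring
  · rintro g ⟨ω, hω, rfl⟩
    have hembω : emb ω ∈ K := ⟨ω, subset_closure hω, rfl⟩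
    obtain ⟨i, his, hball⟩ := Set.mem_iUnion₂.1 (hs hembω)
    set i' : {x // x ∈ s} := ⟨i, his⟩ with hi'
    set y : Fin m → ℂ := emb ω - (i : Fin m → ℂ) with hy
    have hynorm : ‖y‖ < (r' i : ℝ) := by
      rw [hy, ← dist_eq_norm]
      exact Metric.mem_ball.1 hball
    have hyball : y ∈ Metric.ball (0 : Fin m → ℂ) (r' i) := by
      rw [Metric.mem_ball, dist_zero_right]
      exact hynorm
    refine ⟨fun iα => if iα.1 = i' then (∏ t, y t ^ ((iα.2 t : ℕ))) else 0, ?_, ?_⟩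
    · rintro ⟨q, α⟩
      by_cases hq : q = i'
      · simp only [hq, if_pos rfl]
        have h1 : ∀ t, ‖y t‖ ≤ rmax := by
          intro t
          calc ‖y t‖ ≤ ‖y‖ := norm_le_pi_norm y t
            _ ≤ (r' i : ℝ) := hynorm.le
            _ ≤ rmax := hrmaxle i his
        calc ‖∏ t, y t ^ ((α t : ℕ))‖ = ∏ t, ‖y t‖ ^ (α t : ℕ) := by
              rw [norm_prod]
              exact Finset.prod_congr rfl (fun t _ => norm_pow _ _)
          _ ≤ ∏ _t : Fin m, rmax ^ k := by
              apply Finset.prod_le_prod (fun t _ => by positivity)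
              intro t _
              calc ‖y t‖ ^ (α t : ℕ) ≤ rmax ^ (α t : ℕ) :=
                    pow_le_pow_left₀ (norm_nonneg _) (h1 t) _
                _ ≤ rmax ^ k := pow_le_pow_right₀ hrmax1 (le_of_lt (α t).2)
          _ = (rmax ^ k) ^ m := by rw [Finset.prod_const, Finset.card_univ, Fintype.card_fin]
          _ = (rmax ^ m) ^ k := by rw [← pow_mul, ← pow_mul, Nat.mul_comm]
          _ ≤ Q ^ k := by
              apply pow_le_pow_left₀ (by positivity)
              rw [hQdef]
              have h2 : (0:ℝ) < 2 * (m+1) * ρS := by positivity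
              linarith
          _ ≤ Q ^ (k+1) := pow_le_pow_right₀ (by linarith) (by omega)
      · simp only [if_neg hq]
        rw [norm_zero]
        positivity
    · have hsum : (∑ iα : {x // x ∈ s} × (Fin m → Fin k),
          (if iα.1 = i' then (∏ t, y t ^ ((iα.2 t : ℕ))) else 0) • coefVec (p iα.1) k iα.2)
          = (p i).partialSum k y := by
        rw [Fintype.sum_prod_type]
        rw [Finset.sum_eq_single i']
        · rw [partialSum_repr (p i) k hk y]
          simp [hi']
        · intro q _ hq
          simp [hq]
        · intro h
          exact absurd (Finset.mem_univ i') h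
      rw [hsum]
      have hzy : emb ω = (i : Fin m → ℂ) + y := by rw [hy]; abel
      show ‖𝒢 (emb ω) - (p i).partialSum k y‖ ≤ CS * aS ^ k
      rw [hzy]
      calc ‖𝒢 ((i : Fin m → ℂ) + y) - (p i).partialSum k y‖ ≤ Cz i * az i ^ k :=
            happZ i y hyball k
        _ ≤ CS * aS ^ k := by
            apply mul_le_mul (hCSle i his) ?_ (pow_nonneg (haz i).1.le k) (by linarith)
            exact pow_le_pow_left₀ (haz i).1.le (Finset.le_sup' az his) k


theorem stmt7 {m : ℕ} (hm : 1 ≤ m) (a b : ℝ) (hab : a < b)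
    (W : Set (Fin m → ℝ)) (hWne : W.Nonempty) (hWbdd : Bornology.IsBounded W)
    (hWconv : Convex ℝ W)
    (U : Set (Fin m → ℂ)) (hU : IsOpen U)
    (hWU : (fun ω : Fin m → ℝ => fun i => ((ω i : ℝ) : ℂ)) '' closure W ⊆ U)
    (𝒢 : (Fin m → ℂ) → C(Set.Icc a b, ℂ))
    (h𝒢 : AnalyticOnNhd ℂ 𝒢 U) :
    ∃ C > (0:ℝ), ∃ C₅ > (0:ℝ), ∀ n : ℕ, 1 ≤ n →
      entropyNum
          (symmConvexHullC ((fun ω : Fin m → ℝ => 𝒢 fun i => ((ω i : ℝ) : ℂ)) '' W)) n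
        ≤ C * Real.exp (-C₅ * (n : ℝ) ^ ((1 : ℝ) / (m + 1))) := by
  classical
  set emb : (Fin m → ℝ) → (Fin m → ℂ) := fun ω => fun i => ((ω i : ℝ) : ℂ) with hemb
  have hembcont : Continuous emb :=
    continuous_pi (fun i => Complex.continuous_ofReal.comp (continuous_apply i))
  set K : Set (Fin m → ℂ) := emb '' closure W with hK
  have hKcomp : IsCompact K := (hWbdd.isCompact_closure).image hembcont
  set D : Set C(Set.Icc a b, ℂ) := (fun ω : Fin m → ℝ => 𝒢 fun i => ((ω i : ℝ) : ℂ)) '' W with hD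
  -- D is bounded
  have hDsub : D ⊆ 𝒢 '' K := by
    rintro g ⟨ω, hω, rfl⟩
    exact ⟨emb ω, ⟨ω, subset_closure hω, rfl⟩, rfl⟩
  have hGKcomp : IsCompact (𝒢 '' K) := by
    apply hKcomp.image_of_continuousOn
    intro z hz
    exact (h𝒢 z (hWU hz)).continuousAt.continuousWithinAt
  obtain ⟨RD, hRD⟩ := (isBounded_iff_forall_norm_le.1 hGKcomp.isBounded)
  have hRD' : ∀ g ∈ D, ‖g‖ ≤ RD := fun g hg => hRD g (hDsub hg)
  obtain ⟨A, Q, Cb, aθ, hA, hQ, haθ0, haθ1, hCb, happrox⟩ :=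
    analytic_approx W hWne hWbdd U hWU 𝒢 h𝒢
  exact entropy_of_approx D m A hA Q Cb aθ hQ haθ0 haθ1 hCb happrox RD hRD'
end

section
/- Fix 0 < η < 1 and let I = [η, 1]. Let D = { g(·,b) : b ∈ (0,∞) } ⊆ C(I) be the rational dictionary with g(x,b) = (η+b)/(x+b). Then there exist constants C > 0 and C₆ > 0 such that the entropy numbers of the closed symmetric convex hull of D in C(I) satisfy ε_n(B₁(D)) ≤ C·e^{−C₆·n^{1/2}} for all integers n ≥ 1. -/
/-- The rational dictionary `D = { (η+b)/(x+b) : b ∈ (0,∞) }` in `C([η,1])`. -/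
def ratDict (η : ℝ) : Set C(Set.Icc η 1, ℝ) :=
  { f | ∃ b > (0:ℝ), ∀ x : Set.Icc η 1, f x = (η + b) / ((x : ℝ) + b) }

open Finset

namespace Stmt10

noncomputable def eF (η : ℝ) (k : ℕ) : C(Set.Icc η 1, ℝ) :=
  ⟨fun x => (((x : ℝ) - (1 + η) / 2) / ((1 - η) / 2)) ^ k,
    (((continuous_subtype_val).sub continuous_const).div_const _).pow k⟩

noncomputable def tC (η b : ℝ) (k : ℕ) : ℝ :=
  (η + b) * (-((1 - η) / 2)) ^ k / ((1 + η) / 2 + b) ^ (k + 1)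

lemma geom (a b c x : ℝ) (hx : x + b ≠ 0) (hc : c + b ≠ 0) (K : ℕ) :
    a / (x + b) = (∑ k ∈ Finset.range K, a * (c - x) ^ k / (c + b) ^ (k + 1))
      + a / (x + b) * ((c - x) / (c + b)) ^ K := by
  induction K with
  | zero => simp
  | succ K ih =>
      rw [Finset.sum_range_succ]
      conv_lhs => rw [ih]
      have h : a / (x + b) * ((c - x) / (c + b)) ^ K
          = a * (c - x) ^ K / (c + b) ^ (K + 1)
            + a / (x + b) * ((c - x) / (c + b)) ^ (K + 1) := by
        rw [div_pow, div_pow]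
        field_simp
        ring
      linarith

variable {η : ℝ}

lemma eF_apply (η : ℝ) (k : ℕ) (x : Set.Icc η 1) :
    eF η k x = (((x : ℝ) - (1 + η) / 2) / ((1 - η) / 2)) ^ k := rfl

lemma abs_eF_le (hη1 : η < 1) (k : ℕ) (x : Set.Icc η 1) : |eF η k x| ≤ 1 := by
  have hx1 : η ≤ (x:ℝ) := x.2.1
  have hx2 : (x:ℝ) ≤ 1 := x.2.2
  have hr : (0:ℝ) < (1 - η) / 2 := by linarith
  rw [eF_apply, abs_pow]
  apply pow_le_one₀ (abs_nonneg _)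
  rw [abs_div, abs_of_pos hr, div_le_one hr, abs_le]
  constructor <;> linarith

lemma abs_tC_le (hη : 0 < η) (hη1 : η < 1) {b : ℝ} (hb : 0 < b) (k : ℕ) :
    |tC η b k| ≤ ((1 - η) / (1 + η)) ^ k := by
  have hc : (0:ℝ) < (1 + η) / 2 + b := by linarith
  have hr : (0:ℝ) ≤ (1 - η) / 2 := by linarith
  have hab : (0:ℝ) < η + b := by linarith
  rw [tC, abs_div, abs_mul, abs_pow, abs_neg, abs_of_nonneg hr, abs_of_pos hab,
    abs_of_pos (pow_pos hc _), pow_succ, div_le_iff₀ (by positivity)]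
  have h1 : ((1-η)/2 : ℝ) ≤ (1-η)/(1+η) * ((1+η)/2 + b) := by
    have he : (1-η)/(1+η) * ((1+η)/2 + b) = (1-η)/2 + (1-η)/(1+η)*b := by
      field_simp
    have hb' : (0:ℝ) ≤ (1-η)/(1+η)*b :=
      mul_nonneg (div_nonneg (by linarith) (by linarith)) hb.le
    rw [he]; linarith
  calc (η + b) * ((1-η)/2)^k ≤ ((1+η)/2 + b) * ((1-η)/2)^k :=
        mul_le_mul_of_nonneg_right (by linarith) (pow_nonneg hr k)
    _ ≤ ((1+η)/2 + b) * ((1-η)/(1+η) * ((1+η)/2+b))^k :=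
        mul_le_mul_of_nonneg_left (pow_le_pow_left₀ hr h1 k) (le_of_lt hc)
    _ = ((1-η)/(1+η))^k * (((1+η)/2+b)^k * ((1+η)/2+b)) := by rw [mul_pow]; ring

lemma key_pointwise (hη : 0 < η) (hη1 : η < 1) {b : ℝ} (hb : 0 < b) (K : ℕ) (x : Set.Icc η 1) :
    |(η + b) / ((x:ℝ) + b) - ∑ k ∈ Finset.range K, tC η b k * eF η k x|
      ≤ ((1 - η) / (1 + η)) ^ K := by
  have hx1 : η ≤ (x:ℝ) := x.2.1
  have hx2 : (x:ℝ) ≤ 1 := x.2.2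
  have hxb : (0:ℝ) < (x:ℝ) + b := by linarith
  have hcb : (0:ℝ) < (1+η)/2 + b := by linarith
  have hrne : ((1 - η)/2 : ℝ) ≠ 0 := by intro h; nlinarith
  have hterm : ∀ k, tC η b k * eF η k x
      = (η + b) * ((1+η)/2 - (x:ℝ))^k / ((1+η)/2 + b)^(k+1) := by
    intro k
    have hne : (1:ℝ) - η ≠ 0 := by intro h; nlinarith
    have hmm : (-((1-η)/2)) * (((x:ℝ) - (1+η)/2)/((1-η)/2)) = (1+η)/2 - (x:ℝ) := by
      field_simp
      ring
    rw [tC, eF_apply, div_mul_eq_mul_div, mul_assoc, ← mul_pow, hmm]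
  rw [Finset.sum_congr rfl (fun k _ => hterm k),
    geom (η+b) b ((1+η)/2) (x:ℝ) (ne_of_gt hxb) (ne_of_gt hcb) K,
    add_sub_cancel_left]
  have h1 : |(η+b)/((x:ℝ)+b)| ≤ 1 := by
    rw [abs_div, abs_of_pos (by linarith : (0:ℝ) < η + b), abs_of_pos hxb, div_le_one hxb]
    linarith
  have h2 : |((1+η)/2 - (x:ℝ))/((1+η)/2 + b)| ≤ (1-η)/(1+η) := by
    rw [abs_div, abs_of_pos hcb, div_le_div_iff₀ hcb (by linarith : (0:ℝ) < 1+η)]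
    have habs : |(1+η)/2 - (x:ℝ)| ≤ (1-η)/2 := abs_le.2 ⟨by linarith, by linarith⟩
    nlinarith [abs_nonneg ((1+η)/2 - (x:ℝ))]
  calc |(η+b)/((x:ℝ)+b) * (((1+η)/2 - (x:ℝ))/((1+η)/2 + b)) ^ K|
      = |(η+b)/((x:ℝ)+b)| * |((1+η)/2 - (x:ℝ))/((1+η)/2 + b)|^K := by
        rw [abs_mul, abs_pow]
    _ ≤ 1 * ((1-η)/(1+η))^K :=
        mul_le_mul h1 (pow_le_pow_left₀ (abs_nonneg _) h2 K)
          (pow_nonneg (abs_nonneg _) K) zero_le_one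
    _ = ((1-η)/(1+η))^K := one_mul _

lemma cover (hη : 0 < η) (hη1 : η < 1) (K N : ℕ) (hN : 0 < N) :
    ∃ T : Finset C(Set.Icc η 1, ℝ), T.card ≤ (N + 1) ^ K ∧
      symmConvexHull (ratDict η) ⊆
        ⋃ y ∈ T, Metric.closedBall y (((1-η)/(1+η)) ^ K + 2 * K / N) := by
  classical
  set ρ : ℝ := (1-η)/(1+η) with hρdef
  have hρ0 : 0 < ρ := div_pos (by linarith) (by linarith)
  have hρ1 : ρ < 1 := by rw [hρdef, div_lt_one (by linarith)]; linarith
  set R : ℝ := ρ ^ K + 2 * K / N with hRdef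
  have hR0 : 0 < R := by positivity
  set Y : (Fin K → Fin (N+1)) → C(Set.Icc η 1, ℝ) :=
    fun w => ∑ k : Fin K, (2 * ((w k : ℕ) : ℝ) / N - 1) • eF η (k : ℕ) with hYdef
  refine ⟨Finset.image Y Finset.univ, ?_, ?_⟩
  · calc (Finset.image Y Finset.univ).card
        ≤ (Finset.univ : Finset (Fin K → Fin (N+1))).card := Finset.card_image_le
      _ = (N+1)^K := by simp [Finset.card_univ]
  · rw [symmConvexHull]
    refine closure_minimal ?_ (Set.Finite.isClosed_biUnion (Finset.finite_toSet _)
      (fun y _ => Metric.isClosed_closedBall))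
    rintro f ⟨m, cw, gs, hgs, hsum, rfl⟩
    choose bs hbs hgsx using hgs
    set s : ℕ → ℝ := fun k => ∑ j, cw j * tC η (bs j) k with hsdef
    have hs_le : ∀ k, |s k| ≤ ρ ^ k := by
      intro k
      calc |s k| ≤ ∑ j, |cw j * tC η (bs j) k| := Finset.abs_sum_le_sum_abs _ _
        _ ≤ ∑ j, |cw j| * ρ ^ k := by
            refine Finset.sum_le_sum (fun j _ => ?_)
            rw [abs_mul]
            exact mul_le_mul_of_nonneg_left (abs_tC_le hη hη1 (hbs j) k) (abs_nonneg _)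
        _ = (∑ j, |cw j|) * ρ ^ k := by rw [Finset.sum_mul]
        _ ≤ 1 * ρ ^ k := mul_le_mul_of_nonneg_right hsum (le_of_lt (pow_pos hρ0 k))
        _ = ρ ^ k := one_mul _
    have hs_le1 : ∀ k, |s k| ≤ 1 := fun k => (hs_le k).trans (pow_le_one₀ hρ0.le hρ1.le)
    have stage1 : ∀ x : Set.Icc η 1,
        |(∑ j, cw j • gs j) x - ∑ k ∈ Finset.range K, s k * eF η k x| ≤ ρ ^ K := by
      intro x
      have hfx : (∑ j, cw j • gs j) x = ∑ j, cw j * gs j x := by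
        simp [ContinuousMap.sum_apply, ContinuousMap.smul_apply, smul_eq_mul]
      have swap : ∑ k ∈ Finset.range K, s k * eF η k x
          = ∑ j, cw j * ∑ k ∈ Finset.range K, tC η (bs j) k * eF η k x := by
        simp only [hsdef, Finset.sum_mul, Finset.mul_sum]
        rw [Finset.sum_comm]
        simp [mul_assoc]
      rw [hfx, swap, ← Finset.sum_sub_distrib]
      simp only [← mul_sub]
      calc |∑ j, cw j * (gs j x - ∑ k ∈ Finset.range K, tC η (bs j) k * eF η k x)|
          ≤ ∑ j, |cw j * (gs j x - ∑ k ∈ Finset.range K, tC η (bs j) k * eF η k x)| :=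
            Finset.abs_sum_le_sum_abs _ _
        _ ≤ ∑ j, |cw j| * ρ ^ K := by
            refine Finset.sum_le_sum (fun j _ => ?_)
            rw [abs_mul]
            refine mul_le_mul_of_nonneg_left ?_ (abs_nonneg _)
            rw [hgsx j x]
            exact key_pointwise hη hη1 (hbs j) K x
        _ = (∑ j, |cw j|) * ρ ^ K := by rw [Finset.sum_mul]
        _ ≤ 1 * ρ ^ K := mul_le_mul_of_nonneg_right hsum (le_of_lt (pow_pos hρ0 K))
        _ = ρ ^ K := one_mul _
    set i : ℕ → ℕ := fun k => ⌊(N:ℝ) * (s k + 1) / 2⌋₊ with hidef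
    have hiN : ∀ k, i k < N + 1 := by
      intro k
      have hsk := abs_le.1 (hs_le1 k)
      have h1 : (N:ℝ)*(s k+1)/2 ≤ (N:ℝ) := by nlinarith [Nat.cast_nonneg (α := ℝ) N]
      have h2 := Nat.floor_mono h1
      rw [Nat.floor_natCast] at h2
      exact Nat.lt_succ_of_le h2
    set v : Fin K → Fin (N+1) := fun k => ⟨i k, hiN k⟩ with hvdef
    have hgrid : ∀ k, |2 * (i k : ℝ)/N - 1 - s k| ≤ 2 / N := by
      intro k
      have hsk := abs_le.1 (hs_le1 k)
      have hu0 : (0:ℝ) ≤ (N:ℝ)*(s k+1)/2 :=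
        div_nonneg (mul_nonneg (Nat.cast_nonneg N) (by linarith)) (by norm_num)
      have h1 : (i k : ℝ) ≤ (N:ℝ)*(s k+1)/2 := Nat.floor_le hu0
      have h2 : (N:ℝ)*(s k+1)/2 < i k + 1 := Nat.lt_floor_add_one _
      have hNne : (N:ℝ) ≠ 0 := Nat.cast_ne_zero.2 hN.ne'
      have hN0 : (0:ℝ) < (N:ℝ) := Nat.cast_pos.2 hN
      have heq : 2 * (i k : ℝ)/N - 1 - s k = (2/N) * ((i k:ℝ) - (N:ℝ)*(s k+1)/2) := by
        field_simp
        ring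
      rw [heq, abs_mul, abs_of_pos (by positivity : (0:ℝ) < 2/(N:ℝ))]
      have habs : |(i k:ℝ) - (N:ℝ)*(s k+1)/2| ≤ 1 := abs_le.2 ⟨by linarith, by linarith⟩
      calc (2/(N:ℝ)) * |(i k:ℝ) - (N:ℝ)*(s k+1)/2| ≤ (2/N) * 1 :=
            mul_le_mul_of_nonneg_left habs (by positivity)
        _ = 2/N := mul_one _
    refine Set.mem_iUnion₂.2 ⟨Y v, Finset.mem_image.2 ⟨v, Finset.mem_univ v, rfl⟩, ?_⟩
    rw [Metric.mem_closedBall, dist_eq_norm]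
    refine (ContinuousMap.norm_le _ hR0.le).2 (fun x => ?_)
    have hYx : Y v x = ∑ k ∈ Finset.range K, (2*(i k:ℝ)/N - 1) * eF η k x := by
      simp only [hYdef, hvdef, ContinuousMap.sum_apply, ContinuousMap.smul_apply, smul_eq_mul]
      exact Fin.sum_univ_eq_sum_range (fun k => (2*(i k:ℝ)/N - 1) * eF η k x) K
    have hsplit : ((∑ j, cw j • gs j) - Y v) x
        = ((∑ j, cw j • gs j) x - ∑ k ∈ Finset.range K, s k * eF η k x)
          + ∑ k ∈ Finset.range K, (s k - (2*(i k:ℝ)/N - 1)) * eF η k x := by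
      rw [ContinuousMap.sub_apply, hYx]
      rw [show ∀ A B C : ℝ, A - C = (A - B) + (B - C) from fun A B C => by ring]
      · congr 1
        rw [← Finset.sum_sub_distrib]
        exact Finset.sum_congr rfl (fun k _ => by ring)
    rw [Real.norm_eq_abs, hsplit]
    calc |((∑ j, cw j • gs j) x - ∑ k ∈ Finset.range K, s k * eF η k x)
          + ∑ k ∈ Finset.range K, (s k - (2*(i k:ℝ)/N - 1)) * eF η k x|
        ≤ |(∑ j, cw j • gs j) x - ∑ k ∈ Finset.range K, s k * eF η k x|
          + |∑ k ∈ Finset.range K, (s k - (2*(i k:ℝ)/N - 1)) * eF η k x| := abs_add_le _ _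
      _ ≤ ρ ^ K + ∑ k ∈ Finset.range K, |(s k - (2*(i k:ℝ)/N - 1)) * eF η k x| :=
          add_le_add (stage1 x) (Finset.abs_sum_le_sum_abs _ _)
      _ ≤ ρ ^ K + ∑ k ∈ Finset.range K, ((2:ℝ)/N * 1) := by
          refine add_le_add_right (Finset.sum_le_sum (fun k _ => ?_)) _
          rw [abs_mul]
          refine mul_le_mul ?_ (abs_eF_le hη1 k x) (abs_nonneg _) (by positivity)
          rw [abs_sub_comm]
          exact hgrid k
      _ = ρ ^ K + 2 * K / N := by
          rw [Finset.sum_const, Finset.card_range, mul_one, nsmul_eq_mul]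
          ring

lemma hull_subset_ball (hη : 0 < η) (hη1 : η < 1) :
    symmConvexHull (ratDict η) ⊆ Metric.closedBall 0 1 := by
  rw [symmConvexHull]
  refine closure_minimal ?_ Metric.isClosed_closedBall
  rintro f ⟨m, cw, gs, hgs, hsum, rfl⟩
  rw [Metric.mem_closedBall, dist_zero_right]
  have hsm : ∀ j, ‖gs j‖ ≤ 1 → ‖cw j • gs j‖ ≤ |cw j| := by
    intro j hgj
    refine (ContinuousMap.norm_le _ (abs_nonneg _)).2 (fun x => ?_)
    rw [ContinuousMap.smul_apply, smul_eq_mul, Real.norm_eq_abs, abs_mul]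
    have hx : |(gs j) x| ≤ 1 := by
      have h := (gs j).norm_coe_le_norm x
      rw [Real.norm_eq_abs] at h
      linarith
    calc |cw j| * |(gs j) x| ≤ |cw j| * 1 :=
          mul_le_mul_of_nonneg_left hx (abs_nonneg _)
      _ = |cw j| := mul_one _
  have hg : ∀ j, ‖gs j‖ ≤ 1 := by
    intro j
    obtain ⟨b, hb, hgx⟩ := hgs j
    refine (ContinuousMap.norm_le _ zero_le_one).2 (fun x => ?_)
    have hx1 : η ≤ (x:ℝ) := x.2.1
    rw [hgx x, Real.norm_eq_abs, abs_div, abs_of_pos (by linarith),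
      abs_of_pos (by linarith : (0:ℝ) < (x:ℝ) + b), div_le_one (by linarith)]
    linarith
  calc ‖∑ j, cw j • gs j‖ ≤ ∑ j, ‖cw j • gs j‖ := norm_sum_le _ _
    _ ≤ ∑ j, |cw j| := Finset.sum_le_sum (fun j _ => hsm j (hg j))
    _ ≤ 1 := hsum

lemma entropyNum_le_of_cover {X : Type*} [NormedAddCommGroup X] (F : Set X) (n : ℕ) {R : ℝ}
    (hR : 0 < R) (T : Finset X) (hT : T.card ≤ 2 ^ n)
    (hsub : F ⊆ ⋃ y ∈ T, Metric.closedBall y R) : entropyNum F n ≤ R :=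
  csInf_le ⟨0, fun ε hε => le_of_lt hε.1⟩ ⟨hR, T, hT, hsub⟩

end Stmt10

open Stmt10

set_option maxHeartbeats 2000000

theorem stmt10 (η : ℝ) (hη : 0 < η) (hη1 : η < 1) :
    ∃ C > (0:ℝ), ∃ C₆ > (0:ℝ), ∀ n : ℕ, 1 ≤ n →
      entropyNum (symmConvexHull (ratDict η)) n
        ≤ C * Real.exp (-C₆ * Real.sqrt n) := by
  set ρ : ℝ := (1-η)/(1+η) with hρdef
  have hρ0 : 0 < ρ := div_pos (by linarith) (by linarith)
  have hρ1 : ρ < 1 := by rw [hρdef, div_lt_one (by linarith)]; linarith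
  set L : ℝ := -Real.log ρ with hLdef
  have hL : 0 < L := by
    have := Real.log_neg hρ0 hρ1
    rw [hLdef]; linarith
  have hρexp : ∀ K : ℕ, ρ ^ K = Real.exp (-((K:ℝ) * L)) := by
    intro K
    rw [hLdef, show -((K:ℝ) * -Real.log ρ) = (K:ℝ) * Real.log ρ from by ring,
      Real.exp_nat_mul, Real.exp_log hρ0]
  clear_value ρ L
  set M : ℕ := ⌈(4*L + 2*Real.log 3)/Real.log 2⌉₊ + 1 with hMdef
  have hM0 : 0 < M := Nat.succ_pos _
  have hMR : (0:ℝ) < M := Nat.cast_pos.2 hM0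
  have hM1 : (1:ℝ) ≤ M := by exact_mod_cast hM0
  have hlog2 : (0:ℝ) < Real.log 2 := Real.log_pos (by norm_num)
  have hlog3 : (0:ℝ) < Real.log 3 := Real.log_pos (by norm_num)
  have hMge : 4*L + 2*Real.log 3 ≤ M * Real.log 2 := by
    have h1 : (4*L + 2*Real.log 3)/Real.log 2 ≤ (M:ℝ) := by
      have h0 := Nat.le_ceil ((4*L + 2*Real.log 3)/Real.log 2)
      have h2 : ((⌈(4*L + 2*Real.log 3)/Real.log 2⌉₊ : ℕ) : ℝ) ≤ (M:ℝ) := by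
        exact_mod_cast Nat.le_succ _
      linarith
    calc 4*L + 2*Real.log 3 = ((4*L + 2*Real.log 3)/Real.log 2) * Real.log 2 := by
          field_simp
      _ ≤ M * Real.log 2 := mul_le_mul_of_nonneg_right h1 hlog2.le
  set C₆ : ℝ := L / (2*M) with hC6def
  have hC₆ : 0 < C₆ := div_pos hL (by positivity)
  set C : ℝ := 10*M/L * Real.exp L + Real.exp (C₆*M) with hCdef
  have hCterm : 0 < 10*(M:ℝ)/L * Real.exp L :=
    mul_pos (div_pos (by positivity) hL) (Real.exp_pos _)
  have hC : 0 < C := add_pos hCterm (Real.exp_pos _)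
  clear_value M C₆ C
  refine ⟨C, hC, C₆, hC₆, fun n hn => ?_⟩
  have hn1 : (1:ℝ) ≤ (n:ℝ) := by exact_mod_cast hn
  have hsqn1 : (1:ℝ) ≤ Real.sqrt n := by
    rw [show (1:ℝ) = Real.sqrt 1 from Real.sqrt_one.symm]
    exact Real.sqrt_le_sqrt hn1
  by_cases hcase : n < M * M
  · -- small n : use the trivial covering by one ball
    have h1 : entropyNum (symmConvexHull (ratDict η)) n ≤ 1 := by
      refine entropyNum_le_of_cover _ _ one_pos {0} ?_ ?_
      · simpa using Nat.one_le_two_pow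
      · intro f hf
        simpa using hull_subset_ball hη hη1 hf
    refine h1.trans ?_
    have hsqM : Real.sqrt n ≤ (M:ℝ) := by
      rw [show (M:ℝ) = Real.sqrt ((M:ℝ)^2) from Real.sqrt_sq (by positivity) |>.symm]
      apply Real.sqrt_le_sqrt
      have h2 : (n:ℝ) ≤ (M:ℝ)*(M:ℝ) := by exact_mod_cast le_of_lt hcase
      nlinarith
    calc (1:ℝ) = Real.exp (C₆*M) * Real.exp (-(C₆*M)) := by
          rw [← Real.exp_add]; simp
      _ ≤ C * Real.exp (-C₆ * Real.sqrt n) := by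
          refine mul_le_mul ?_ ?_ (Real.exp_pos _).le hC.le
          · rw [hCdef]; linarith
          · apply Real.exp_le_exp.2
            have h3 := mul_le_mul_of_nonneg_left hsqM hC₆.le
            linarith [neg_mul C₆ (Real.sqrt n)]
  · -- large n
    push_neg at hcase
    set K : ℕ := 1 + Nat.sqrt n / M with hKdef
    have hsqrtM : M ≤ Nat.sqrt n := by
      calc M = Nat.sqrt (M*M) := (Nat.sqrt_eq M).symm
        _ ≤ Nat.sqrt n := Nat.sqrt_le_sqrt hcase
    have hdiv1 : 1 ≤ Nat.sqrt n / M := (Nat.one_le_div_iff hM0).2 hsqrtM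
    have hKle2 : K ≤ 2 * (Nat.sqrt n / M) := by omega
    have hsq_le : ((Nat.sqrt n : ℕ):ℝ) ≤ Real.sqrt n := by
      rw [Real.le_sqrt (Nat.cast_nonneg _) (by positivity)]
      exact_mod_cast Nat.sqrt_le' n
    have hsq_ge : Real.sqrt n < (Nat.sqrt n : ℝ) + 1 := by
      rw [show ((Nat.sqrt n:ℝ) + 1) = ((Nat.sqrt n + 1 : ℕ):ℝ) from by push_cast; ring,
        Real.sqrt_lt' (by positivity)]
      exact_mod_cast Nat.lt_succ_sqrt' n
    have hKleR : (K:ℝ) ≤ 2 * Real.sqrt n / M := by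
      have h1 : ((Nat.sqrt n / M : ℕ):ℝ) ≤ (Nat.sqrt n : ℝ) / M := Nat.cast_div_le
      have h2 : (K:ℝ) ≤ 2 * ((Nat.sqrt n / M : ℕ):ℝ) := by exact_mod_cast hKle2
      have h3 : (Nat.sqrt n : ℝ) / M ≤ Real.sqrt n / M := by gcongr
      rw [mul_div_assoc]
      linarith
    have hKgeR : Real.sqrt n / M - 1 ≤ (K:ℝ) := by
      have hdm := Nat.div_add_mod (Nat.sqrt n) M
      have hmod := Nat.mod_lt (Nat.sqrt n) hM0
      have h1 : ((Nat.sqrt n : ℕ):ℝ) < (M:ℝ) * ((Nat.sqrt n / M : ℕ):ℝ) + M := by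
        exact_mod_cast (by omega : Nat.sqrt n < M * (Nat.sqrt n / M) + M)
      have hKcast : (K:ℝ) = 1 + ((Nat.sqrt n / M : ℕ):ℝ) := by
        rw [hKdef]; push_cast; ring
      have h2 : Real.sqrt n ≤ (M:ℝ)*(K:ℝ) + M := by
        rw [hKcast]; linarith [hsq_ge, h1, hM1]
      rw [sub_le_iff_le_add, div_le_iff₀ hMR]
      linarith [h2]
    have hK1R : (1:ℝ) ≤ (K:ℝ) := by
      have : 1 ≤ K := by omega
      exact_mod_cast this
    clear_value K
    have hρK0 : (0:ℝ) < ρ^K := pow_pos hρ0 K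
    have hρKle1 : ρ^K ≤ 1 := pow_le_one₀ hρ0.le hρ1.le
    have hinv1 : (1:ℝ) ≤ (ρ^K)⁻¹ := (one_le_inv₀ hρK0).2 hρKle1
    set N : ℕ := ⌈(ρ^K)⁻¹⌉₊ with hNdef
    have hN0 : 0 < N := Nat.ceil_pos.2 (by positivity)
    have hNge : (ρ^K)⁻¹ ≤ (N:ℝ) := Nat.le_ceil _
    have hNlt : (N:ℝ) < (ρ^K)⁻¹ + 1 := Nat.ceil_lt_add_one (by positivity)
    clear_value N
    obtain ⟨T, hTcard, hTsub⟩ := cover hη hη1 K N hN0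
    rw [← hρdef] at hTsub
    have hsn : Real.sqrt n ≤ (n:ℝ) := by
      refine (Real.sqrt_le_left (by positivity)).2 ?_
      have hs1 := mul_le_mul_of_nonneg_left hn1 (show (0:ℝ) ≤ (n:ℝ) by positivity)
      rw [pow_two]
      linarith
    have hcard2 : (N+1)^K ≤ 2^n := by
      have hreal : ((N:ℝ)+1)^K ≤ (2:ℝ)^n := by
        have h3 : ((N:ℝ)+1) ≤ 3 * (ρ^K)⁻¹ := by linarith
        have h3' : ((N:ℝ)+1)^K ≤ (3*(ρ^K)⁻¹)^K :=
          pow_le_pow_left₀ (by positivity) h3 K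
        have hexp : (3*(ρ^K)⁻¹ : ℝ) = Real.exp (Real.log 3 + K*L) := by
          rw [Real.exp_add, Real.exp_log (by norm_num : (0:ℝ) < 3), hρexp K,
            ← Real.exp_neg, neg_neg]
        have hpow : (Real.exp (Real.log 3 + K*L))^K
            = Real.exp ((K:ℝ)*Real.log 3 + (K:ℝ)^2*L) := by
          rw [← Real.exp_nat_mul]; ring_nf
        have hsq2 : (Real.sqrt n)^2 = (n:ℝ) := Real.sq_sqrt (by positivity)
        have hmain : (K:ℝ)*Real.log 3 + (K:ℝ)^2*L ≤ (n:ℝ) * Real.log 2 := by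
          have e1 : (K:ℝ)*Real.log 3 ≤ (2*Real.sqrt n/M)*Real.log 3 :=
            mul_le_mul_of_nonneg_right hKleR hlog3.le
          have e2 : (K:ℝ)^2*L ≤ (2*Real.sqrt n/M)^2*L :=
            mul_le_mul_of_nonneg_right
              (pow_le_pow_left₀ (by positivity) hKleR 2) hL.le
          have e3 : (2*Real.sqrt n/M)^2 = 4*(n:ℝ)/M^2 := by
            rw [div_pow, mul_pow, hsq2]; ring
          have e4 : 4*(n:ℝ)/M^2*L ≤ 4*(n:ℝ)/M*L := by
            apply mul_le_mul_of_nonneg_right _ hL.le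
            rw [div_le_div_iff₀ (by positivity) hMR]
            have h9 := mul_le_mul_of_nonneg_left hM1
              (show (0:ℝ) ≤ 4*(n:ℝ)*M by positivity)
            nlinarith [h9]
          have e5 : (2*Real.sqrt n/M)*Real.log 3 ≤ 2*(n:ℝ)/M*Real.log 3 := by
            apply mul_le_mul_of_nonneg_right _ hlog3.le
            gcongr
          have e6 : 2*(n:ℝ)/M*Real.log 3 + 4*(n:ℝ)/M*L ≤ (n:ℝ)*Real.log 2 := by
            have he : 2*(n:ℝ)/M*Real.log 3 + 4*(n:ℝ)/M*L
                = (n:ℝ)/M * (2*Real.log 3 + 4*L) := by ring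
            rw [he, div_mul_eq_mul_div, div_le_iff₀ hMR]
            nlinarith
          calc (K:ℝ)*Real.log 3 + (K:ℝ)^2*L
              ≤ (2*Real.sqrt n/M)*Real.log 3 + (2*Real.sqrt n/M)^2*L := by linarith
            _ ≤ 2*(n:ℝ)/M*Real.log 3 + 4*(n:ℝ)/M*L := by rw [e3]; linarith
            _ ≤ (n:ℝ)*Real.log 2 := e6
        calc ((N:ℝ)+1)^K ≤ (3*(ρ^K)⁻¹)^K := h3'
          _ = Real.exp ((K:ℝ)*Real.log 3 + (K:ℝ)^2*L) := by rw [hexp, hpow]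
          _ ≤ Real.exp ((n:ℝ) * Real.log 2) := Real.exp_le_exp.2 hmain
          _ = (2:ℝ)^n := by
              rw [Real.exp_nat_mul, Real.exp_log (by norm_num : (0:ℝ) < 2)]
      exact_mod_cast hreal
    have hbound : entropyNum (symmConvexHull (ratDict η)) n ≤ ρ^K + 2*K/N := by
      refine entropyNum_le_of_cover _ _ (by positivity) T (hTcard.trans hcard2) hTsub
    have hNinv : ((N:ℝ))⁻¹ ≤ ρ^K := by
      rw [show ρ^K = ((ρ^K)⁻¹)⁻¹ from (inv_inv _).symm]
      gcongr
    have hrad1 : ρ^K + 2*(K:ℝ)/N ≤ (2*K+1) * ρ^K := by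
      have h4 : 2*(K:ℝ)*(N:ℝ)⁻¹ ≤ 2*K*ρ^K :=
        mul_le_mul_of_nonneg_left hNinv (by positivity)
      have h5 : 2*(K:ℝ)/N = 2*K*(N:ℝ)⁻¹ := by ring
      nlinarith
    have hKρ : (2*(K:ℝ)+1) ≤ 5*Real.sqrt n := by
      have h6 : 2 * Real.sqrt n / M ≤ 2*Real.sqrt n := by
        rw [div_le_iff₀ hMR]
        have h7 := mul_le_mul_of_nonneg_left hM1 (by positivity : (0:ℝ) ≤ 2*Real.sqrt n)
        linarith
      linarith
    have hρKexp : ρ^K ≤ Real.exp L * Real.exp (-(2*C₆) * Real.sqrt n) := by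
      rw [hρexp K, ← Real.exp_add]
      apply Real.exp_le_exp.2
      have h7 := mul_le_mul_of_nonneg_right hKgeR hL.le
      have h8 : 2*C₆ = L/M := by rw [hC6def]; field_simp
      rw [h8]
      have h9 : L/M * Real.sqrt n = (Real.sqrt n / M - 1)*L + L := by
        field_simp
        ring
      nlinarith
    have hsqrt_exp : Real.sqrt n ≤ (2*(M:ℝ)/L) * Real.exp (C₆ * Real.sqrt n) := by
      have ht := Real.add_one_le_exp (C₆ * Real.sqrt n)
      have hC6inv : (2*(M:ℝ)/L) = C₆⁻¹ := by
        rw [hC6def]; field_simp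
      rw [hC6inv, inv_mul_eq_div, le_div_iff₀ hC₆]
      nlinarith
    calc entropyNum (symmConvexHull (ratDict η)) n ≤ ρ^K + 2*K/N := hbound
      _ ≤ (2*(K:ℝ)+1)*ρ^K := hrad1
      _ ≤ (5*Real.sqrt n) * (Real.exp L * Real.exp (-(2*C₆)*Real.sqrt n)) := by
          refine mul_le_mul hKρ hρKexp hρK0.le (by positivity)
      _ ≤ (5*((2*(M:ℝ)/L)*Real.exp (C₆*Real.sqrt n)))
            * (Real.exp L * Real.exp (-(2*C₆)*Real.sqrt n)) := by
          refine mul_le_mul_of_nonneg_right ?_ (by positivity)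
          linarith [mul_le_mul_of_nonneg_left hsqrt_exp (by norm_num : (0:ℝ) ≤ 5)]
      _ = (10*(M:ℝ)/L*Real.exp L) * Real.exp (-C₆*Real.sqrt n) := by
          rw [show (5*((2*(M:ℝ)/L)*Real.exp (C₆*Real.sqrt n)))
                * (Real.exp L * Real.exp (-(2*C₆)*Real.sqrt n))
              = (10*(M:ℝ)/L*Real.exp L)
                * (Real.exp (C₆*Real.sqrt n) * Real.exp (-(2*C₆)*Real.sqrt n)) from by ring,
            ← Real.exp_add,
            show C₆*Real.sqrt n + -(2*C₆)*Real.sqrt n = -C₆*Real.sqrt n from by ring]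
      _ ≤ C * Real.exp (-C₆*Real.sqrt n) := by
          refine mul_le_mul_of_nonneg_right ?_ (Real.exp_pos _).le
          rw [hCdef]
          linarith [Real.exp_pos (C₆*(M:ℝ))]
end

section
/- Fix 0 < η < 1 and let I = [η, 1]. Let D = { g(·,b) : b ∈ (0,∞) } ⊆ C(I) be the rational dictionary with g(x,b) = (η+b)/(x+b). Then there exist constants C > 0 and c > 0 such that the Kolmogorov widths satisfy d_n(D) ≤ C·e^{−c·n} for all integers n ≥ 1, where the widths are taken in C(I) with the supremum norm. -/
section aux

variable {η : ℝ}

/-- The monomial `(x - x₀)^k` on `[η,1]`, where `x₀ = (1+η)/2`. -/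
noncomputable def monCM (η : ℝ) (k : ℕ) : C(Set.Icc η 1, ℝ) :=
  ⟨fun x => ((x : ℝ) - (1 + η) / 2) ^ k, by fun_prop⟩

lemma alg_id (A t : ℝ) (h : t ≠ 1) (n : ℕ) :
    A / (1 - t) - A * ((t ^ n - 1) / (t - 1)) = A / (1 - t) * t ^ n := by
  have h1 : (1 : ℝ) - t ≠ 0 := fun h0 => h (by linarith [sub_eq_zero.mp h0])
  have h2 : t - 1 ≠ 0 := fun h0 => h (by linarith [sub_eq_zero.mp h0])
  field_simp
  ring

lemma key_pointwise (hη : 0 < η) (hη1 : η < 1) {b : ℝ} (hb : 0 < b) (n : ℕ)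
    (x : Set.Icc η 1) :
    |(η + b) / ((x : ℝ) + b) -
      ∑ k : Fin n, ((η + b) / ((1 + η) / 2 + b) * (-(1 / ((1 + η) / 2 + b))) ^ (k : ℕ))
        * ((x : ℝ) - (1 + η) / 2) ^ (k : ℕ)|
      ≤ ((1 - η) / (1 + η)) ^ n := by
  obtain ⟨x, hx1, hx2⟩ := x
  simp only [Set.mem_Icc] at *
  set x0 : ℝ := (1 + η) / 2 with hx0
  have hx0pos : 0 < x0 := by positivity
  have hx0b : 0 < x0 + b := by positivity
  have hxb : 0 < x + b := by linarith
  have hηb : 0 < η + b := by linarith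
  set t : ℝ := (x0 - x) / (x0 + b) with ht
  set r : ℝ := (1 - η) / (1 + η) with hr
  have habs : |t| ≤ r := by
    rw [ht, abs_div, abs_of_pos hx0b]
    have h1 : |x0 - x| ≤ (1 - η) / 2 :=
      abs_le.mpr ⟨by simp only [hx0]; linarith, by simp only [hx0]; linarith⟩
    have h2 : (1 + η) / 2 ≤ x0 + b := by simp only [hx0]; linarith
    calc |x0 - x| / (x0 + b) ≤ ((1 - η) / 2) / ((1 + η) / 2) :=
          div_le_div₀ (by linarith) h1 (by positivity) h2
      _ = r := by rw [hr]; field_simp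
  have hrlt : r < 1 := by
    rw [hr, div_lt_one (by linarith)]; linarith
  have htne : t ≠ 1 := by
    intro h
    rw [h] at habs
    simp at habs; linarith
  have hbase : t = -(1 / (x0 + b)) * (x - x0) := by
    rw [ht]; field_simp; ring
  have hfx : (η + b) / (x + b) = (η + b) / (x0 + b) / (1 - t) := by
    have h1t : x + b = (1 - t) * (x0 + b) := by
      rw [ht]; field_simp; ring
    rw [h1t, div_div]
    ring_nf
  -- rewrite the sum
  have hsum : ∑ k : Fin n, ((η + b) / (x0 + b) * (-(1 / (x0 + b))) ^ (k : ℕ))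
        * (x - x0) ^ (k : ℕ)
      = (η + b) / (x0 + b) * ((t ^ n - 1) / (t - 1)) := by
    rw [← geom_sum_eq htne n, Finset.mul_sum,
      ← Fin.sum_univ_eq_sum_range (fun i => (η + b) / (x0 + b) * t ^ i) n]
    refine Finset.sum_congr rfl fun k _ => ?_
    rw [hbase, mul_pow]
    ring
  rw [hsum, hfx, alg_id _ _ htne n, abs_mul, abs_pow]
  have h1 : |(η + b) / (x0 + b) / (1 - t)| ≤ 1 := by
    rw [← hfx, abs_of_pos (div_pos hηb hxb), div_le_one hxb]
    linarith
  calc |(η + b) / (x0 + b) / (1 - t)| * |t| ^ n ≤ 1 * r ^ n :=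
        mul_le_mul h1 (pow_le_pow_left₀ (abs_nonneg t) habs n) (by positivity) (by norm_num)
    _ = r ^ n := one_mul _

end aux

theorem stmt11 (η : ℝ) (hη : 0 < η) (hη1 : η < 1) :
    ∃ C > (0:ℝ), ∃ c > (0:ℝ), ∀ n : ℕ, 1 ≤ n →
      kolWidth ℝ (ratDict η) n ≤ C * Real.exp (-c * n) := by
  have hle : η ≤ 1 := le_of_lt hη1
  haveI : Fact (η ≤ 1) := ⟨hle⟩
  set r : ℝ := (1 - η) / (1 + η) with hr
  have hrpos : 0 < r := by rw [hr]; exact div_pos (by linarith) (by linarith)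
  have hrlt : r < 1 := by rw [hr, div_lt_one (by linarith)]; linarith
  refine ⟨1, one_pos, Real.log (1/r), ?_, ?_⟩
  · apply Real.log_pos
    rw [one_div, lt_inv_comm₀ one_pos hrpos]
    simpa using hrlt
  intro n hn
  -- the candidate subspace: span of monomials (x - x0)^k, k < n
  set V : Submodule ℝ C(Set.Icc η 1, ℝ) :=
    Submodule.span ℝ (Set.range fun k : Fin n => monCM η (k : ℕ)) with hV
  have hfd : FiniteDimensional ℝ V := by
    apply FiniteDimensional.span_of_finite
    exact Set.finite_range _
  have hrank : Module.finrank ℝ V ≤ n := by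
    classical
    refine le_trans (finrank_span_le_card _) ?_
    rw [Set.toFinset_range]
    exact le_trans (Finset.card_image_le) (by simp)
  -- the target bound for this subspace
  have hbound : ∀ f : ratDict η, (⨅ g : V, ‖(f : C(Set.Icc η 1, ℝ)) - (g : C(Set.Icc η 1, ℝ))‖) ≤ r ^ n := by
    rintro ⟨f, b, hb, hf⟩
    set g : C(Set.Icc η 1, ℝ) :=
      ∑ k : Fin n, ((η + b) / ((1 + η) / 2 + b) * (-(1 / ((1 + η) / 2 + b))) ^ (k : ℕ)) •
        monCM η (k : ℕ) with hg
    have hgV : g ∈ V := by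
      rw [hg, hV]
      exact Submodule.sum_smul_mem _ _ fun k _ => Submodule.subset_span ⟨k, rfl⟩
    have hnorm : ‖f - g‖ ≤ r ^ n := by
      rw [ContinuousMap.norm_le _ (pow_nonneg hrpos.le n)]
      intro x
      have := key_pointwise hη hη1 hb n x
      rw [ContinuousMap.sub_apply, hf x, hg]
      simp only [ContinuousMap.coe_sum, ContinuousMap.coe_smul, Finset.sum_apply,
        Pi.smul_apply, smul_eq_mul, Real.norm_eq_abs]
      convert this using 3
      rfl
    refine le_trans (ciInf_le ⟨0, ?_⟩ (⟨g, hgV⟩ : V)) hnorm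
    rintro y ⟨z, rfl⟩
    exact norm_nonneg _
  have hD : Nonempty (ratDict η) := ⟨⟨⟨fun x => (η + 1) / ((x : ℝ) + 1),
    Continuous.div (by fun_prop) (by fun_prop)
      (fun x => by have := x.2.1; intro h; nlinarith)⟩,
    1, one_pos, fun x => rfl⟩⟩
  have hstep : kolWidth ℝ (ratDict η) n ≤ r ^ n := by
    have h1 : kolWidth ℝ (ratDict η) n ≤
        ⨆ f : ratDict η, ⨅ g : V, ‖(f : C(Set.Icc η 1, ℝ)) - (g : C(Set.Icc η 1, ℝ))‖ := by
      apply ciInf_le ⟨0, ?_⟩ (⟨V, hfd, hrank⟩ :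
        {V : Submodule ℝ C(Set.Icc η 1, ℝ) // FiniteDimensional ℝ V ∧ Module.finrank ℝ V ≤ n})
      rintro y ⟨W, rfl⟩
      exact Real.iSup_nonneg fun f => Real.iInf_nonneg fun g => norm_nonneg _
    exact h1.trans (ciSup_le hbound)
  refine hstep.trans (le_of_eq ?_)
  rw [one_mul,
    show (-Real.log (1 / r) * (n : ℝ)) = (n : ℝ) * Real.log r by
      rw [one_div, Real.log_inv]; ring,
    Real.exp_nat_mul, Real.exp_log hrpos]
end

section
/- Fix 0 < η < 1, let I = [η, 1], and let 1 ≤ p < ∞. Regard the rational dictionary D = { g(·,b) : b ∈ (0,∞) }, with g(x,b) = (η+b)/(x+b), as a subset of the Lebesgue space L^p(I), and let B₁(D) denote the closure in the L^p(I) norm of { Σ_{j=1}^m c_j g_j : m ∈ ℕ, g_j ∈ D, c_j ∈ ℝ, Σ|c_j| ≤ 1 }. Then there exist constants C > 0 and C₆ > 0 such that ε_n(B₁(D))_{L^p(I)} ≤ C·e^{−C₆·n^{1/2}} for all integers n ≥ 1. -/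
open MeasureTheory ENNReal

/-- The rational dictionary `D = { (η+b)/(x+b) : b ∈ (0,∞) }` viewed inside `L^p([η,1])`. -/
def ratDictLp (η : ℝ) (p : ℝ≥0∞) [Fact (1 ≤ p)] :
    Set (Lp ℝ p (volume.restrict (Set.Icc η 1))) :=
  { f | ∃ b > (0:ℝ), ∀ᵐ x ∂(volume.restrict (Set.Icc η 1)), f x = (η + b) / (x + b) }

namespace Stmt13Aux

/-- The scaled monomial basis functions on `[η,1]`. -/
noncomputable def eFun (η : ℝ) (j : ℕ) : ℝ → ℝ :=
  fun x => ((x - (1+η)/2) / ((1-η)/2)) ^ j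

lemma eFun_cont (η : ℝ) (j : ℕ) : Continuous (eFun η j) := by
  unfold eFun; fun_prop

lemma eFun_bound {η : ℝ} (hη1 : η < 1) (j : ℕ) {x : ℝ} (hx : x ∈ Set.Icc η 1) :
    |eFun η j x| ≤ 1 := by
  have hc : (0:ℝ) < (1-η)/2 := by linarith
  have h1 : |x - (1+η)/2| ≤ (1-η)/2 := by
    rw [abs_le]
    constructor
    · linarith [hx.1]
    · linarith [hx.2]
  have h2 : |(x - (1+η)/2) / ((1-η)/2)| ≤ 1 := by
    rw [abs_div, abs_of_pos hc, div_le_one hc]; exact h1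
  calc |eFun η j x| = |(x - (1+η)/2) / ((1-η)/2)| ^ j := by rw [eFun, abs_pow]
    _ ≤ 1 := pow_le_one₀ (abs_nonneg _) h2

lemma memℒp_eFun (η : ℝ) (hη1 : η < 1) (p : ℝ≥0∞) (j : ℕ) :
    MemLp (eFun η j) p (volume.restrict (Set.Icc η 1)) := by
  refine MemLp.of_bound ((eFun_cont η j).aestronglyMeasurable) 1 ?_
  refine (ae_restrict_iff' measurableSet_Icc).2 (ae_of_all _ fun x hx => ?_)
  rw [Real.norm_eq_abs]
  exact eFun_bound hη1 j hx

/-- The basis functions as elements of `L^p`. -/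
noncomputable def basis (η : ℝ) (hη1 : η < 1) (p : ℝ≥0∞) [Fact (1 ≤ p)] (j : ℕ) :
    Lp ℝ p (volume.restrict (Set.Icc η 1)) :=
  (memℒp_eFun η hη1 p j).toLp _

lemma norm_le_of_ae_bound {η : ℝ} (hη : 0 ≤ η) {p : ℝ≥0∞} [Fact (1 ≤ p)]
    {f : Lp ℝ p (volume.restrict (Set.Icc η 1))} {B : ℝ} (hB : 0 ≤ B)
    (h : ∀ᵐ x ∂(volume.restrict (Set.Icc η 1)), |f x| ≤ B) : ‖f‖ ≤ B := by
  rw [Lp.norm_def]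
  refine ENNReal.toReal_le_of_le_ofReal hB ?_
  calc eLpNorm f p (volume.restrict (Set.Icc η 1))
      ≤ (volume.restrict (Set.Icc η 1)) Set.univ ^ p.toReal⁻¹ * ENNReal.ofReal B :=
        eLpNorm_le_of_ae_bound (by simpa [Real.norm_eq_abs] using h)
    _ ≤ 1 * ENNReal.ofReal B := by
        gcongr
        apply ENNReal.rpow_le_one _ (by positivity)
        rw [Measure.restrict_apply_univ, Real.volume_Icc]
        exact ENNReal.ofReal_le_one.2 (by linarith)
    _ = ENNReal.ofReal B := one_mul _

lemma coeFn_finset_sum {ι : Type*} {p : ℝ≥0∞} [Fact (1 ≤ p)] {η : ℝ}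
    (s : Finset ι) (f : ι → Lp ℝ p (volume.restrict (Set.Icc η 1))) :
    ⇑(∑ i ∈ s, f i) =ᵐ[volume.restrict (Set.Icc η 1)] fun x => ∑ i ∈ s, f i x := by
  classical
  induction s using Finset.cons_induction with
  | empty => simp only [Finset.sum_empty]; exact Lp.coeFn_zero ℝ p (volume.restrict (Set.Icc η 1))
  | cons a s ha ih =>
    simp only [Finset.sum_cons]
    filter_upwards [Lp.coeFn_add (f a) (∑ i ∈ s, f i), ih] with x h1 h2
    simp only [h1, Pi.add_apply, h2]

lemma norm_basis_le {η : ℝ} (hη : 0 < η) (hη1 : η < 1) (p : ℝ≥0∞) [Fact (1 ≤ p)] (j : ℕ) :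
    ‖basis η hη1 p j‖ ≤ 1 := by
  apply norm_le_of_ae_bound hη.le zero_le_one
  filter_upwards [MemLp.coeFn_toLp (memℒp_eFun η hη1 p j),
    ae_restrict_mem (measurableSet_Icc : MeasurableSet (Set.Icc η 1))] with x h1 h2
  simp only [basis]
  rw [h1]
  exact eFun_bound hη1 j h2

lemma key_pointwise {η : ℝ} (hη : 0 < η) (hη1 : η < 1) {b : ℝ} (hb : 0 < b) (k : ℕ)
    {x : ℝ} (hx : x ∈ Set.Icc η 1) :
    |(η + b) / (x + b) - ∑ j ∈ Finset.range k,
      ((η+b) / ((1+η)/2 + b) * (-((1-η)/2) / ((1+η)/2 + b))^j) * eFun η j x|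
      ≤ ((1-η)/(1+η))^k := by
  have hx1 : η ≤ x := hx.1
  have hx2 : x ≤ 1 := hx.2
  set c : ℝ := (1-η)/2 with hc_def
  set x₀ : ℝ := (1+η)/2 with hx₀_def
  set d : ℝ := x₀ + b with hd_def
  have hc : 0 < c := by simp only [hc_def]; linarith
  have hx₀ : 0 < x₀ := by simp only [hx₀_def]; linarith
  have hd : 0 < d := by simp only [hd_def]; linarith
  have hxb : 0 < x + b := by linarith
  set r : ℝ := -(x - x₀)/d with hr_def
  -- each term simplifies
  have hterm : ∀ j : ℕ, ((η+b) / d * (-c / d)^j) * eFun η j x = (η+b)/d * r^j := by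
    intro j
    have hne1 : ((1-η) : ℝ) ≠ 0 := ne_of_gt (by linarith)
    have hne2 : ((1+η) : ℝ) ≠ 0 := by positivity
    have hdne : ((1+η)/2 + b : ℝ) ≠ 0 := by positivity
    have h1 : (-c / d)^j * ((x - x₀)/c)^j = r^j := by
      rw [← mul_pow]
      congr 1
      simp only [hr_def, hd_def, hx₀_def, hc_def]
      field_simp
    rw [eFun]
    rw [mul_assoc, ← hx₀_def, h1]
  -- geometric identity by induction
  have hiter : ∀ m : ℕ, (η + b) / (x + b) - ∑ j ∈ Finset.range m, (η+b)/d * r^j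
      = (η + b) / (x + b) * r^m := by
    intro m
    induction m with
    | zero => simp
    | succ m ih =>
      rw [Finset.sum_range_succ]
      have h2 : (η + b) / (x + b) - (∑ j ∈ Finset.range m, (η+b)/d * r^j + (η+b)/d * r^m)
          = ((η + b) / (x + b) - ∑ j ∈ Finset.range m, (η+b)/d * r^j) - (η+b)/d * r^m := by
        ring
      rw [h2, ih]
      have hr1 : (η + b) / (x + b) - (η+b)/d = (η + b) / (x + b) * r := by
        have hcne : ((1-η)/2 : ℝ) ≠ 0 := by positivity
        have hdne : ((1+η)/2 + b : ℝ) ≠ 0 := by positivity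
        simp only [hr_def, hd_def, hx₀_def, hc_def]
        field_simp
        ring
      calc (η + b) / (x + b) * r^m - (η+b)/d * r^m
          = ((η + b) / (x + b) - (η+b)/d) * r^m := by ring
        _ = (η + b) / (x + b) * r^(m+1) := by rw [hr1]; ring
  have hsum : ∑ j ∈ Finset.range k,
      ((η+b) / d * (-c / d)^j) * eFun η j x = ∑ j ∈ Finset.range k, (η+b)/d * r^j :=
    Finset.sum_congr rfl fun j _ => hterm j
  rw [hsum, hiter k]
  -- bound
  have hg : |(η + b) / (x + b)| ≤ 1 := by
    rw [abs_of_pos (by positivity), div_le_one hxb]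
    linarith
  have hrq : |r| ≤ (1-η)/(1+η) := by
    have h3 : |r| = |x - x₀| / d := by
      rw [hr_def, abs_div, abs_neg, abs_of_pos hd]
    have h4 : |x - x₀| ≤ c := by
      rw [abs_le]
      constructor
      · simp only [hx₀_def, hc_def]; linarith
      · simp only [hx₀_def, hc_def]; linarith
    have hx₀d : x₀ ≤ d := by simp only [hd_def]; linarith
    have h5 : |x - x₀| / d ≤ c / x₀ := div_le_div₀ hc.le h4 hx₀ hx₀d
    have h6 : c / x₀ = (1-η)/(1+η) := by
      simp only [hc_def, hx₀_def]
      have : (1+η : ℝ) ≠ 0 := by positivity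
      field_simp
    calc |r| = |x - x₀| / d := h3
      _ ≤ c / x₀ := h5
      _ = (1-η)/(1+η) := h6
  calc |(η + b) / (x + b) * r^k| = |(η + b) / (x + b)| * |r|^k := by
        rw [abs_mul, abs_pow]
    _ ≤ 1 * ((1-η)/(1+η))^k := by
        apply mul_le_mul hg (pow_le_pow_left₀ (abs_nonneg _) hrq k) (by positivity) zero_le_one
    _ = ((1-η)/(1+η))^k := one_mul _

lemma dict_approx {η : ℝ} (hη : 0 < η) (hη1 : η < 1) {p : ℝ≥0∞} [Fact (1 ≤ p)] (k : ℕ)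
    {f : Lp ℝ p (volume.restrict (Set.Icc η 1))} (hf : f ∈ ratDictLp η p) :
    ∃ t : Fin k → ℝ, (∀ j, |t j| ≤ ((1-η)/(1+η))^(j:ℕ)) ∧
      ‖f - ∑ j, t j • basis η hη1 p j‖ ≤ ((1-η)/(1+η))^k := by
  obtain ⟨b, hb, hfae⟩ := hf
  have hd : (0:ℝ) < (1+η)/2 + b := by linarith
  refine ⟨fun j => (η+b) / ((1+η)/2 + b) * (-((1-η)/2) / ((1+η)/2 + b))^(j:ℕ), ?_, ?_⟩
  · intro j
    have h1 : |(η+b) / ((1+η)/2 + b)| ≤ 1 := by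
      rw [abs_of_pos (by positivity), div_le_one hd]
      linarith
    have h2 : |(-((1-η)/2) / ((1+η)/2 + b))| ≤ (1-η)/(1+η) := by
      rw [abs_div, abs_neg, abs_of_pos (by linarith : (0:ℝ) < (1-η)/2), abs_of_pos hd]
      calc (1-η)/2 / ((1+η)/2 + b) ≤ (1-η)/2 / ((1+η)/2) := by
            apply div_le_div₀ (by linarith) le_rfl (by linarith) (by linarith)
        _ = (1-η)/(1+η) := by
            have : (1+η : ℝ) ≠ 0 := by positivity
            field_simp
    calc |(η+b) / ((1+η)/2 + b) * (-((1-η)/2) / ((1+η)/2 + b))^(j:ℕ)|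
        = |(η+b) / ((1+η)/2 + b)| * |(-((1-η)/2) / ((1+η)/2 + b))|^(j:ℕ) := by
          rw [abs_mul, abs_pow]
      _ ≤ 1 * ((1-η)/(1+η))^(j:ℕ) := by
          apply mul_le_mul h1 (pow_le_pow_left₀ (abs_nonneg _) h2 _) (by positivity) zero_le_one
      _ = ((1-η)/(1+η))^(j:ℕ) := one_mul _
  · apply norm_le_of_ae_bound hη.le (pow_nonneg (div_nonneg (by linarith) (by linarith)) k)
    set t : Fin k → ℝ :=
      fun j => (η+b) / ((1+η)/2 + b) * (-((1-η)/2) / ((1+η)/2 + b))^(j:ℕ) with ht_def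
    have hS : ∀ᵐ x ∂(volume.restrict (Set.Icc η 1)),
        (∑ j : Fin k, t j • basis η hη1 p j : Lp ℝ p (volume.restrict (Set.Icc η 1))) x
          = ∑ j : Fin k, t j * eFun η (j:ℕ) x := by
      have hall : ∀ᵐ x ∂(volume.restrict (Set.Icc η 1)), ∀ j : Fin k,
          (t j • basis η hη1 p j : Lp ℝ p (volume.restrict (Set.Icc η 1))) x
            = t j * eFun η (j:ℕ) x := by
        rw [ae_all_iff]
        intro j
        filter_upwards [Lp.coeFn_smul (t j) (basis η hη1 p j),
          MemLp.coeFn_toLp (memℒp_eFun η hη1 p (j:ℕ))] with x ha hb'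
        rw [ha]
        simp only [Pi.smul_apply, smul_eq_mul, basis]
        rw [hb']
      filter_upwards [coeFn_finset_sum Finset.univ
        (fun j : Fin k => t j • basis η hη1 p j), hall] with x h1 h2
      rw [h1]
      exact Finset.sum_congr rfl fun j _ => h2 j
    filter_upwards [Lp.coeFn_sub f (∑ j : Fin k, t j • basis η hη1 p j), hS, hfae,
      ae_restrict_mem (measurableSet_Icc : MeasurableSet (Set.Icc η 1))] with x h1 h2 h3 h4
    rw [h1]
    simp only [Pi.sub_apply]
    rw [h2, h3]
    have := key_pointwise hη hη1 hb k h4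
    rw [← Fin.sum_univ_eq_sum_range
      (fun j => ((η+b) / ((1+η)/2 + b) * (-((1-η)/2) / ((1+η)/2 + b))^j) * eFun η j x) k] at this
    exact this

lemma combo_approx {η : ℝ} (hη : 0 < η) (hη1 : η < 1) {p : ℝ≥0∞} [Fact (1 ≤ p)] (k : ℕ)
    {f : Lp ℝ p (volume.restrict (Set.Icc η 1))}
    (hf : ∃ (m : ℕ) (c : Fin m → ℝ) (g : Fin m → Lp ℝ p (volume.restrict (Set.Icc η 1))),
      (∀ j, g j ∈ ratDictLp η p) ∧ (∑ j, |c j|) ≤ 1 ∧ f = ∑ j, c j • g j) :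
    ∃ t : Fin k → ℝ, (∀ j, |t j| ≤ ((1-η)/(1+η))^(j:ℕ)) ∧
      ‖f - ∑ j, t j • basis η hη1 p j‖ ≤ ((1-η)/(1+η))^k := by
  obtain ⟨m, c, g, hg, hc, rfl⟩ := hf
  choose t ht1 ht2 using fun i => dict_approx hη hη1 k (hg i)
  have hq0 : (0:ℝ) ≤ (1-η)/(1+η) := div_nonneg (by linarith) (by linarith)
  refine ⟨fun j => ∑ i, c i * t i j, ?_, ?_⟩
  · intro j
    calc |∑ i, c i * t i j| ≤ ∑ i, |c i * t i j| := Finset.abs_sum_le_sum_abs _ _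
      _ ≤ ∑ i, |c i| * ((1-η)/(1+η))^(j:ℕ) := by
          apply Finset.sum_le_sum
          intro i _
          rw [abs_mul]
          exact mul_le_mul_of_nonneg_left (ht1 i j) (abs_nonneg _)
      _ = (∑ i, |c i|) * ((1-η)/(1+η))^(j:ℕ) := by rw [Finset.sum_mul]
      _ ≤ 1 * ((1-η)/(1+η))^(j:ℕ) := by
          apply mul_le_mul_of_nonneg_right hc (pow_nonneg hq0 _)
      _ = ((1-η)/(1+η))^(j:ℕ) := one_mul _
  · have key : (∑ i, c i • g i) - (∑ j, (∑ i, c i * t i j) • basis η hη1 p j)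
        = ∑ i, c i • (g i - ∑ j, t i j • basis η hη1 p j) := by
      simp only [smul_sub, Finset.sum_sub_distrib, Finset.smul_sum, smul_smul]
      congr 1
      rw [Finset.sum_comm]
      exact Finset.sum_congr rfl fun j _ => Finset.sum_smul
    rw [key]
    calc ‖∑ i, c i • (g i - ∑ j, t i j • basis η hη1 p j)‖
        ≤ ∑ i, ‖c i • (g i - ∑ j, t i j • basis η hη1 p j)‖ := norm_sum_le _ _
      _ = ∑ i, |c i| * ‖g i - ∑ j, t i j • basis η hη1 p j‖ := by
          simp [norm_smul, Real.norm_eq_abs]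
      _ ≤ ∑ i, |c i| * ((1-η)/(1+η))^k := by
          apply Finset.sum_le_sum
          intro i _
          exact mul_le_mul_of_nonneg_left (ht2 i) (abs_nonneg _)
      _ = (∑ i, |c i|) * ((1-η)/(1+η))^k := by rw [Finset.sum_mul]
      _ ≤ 1 * ((1-η)/(1+η))^k := mul_le_mul_of_nonneg_right hc (pow_nonneg hq0 _)
      _ = ((1-η)/(1+η))^k := one_mul _

lemma grid_pt {M : ℕ} (hM : 1 ≤ M) {t : ℝ} (h : |t| ≤ 1) :
    ∃ i : ℕ, i ≤ M ∧ |t - (2*(i:ℝ)/M - 1)| ≤ 2/M := by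
  have hM' : (0:ℝ) < M := by exact_mod_cast hM
  obtain ⟨ha1, ha2⟩ := abs_le.1 h
  set s : ℝ := (t+1)*M/2 with hs_def
  have hs0 : 0 ≤ s := by
    rw [hs_def]
    apply div_nonneg (mul_nonneg (by linarith) hM'.le) (by norm_num)
  have hsM : s ≤ M := by rw [hs_def]; nlinarith
  refine ⟨⌊s⌋.toNat, ?_, ?_⟩
  · exact Int.toNat_le.mpr ((Int.floor_le_floor hsM).trans_eq (Int.floor_natCast M))
  · have hge : (0:ℤ) ≤ ⌊s⌋ := Int.floor_nonneg.2 hs0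
    have hcast : ((⌊s⌋.toNat : ℕ) : ℝ) = ((⌊s⌋ : ℤ) : ℝ) := by
      exact_mod_cast congrArg (fun z : ℤ => (z:ℝ)) (Int.toNat_of_nonneg hge)
    rw [hcast]
    have hf1 : ((⌊s⌋:ℤ):ℝ) ≤ s := Int.floor_le s
    have hf2 : s - 1 < ((⌊s⌋:ℤ):ℝ) := Int.sub_one_lt_floor s
    have ht' : t = 2*s/M - 1 := by rw [hs_def]; field_simp; ring
    rw [ht']
    rw [show 2*s/M - 1 - (2*((⌊s⌋:ℤ):ℝ)/M - 1) = 2*(s - ((⌊s⌋:ℤ):ℝ))/M from by ring]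
    rw [abs_of_nonneg (div_nonneg (by linarith) hM'.le)]
    gcongr
    linarith

lemma grid_cover {η : ℝ} (hη : 0 < η) (hη1 : η < 1) {p : ℝ≥0∞} [Fact (1 ≤ p)]
    (k M : ℕ) (hM : 1 ≤ M) :
    ∃ T : Finset (Lp ℝ p (volume.restrict (Set.Icc η 1))),
      T.card ≤ (M+1)^k ∧ ∀ t : Fin k → ℝ, (∀ j, |t j| ≤ 1) →
        ∃ y ∈ T, ‖(∑ j, t j • basis η hη1 p j) - y‖ ≤ 2*k/M := by
  classical
  have hM' : (0:ℝ) < M := by exact_mod_cast hM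
  refine ⟨Finset.image
    (fun v : Fin k → Fin (M+1) => ∑ j, (2*((v j : ℕ):ℝ)/M - 1) • basis η hη1 p j)
    Finset.univ, ?_, ?_⟩
  · calc (Finset.image _ Finset.univ).card
        ≤ (Finset.univ : Finset (Fin k → Fin (M+1))).card := Finset.card_image_le
      _ = (M+1)^k := by simp
  · intro t ht
    choose i hi1 hi2 using fun j => grid_pt hM (ht j)
    set v : Fin k → Fin (M+1) := fun j => ⟨i j, Nat.lt_succ_of_le (hi1 j)⟩ with hv
    refine ⟨_, Finset.mem_image_of_mem _ (Finset.mem_univ v), ?_⟩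
    have hco : ∀ j : Fin k, ((v j : ℕ) : ℝ) = (i j : ℝ) := fun j => rfl
    have hrw : (∑ j, t j • basis η hη1 p j) - ∑ j, (2*((v j : ℕ):ℝ)/M - 1) • basis η hη1 p j
        = ∑ j : Fin k, (t j - (2*((i j:ℕ):ℝ)/M - 1)) • basis η hη1 p j := by
      rw [← Finset.sum_sub_distrib]
      refine Finset.sum_congr rfl fun j _ => ?_
      rw [hco j, ← sub_smul]
    rw [hrw]
    calc ‖∑ j : Fin k, (t j - (2*((i j:ℕ):ℝ)/M - 1)) • basis η hη1 p j‖
        ≤ ∑ j : Fin k, ‖(t j - (2*((i j:ℕ):ℝ)/M - 1)) • basis η hη1 p j‖ := norm_sum_le _ _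
      _ = ∑ j : Fin k, |t j - (2*((i j:ℕ):ℝ)/M - 1)| * ‖basis η hη1 p j‖ := by
          simp [norm_smul, Real.norm_eq_abs]
      _ ≤ ∑ _j : Fin k, (2/(M:ℝ)) * 1 := by
          refine Finset.sum_le_sum fun j _ => ?_
          exact mul_le_mul (hi2 j) (norm_basis_le hη hη1 p j) (norm_nonneg _) (by positivity)
      _ = 2*k/M := by
          rw [Finset.sum_const, Finset.card_univ, Fintype.card_fin, nsmul_eq_mul]
          ring

lemma main_cover {η : ℝ} (hη : 0 < η) (hη1 : η < 1) {p : ℝ≥0∞} [Fact (1 ≤ p)] (k : ℕ) :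
    ∃ T : Finset (Lp ℝ p (volume.restrict (Set.Icc η 1))),
      T.card ≤ (4^k+1)^k ∧
      symmConvexHull (ratDictLp η p) ⊆
        ⋃ y ∈ T, Metric.closedBall y (((1-η)/(1+η))^k + 2*k/((4:ℕ)^k : ℕ)) := by
  obtain ⟨T, hcard, hT⟩ := grid_cover hη hη1 (p := p) k (4^k) (Nat.one_le_pow k 4 (by norm_num))
  refine ⟨T, hcard, ?_⟩
  rw [symmConvexHull]
  apply closure_minimal ?_
    (Set.Finite.isClosed_biUnion T.finite_toSet fun y _ => Metric.isClosed_closedBall)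
  intro f hf
  obtain ⟨t, ht1, ht2⟩ := combo_approx hη hη1 k hf
  have hq0 : (0:ℝ) ≤ (1-η)/(1+η) := div_nonneg (by linarith) (by linarith)
  have hq1 : ((1-η)/(1+η) : ℝ) ≤ 1 := by
    rw [div_le_one (by linarith)]; linarith
  have ht1' : ∀ j : Fin k, |t j| ≤ 1 := fun j => (ht1 j).trans (pow_le_one₀ hq0 hq1)
  obtain ⟨y, hy, hy2⟩ := hT t ht1'
  apply Set.mem_biUnion hy
  rw [Metric.mem_closedBall]
  calc dist f y ≤ dist f (∑ j, t j • basis η hη1 p j) + dist (∑ j, t j • basis η hη1 p j) y :=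
        dist_triangle _ _ _
    _ = ‖f - ∑ j, t j • basis η hη1 p j‖ + ‖(∑ j, t j • basis η hη1 p j) - y‖ := by
        rw [dist_eq_norm, dist_eq_norm]
    _ ≤ ((1-η)/(1+η))^k + 2*k/((4:ℕ)^k : ℕ) := add_le_add ht2 hy2

end Stmt13Aux

theorem stmt13 (η : ℝ) (hη : 0 < η) (hη1 : η < 1) (p : ℝ≥0∞) [Fact (1 ≤ p)]
    (hp : p ≠ ⊤) :
    ∃ C > (0:ℝ), ∃ C₆ > (0:ℝ), ∀ n : ℕ, 1 ≤ n →
      entropyNum (symmConvexHull (ratDictLp η p)) n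
        ≤ C * Real.exp (-C₆ * Real.sqrt n) := by
  set ρ : ℝ := max ((1-η)/(1+η)) (1/2) with hρ_def
  have hρ0 : (0:ℝ) < ρ := lt_of_lt_of_le one_half_pos (le_max_right _ _)
  have hρ1 : ρ < 1 := by
    apply max_lt ?_ (by norm_num)
    rw [div_lt_one (by linarith)]
    linarith
  have hlog : Real.log ρ < 0 := Real.log_neg hρ0 hρ1
  refine ⟨3/ρ, div_pos (by norm_num) hρ0, -Real.log ρ/2, by linarith, ?_⟩
  intro n hn
  set k := Nat.sqrt (n/3) with hk_def
  obtain ⟨T, hcard, hcover⟩ := Stmt13Aux.main_cover hη hη1 (p := p) k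
  -- cardinality bound
  have hcard2 : T.card ≤ 2^n := by
    refine hcard.trans ?_
    have h4 : (4:ℕ)^k = 2^(2*k) := by rw [pow_mul]; norm_num
    have h1 : 1 ≤ (2:ℕ)^(2*k) := Nat.one_le_two_pow
    have hstep : (4:ℕ)^k + 1 ≤ 2^(2*k+1) := by rw [h4, pow_succ]; omega
    calc ((4:ℕ)^k+1)^k ≤ (2^(2*k+1))^k := Nat.pow_le_pow_left hstep k
      _ = 2^((2*k+1)*k) := by rw [← pow_mul]
      _ ≤ 2^n := by
          apply Nat.pow_le_pow_right (by norm_num)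
          have hk2 : k*k ≤ n/3 := Nat.sqrt_le (n/3)
          have hmul : 3*(n/3) ≤ n := Nat.mul_div_le n 3 |>.trans_eq rfl
          rcases Nat.eq_zero_or_pos k with h0 | hpos
          · simp [h0]
          · have hkle : k ≤ k*k := Nat.le_mul_of_pos_left k hpos
            have hexp : (2*k+1)*k = 2*(k*k)+k := by ring
            rw [hexp]
            omega
  -- radius bound
  have hq0 : (0:ℝ) ≤ (1-η)/(1+η) := div_nonneg (by linarith) (by linarith)
  have hrad : ((1-η)/(1+η))^k + 2*(k:ℝ)/(((4:ℕ)^k : ℕ):ℝ) ≤ 3*ρ^k := by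
    have hA : ((1-η)/(1+η))^k ≤ ρ^k := pow_le_pow_left₀ hq0 (le_max_left _ _) k
    have hcast : (((4:ℕ)^k : ℕ):ℝ) = (4:ℝ)^k := by push_cast; ring
    have h2k : (k:ℝ) ≤ 2^k := by exact_mod_cast (Nat.lt_two_pow_self (n := k)).le
    have hB : (k:ℝ)/(4:ℝ)^k ≤ (1/2:ℝ)^k := by
      rw [div_le_iff₀ (by positivity)]
      calc (k:ℝ) ≤ 2^k := h2k
        _ = (1/2:ℝ)^k * 4^k := by rw [← mul_pow]; norm_num
    have hC : ((1/2:ℝ))^k ≤ ρ^k := pow_le_pow_left₀ (by norm_num) (le_max_right _ _) k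
    have : 2*(k:ℝ)/(((4:ℕ)^k : ℕ):ℝ) ≤ 2*ρ^k := by
      rw [hcast]
      calc 2*(k:ℝ)/(4:ℝ)^k = 2*((k:ℝ)/(4:ℝ)^k) := by ring
        _ ≤ 2*(1/2:ℝ)^k := by linarith
        _ ≤ 2*ρ^k := by linarith
    linarith
  -- entropy number bound
  have hent : entropyNum (symmConvexHull (ratDictLp η p)) n ≤ 3*ρ^k := by
    apply csInf_le ⟨0, fun ε hε => hε.1.le⟩
    refine ⟨by positivity, T, hcard2, hcover.trans ?_⟩
    exact Set.iUnion₂_mono fun y _ => Metric.closedBall_subset_closedBall hrad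
  refine hent.trans ?_
  -- k is at least √n / 2 - 1
  have hk_lb : Real.sqrt n / 2 - 1 ≤ (k:ℝ) := by
    have h1 : n < 3*((k+1)*(k+1)) := by
      have hs := Nat.lt_succ_sqrt (n/3)
      rw [← hk_def] at hs
      have hdiv : n ≤ 3*(n/3) + 2 := by omega
      have : (k+1)*(k+1) = Nat.succ k * Nat.succ k := rfl
      omega
    have h2 : (n:ℝ) < 3*((k:ℝ)+1)^2 := by
      have := (Nat.cast_lt (α := ℝ)).2 h1
      push_cast at this
      nlinarith [this]
    have h3 : Real.sqrt n ≤ 2*((k:ℝ)+1) := by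
      rw [show 2*((k:ℝ)+1) = Real.sqrt ((2*((k:ℝ)+1))^2) from (Real.sqrt_sq (by positivity)).symm]
      apply Real.sqrt_le_sqrt
      nlinarith [h2]
    linarith
  -- final exponential estimate
  have h5 : ρ^((k:ℝ)) ≤ ρ^(Real.sqrt n / 2 - 1 : ℝ) :=
    Real.rpow_le_rpow_of_exponent_ge hρ0 hρ1.le hk_lb
  have h6 : ρ^(Real.sqrt n / 2 - 1 : ℝ)
      = ρ⁻¹ * Real.exp (-(-Real.log ρ/2) * Real.sqrt n) := by
    rw [Real.rpow_def_of_pos hρ0,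
      show Real.log ρ * (Real.sqrt n / 2 - 1)
        = (-(-Real.log ρ/2) * Real.sqrt n) + (-Real.log ρ) from by ring,
      Real.exp_add, Real.exp_neg, Real.exp_log hρ0]
    ring
  calc 3*ρ^k = 3*ρ^((k:ℝ)) := by rw [Real.rpow_natCast]
    _ ≤ 3*ρ^(Real.sqrt n / 2 - 1 : ℝ) := by linarith
    _ = (3/ρ) * Real.exp (-(-Real.log ρ/2) * Real.sqrt n) := by rw [h6]; ring
end
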